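/- arXiv:2312.13078 — 6 statements merged into one kernel-verified Lean document; each statement's English description precedes it below -/
import Mathlib

section
/- Let X and Y be path-connected Hausdorff topological spaces with Y simply connected, and let f : X → Y be a local homeomorphism. Then f is a homeomorphism of X onto Y if and only if f is a proper map (preimages of compact sets are compact). -/
open Set Topology Filter unitInterval

namespace Stmt2Aux

variable {X Y : Type*} [TopologicalSpace X] [TopologicalSpace Y]

/-- Pairwise disjoint open neighborhoods of the points of a finite set in a T2 space. -/
lemma exists_disjoint_opens [T2Space X] {F : Set X} (hF : F.Finite) :
    ∃ W : X → Set X, (∀ x, IsOpen (W x)) ∧ (∀ x, x ∈ W x) ∧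
      F.Pairwise fun a b => Disjoint (W a) (W b) := by
  classical
  have sep : ∀ a b : X, ∃ u v : Set X, IsOpen u ∧ IsOpen v ∧ a ∈ u ∧ (a ≠ b → b ∈ v) ∧
      (a ≠ b → Disjoint u v) := by
    intro a b
    by_cases h : a = b
    · exact ⟨univ, univ, isOpen_univ, isOpen_univ, mem_univ _, fun h' => absurd h h',
        fun h' => absurd h h'⟩
    · obtain ⟨u, v, hu, hv, hau, hbv, huv⟩ := t2_separation h
      exact ⟨u, v, hu, hv, hau, fun _ => hbv, fun _ => huv⟩
  choose u v hu hv hau hbv huv using sep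
  refine ⟨fun x => ⋂ z ∈ F \ {x}, (u x z ∩ v z x), fun x => ?_, fun x => ?_, ?_⟩
  · exact ((hF.diff (t := {x})).isOpen_biInter fun z _ => (hu x z).inter (hv z x))
  · exact mem_biInter fun z hz => ⟨hau x z, hbv z x fun h => hz.2 (by simp [h])⟩
  · intro a ha b hb hab
    have h1 : (⋂ z ∈ F \ {a}, (u a z ∩ v z a)) ⊆ u a b :=
      (biInter_subset_of_mem (show b ∈ F \ {a} from ⟨hb, by simp; exact fun h => hab h.symm⟩)).trans
        inter_subset_left
    have h2 : (⋂ z ∈ F \ {b}, (u b z ∩ v z b)) ⊆ v a b :=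
      (biInter_subset_of_mem (show a ∈ F \ {b} from ⟨ha, by simp; exact hab⟩)).trans
        inter_subset_right
    exact ((huv a b hab).mono h1 h2)

variable {f : X → Y}

/-- The fibers of a proper local homeomorphism are finite. -/
lemma fiber_finite (hf : IsLocalHomeomorph f)
    (hprop : ∀ K : Set Y, IsCompact K → IsCompact (f ⁻¹' K)) (y : Y) :
    (f ⁻¹' {y}).Finite := by
  classical
  set F := f ⁻¹' {y} with hFdef
  have hc : IsCompact F := hprop _ isCompact_singleton
  have hcov : F ⊆ ⋃ i : F, ((hf i.1).choose).source := by
    intro z hz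
    exact mem_iUnion.2 ⟨⟨z, hz⟩, (hf z).choose_spec.1⟩
  obtain ⟨t, ht⟩ := hc.elim_finite_subcover (fun i : F => ((hf i.1).choose).source)
    (fun i => ((hf i.1).choose).open_source) hcov
  have hsub : F ⊆ Subtype.val '' (t : Set F) := by
    intro z hz
    obtain ⟨i, hit, hzi⟩ := mem_iUnion₂.1 (ht hz)
    refine ⟨i, hit, ?_⟩
    have hspec := (hf i.1).choose_spec
    have hinj := ((hf i.1).choose).injOn
    rw [← hspec.2] at hinj
    have : f i.1 = f z := by
      have h1 : f i.1 = y := i.2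
      have h2 : f z = y := hz
      rw [h1, h2]
    exact hinj hspec.1 hzi this
  exact (t.finite_toSet.image _).subset hsub

/-- `V` is evenly covered relative to the compact set `K`. -/
def EvenSet (f : X → Y) (K V : Set Y) : Prop :=
  IsOpen V ∧ ∃ (F : Set X) (U : X → Set X) (g : X → Y → X),
    (∀ x ∈ F, IsOpen (U x)) ∧ F.Pairwise (fun a b => Disjoint (U a) (U b)) ∧
    (f ⁻¹' K ∩ f ⁻¹' V ⊆ ⋃ x ∈ F, U x) ∧
    (∀ x ∈ F, ContinuousOn (g x) V) ∧
    (∀ x ∈ F, ∀ v ∈ V, f (g x v) = v ∧ g x v ∈ U x) ∧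
    (∀ x ∈ F, ∀ z ∈ U x, f z ∈ V → g x (f z) = z)

/-- Every point has a neighborhood evenly covered relative to any compact set. -/
lemma even_cover [T2Space X] [T2Space Y] (hf : IsLocalHomeomorph f)
    (hprop : ∀ K : Set Y, IsCompact K → IsCompact (f ⁻¹' K))
    {K : Set Y} (hK : IsCompact K) (y : Y) :
    ∃ V : Set Y, y ∈ V ∧ EvenSet f K V := by
  classical
  set F := f ⁻¹' {y} with hFdef
  have hFfin : F.Finite := fiber_finite hf hprop y
  obtain ⟨W, hWo, hWm, hWd⟩ := exists_disjoint_opens hFfin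
  -- local homeomorphisms at each fiber point
  have he : ∀ x : X, ∃ e : OpenPartialHomeomorph X Y, x ∈ e.source ∧ f = e := hf
  choose e hes hef using he
  set U0 : X → Set X := fun x => W x ∩ (e x).source with hU0def
  have hU0o : ∀ x, IsOpen (U0 x) := fun x => (hWo x).inter (e x).open_source
  have hU0m : ∀ x, x ∈ U0 x := fun x => ⟨hWm x, hes x⟩
  -- the base open set
  set V0 : Set Y := ⋂ x ∈ F, f '' U0 x with hV0def
  have hV0o : IsOpen V0 := hFfin.isOpen_biInter fun x _ => hf.isOpenMap _ (hU0o x)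
  set C : Set X := f ⁻¹' K \ ⋃ x ∈ F, U0 x with hCdef
  have hCc : IsCompact C := (hprop K hK).diff (isOpen_biUnion fun x _ => hU0o x)
  have hfCclosed : IsClosed (f '' C) := (hCc.image hf.continuous).isClosed
  have hynotin : y ∉ f '' C := by
    rintro ⟨z, hzC, hzy⟩
    exact hzC.2 (mem_biUnion (show z ∈ F from hzy) (hU0m z))
  set V : Set Y := V0 ∩ (f '' C)ᶜ with hVdef
  have hVo : IsOpen V := hV0o.inter hfCclosed.isOpen_compl
  have hyV : y ∈ V := by
    refine ⟨mem_biInter fun x hx => ⟨x, hU0m x, (hx : f x = y)⟩, hynotin⟩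
  -- key: the inverse of f on U0 x lands in U0 x for values in V
  have hsymm : ∀ x ∈ F, ∀ v ∈ V, (e x).symm v ∈ U0 x ∧ f ((e x).symm v) = v := by
    intro x hx v hv
    obtain ⟨u, hu, huv⟩ := (biInter_subset_of_mem hx : V0 ⊆ f '' U0 x) hv.1
    have husrc : u ∈ (e x).source := hu.2
    have : (e x).symm v = u := by
      rw [← huv, hef x]
      exact (e x).left_inv husrc
    rw [this]
    refine ⟨hu, ?_⟩
    rw [huv]
  refine ⟨V, hyV, hVo, F, fun x => U0 x ∩ f ⁻¹' V, fun x => (e x).symm, ?_, ?_, ?_, ?_, ?_, ?_⟩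
  · exact fun x _ => (hU0o x).inter (hVo.preimage hf.continuous)
  · exact fun a ha b hb hab =>
      ((hWd ha hb hab).mono (inter_subset_left.trans inter_subset_left)
        (inter_subset_left.trans inter_subset_left))
  · intro z hz
    have hznC : z ∉ C := fun hzC => (hz.2 : f z ∈ V).2 ⟨z, hzC, rfl⟩
    have : z ∈ ⋃ x ∈ F, U0 x := by
      by_contra h
      exact hznC ⟨hz.1, h⟩
    obtain ⟨x, hx, hzx⟩ := mem_iUnion₂.1 this
    exact mem_iUnion₂.2 ⟨x, hx, hzx, hz.2⟩
  · intro x hx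
    have hVsub : V ⊆ (e x).target := by
      intro v hv
      obtain ⟨u, hu, huv⟩ := (biInter_subset_of_mem hx : V0 ⊆ f '' U0 x) hv.1
      rw [← huv, hef x]
      exact (e x).map_source hu.2
    exact (e x).continuousOn_symm.mono hVsub
  · intro x hx v hv
    obtain ⟨hmem, hfv⟩ := hsymm x hx v hv
    exact ⟨hfv, hmem, by rw [mem_preimage, hfv]; exact hv⟩
  · intro x hx z hz hfz
    have hzsrc : z ∈ (e x).source := hz.1.2
    rw [hef x]
    exact (e x).left_inv hzsrc

/-- The key tube-lifting lemma: given a "homotopy" `H : A × I → Y` with `A` compact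
and a lift `σ` of its bottom edge, near each `a0 : A` there is a continuous local lift. -/
lemma tube_lift [T2Space X] [T2Space Y] (hf : IsLocalHomeomorph f)
    (hprop : ∀ K : Set Y, IsCompact K → IsCompact (f ⁻¹' K))
    {A : Type*} [TopologicalSpace A] [CompactSpace A]
    (H : A × I → Y) (hH : Continuous H) (sb : A → X) (hsc : Continuous sb)
    (hs0 : ∀ a, f (sb a) = H (a, 0)) (a0 : A) :
    ∃ W : Set A, IsOpen W ∧ a0 ∈ W ∧ ∃ L : A × I → X,
      ContinuousOn L (W ×ˢ (univ : Set I)) ∧ (∀ a ∈ W, L (a, 0) = sb a) ∧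
      (∀ a ∈ W, ∀ t, f (L (a, t)) = H (a, t)) := by
  classical
  set K : Set Y := range H with hKdef
  have hK : IsCompact K := isCompact_range hH
  set G : A × ℝ → Y := fun p => H (p.1, projIcc 0 1 zero_le_one p.2) with hGdef
  have hGc : Continuous G := hH.comp (continuous_fst.prodMk
    (continuous_projIcc.comp continuous_snd))
  have hGK : ∀ p, G p ∈ K := fun p => mem_range_self _
  -- locally evenly covered boxes along `{a0} × [0,1]`
  have hcov : ∀ r : ℝ, ∃ (W' : Set A) (ε : ℝ) (V : Set Y), IsOpen W' ∧ a0 ∈ W' ∧ 0 < ε ∧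
      EvenSet f K V ∧ ∀ a ∈ W', ∀ r' : ℝ, |r' - r| < ε → G (a, r') ∈ V := by
    intro r
    obtain ⟨V, hyV, hEvV⟩ := even_cover hf hprop hK (G (a0, r))
    have hopen : IsOpen (G ⁻¹' V) := hEvV.1.preimage hGc
    obtain ⟨u, v, hu, hv, hau, hrv, huv⟩ := isOpen_prod_iff.1 hopen a0 r hyV
    obtain ⟨ε, hεp, hballs⟩ := Metric.isOpen_iff.1 hv r hrv
    refine ⟨u, ε, V, hu, hau, hεp, hEvV, fun a ha r' hr' => ?_⟩
    exact huv (mk_mem_prod ha (hballs (by rwa [Metric.mem_ball, Real.dist_eq])))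
  choose W' ε V hW'o hW'm hεp hEv hball using hcov
  -- finite subcover of `[0,1]`
  have hIcc : (Icc (0:ℝ) 1) ⊆ ⋃ r : ℝ, Metric.ball r (ε r / 2) := fun r _ =>
    mem_iUnion.2 ⟨r, by simp [Metric.mem_ball, half_pos (hεp r)]⟩
  obtain ⟨s, hs⟩ := isCompact_Icc.elim_finite_subcover _
    (fun r : ℝ => Metric.isOpen_ball) hIcc
  have hsne : s.Nonempty := by
    obtain ⟨r, hr, -⟩ := mem_iUnion₂.1 (hs ⟨le_refl (0:ℝ), zero_le_one⟩)
    exact ⟨r, hr⟩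
  set W : Set A := ⋂ r ∈ s, W' r with hWdef
  have hWo : IsOpen W := isOpen_biInter_finset fun r _ => hW'o r
  have hWm : a0 ∈ W := mem_biInter fun r _ => hW'm r
  set δ : ℝ := s.inf' hsne (fun r => ε r / 2) with hδdef
  have hδpos : 0 < δ := (Finset.lt_inf'_iff _).2 fun r _ => half_pos (hεp r)
  obtain ⟨n, hn⟩ := exists_nat_one_div_lt hδpos
  set N : ℕ := n + 1 with hNdef
  have hNpos : (0:ℝ) < (N:ℝ) := by positivity
  have h1N : 1 / (N:ℝ) < δ := by
    have : ((N:ℕ):ℝ) = (n:ℝ) + 1 := by rw [hNdef]; push_cast; ring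
    rw [this]; exact hn
  -- each small segment maps into an evenly covered set
  have seg : ∀ k : ℕ, k < N → ∃ V', EvenSet f K V' ∧ ∀ a ∈ W, ∀ r : ℝ,
      r ∈ Icc ((k:ℝ)/(N:ℝ)) (((k:ℝ)+1)/(N:ℝ)) → G (a, r) ∈ V' := by
    intro k hk
    have hk1 : (0:ℝ) ≤ (k:ℝ)/(N:ℝ) := by positivity
    have hk2 : (k:ℝ)/(N:ℝ) ≤ 1 := by
      rw [div_le_one hNpos]; exact_mod_cast le_of_lt hk
    obtain ⟨r0, hr0s, hr0b⟩ := mem_iUnion₂.1 (hs ⟨hk1, hk2⟩)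
    refine ⟨V r0, hEv r0, fun a ha r hr => ?_⟩
    refine hball r0 a ((biInter_subset_of_mem hr0s) ha) r ?_
    have hd0 : |(k:ℝ)/(N:ℝ) - r0| < ε r0 / 2 := by
      rw [← Real.dist_eq]; exact Metric.mem_ball.1 hr0b
    have hd1 : |r - (k:ℝ)/(N:ℝ)| ≤ 1/(N:ℝ) := by
      have heq : ((k:ℝ)+1)/(N:ℝ) - (k:ℝ)/(N:ℝ) = 1/(N:ℝ) := by ring
      rw [abs_of_nonneg (by linarith [hr.1])]
      linarith [hr.2]
    have hδle : δ ≤ ε r0 / 2 := Finset.inf'_le _ hr0s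
    calc |r - r0| ≤ |r - (k:ℝ)/(N:ℝ)| + |(k:ℝ)/(N:ℝ) - r0| := abs_sub_le _ _ _
      _ < ε r0 := by linarith
  choose V' hEv' hseg using seg
  -- main induction: lifts on `W × (-∞, k/N]` (frozen beyond `k/N`)
  have key : ∀ k : ℕ, k ≤ N → ∃ L : A × ℝ → X,
      ContinuousOn L (W ×ˢ (univ : Set ℝ)) ∧ (∀ a ∈ W, L (a, 0) = sb a) ∧
      (∀ a ∈ W, ∀ r : ℝ, L (a, r) = L (a, min r ((k:ℝ)/(N:ℝ))) ∧
        f (L (a, r)) = G (a, min r ((k:ℝ)/(N:ℝ)))) := by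
    intro k
    induction k with
    | zero =>
      intro _
      refine ⟨fun p => sb p.1, (hsc.comp continuous_fst).continuousOn,
        fun a _ => rfl, fun a _ r => ⟨rfl, ?_⟩⟩
      have h0 : ((0:ℕ):ℝ)/(N:ℝ) = 0 := by simp
      rw [h0]
      have hproj : projIcc (0:ℝ) 1 zero_le_one (min r 0) = 0 := by
        rw [projIcc_of_le_left _ (min_le_right r 0)]; rfl
      show f (sb a) = H (a, projIcc (0:ℝ) 1 zero_le_one (min r 0))
      rw [hproj, hs0 a]
    | succ k ih =>
      intro hk1
      have hk : k < N := hk1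
      obtain ⟨L, hLc, hL0, hLf⟩ := ih (Nat.le_of_succ_le hk1)
      set tk : ℝ := (k:ℝ)/(N:ℝ) with htkdef
      set tk1 : ℝ := ((k:ℝ)+1)/(N:ℝ) with htk1def
      have htkk1 : tk < tk1 := by
        rw [htkdef, htk1def, div_lt_div_iff₀ hNpos hNpos]
        nlinarith [hNpos]
      have htk0 : (0:ℝ) ≤ tk := by rw [htkdef]; positivity
      obtain ⟨hV'o, F, U, g, hUo, hUd, hUcov, hgc, hgm, hgi⟩ := hEv' k hk
      set τ : A → X := fun a => L (a, tk) with hτdef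
      have hτc : ContinuousOn τ W := by
        refine hLc.comp ((continuous_id.prodMk continuous_const).continuousOn) ?_
        exact fun a ha => ⟨ha, trivial⟩
      have hfτ : ∀ a ∈ W, f (τ a) = G (a, tk) := by
        intro a ha
        have h2 := (hLf a ha tk).2
        rwa [min_self] at h2
      have hτV : ∀ a ∈ W, f (τ a) ∈ V' k hk := by
        intro a ha
        rw [hfτ a ha]
        exact hseg k hk a ha tk ⟨le_refl _, htkk1.le⟩
      have hsheet : ∀ a ∈ W, ∃ x ∈ F, τ a ∈ U x := by
        intro a ha
        have hmem : τ a ∈ f ⁻¹' K ∩ f ⁻¹' (V' k hk) := by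
          refine ⟨?_, hτV a ha⟩
          show f (τ a) ∈ K
          rw [hfτ a ha]; exact hGK _
        obtain ⟨x, hxF, hxU⟩ := mem_iUnion₂.1 (hUcov hmem)
        exact ⟨x, hxF, hxU⟩
      set ξ : A → X := fun a => if h : ∃ x ∈ F, τ a ∈ U x then h.choose else τ a with hξdef
      have hξ : ∀ a ∈ W, ξ a ∈ F ∧ τ a ∈ U (ξ a) := by
        intro a ha
        have h := hsheet a ha
        simp only [hξdef, dif_pos h]
        exact ⟨h.choose_spec.1, h.choose_spec.2⟩
      set c : ℝ → ℝ := fun r => max tk (min r tk1) with hcdef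
      have hc1 : ∀ r, c r ∈ Icc tk tk1 := fun r =>
        ⟨le_max_left _ _, max_le htkk1.le (min_le_right _ _)⟩
      have hGV : ∀ a ∈ W, ∀ r, G (a, c r) ∈ V' k hk := fun a ha r =>
        hseg k hk a ha _ (hc1 r)
      set piece2 : A × ℝ → X := fun p => g (ξ p.1) (G (p.1, c p.2)) with hp2def
      have hbd : ∀ a ∈ W, ∀ r : ℝ, r ≤ tk → piece2 (a, r) = τ a := by
        intro a ha r hr
        have hcr : c r = tk := by
          rw [hcdef]
          simp only []
          rw [min_eq_left (hr.trans htkk1.le), max_eq_left hr]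
        show g (ξ a) (G (a, c r)) = τ a
        rw [hcr, ← hfτ a ha]
        exact hgi _ (hξ a ha).1 _ (hξ a ha).2 (hτV a ha)
      have hc_cont : Continuous c := continuous_const.max (continuous_id.min continuous_const)
      have hinner : Continuous fun p : A × ℝ => G (p.1, c p.2) :=
        hGc.comp (continuous_fst.prodMk (hc_cont.comp continuous_snd))
      have hopenWu : IsOpen (W ×ˢ (univ : Set ℝ)) := hWo.prod isOpen_univ
      have hP2 : ∀ p : A × ℝ, p.1 ∈ W → ContinuousAt piece2 p := by
        rintro ⟨a1, r1⟩ ha1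
        have hx1F : ξ a1 ∈ F := (hξ a1 ha1).1
        have hW'' : IsOpen (W ∩ τ ⁻¹' (U (ξ a1))) :=
          hτc.isOpen_inter_preimage hWo (hUo _ hx1F)
        have ha1W'' : a1 ∈ W ∩ τ ⁻¹' (U (ξ a1)) := ⟨ha1, (hξ a1 ha1).2⟩
        have hfix : ContinuousAt (fun p : A × ℝ => g (ξ a1) (G (p.1, c p.2))) (a1, r1) := by
          have hmemV : G (a1, c r1) ∈ V' k hk := hGV a1 ha1 r1
          exact ContinuousAt.comp
            (show ContinuousAt (g (ξ a1)) ((fun p : A × ℝ => G (p.1, c p.2)) (a1, r1)) from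
              (hgc _ hx1F).continuousAt (hV'o.mem_nhds hmemV)) hinner.continuousAt
        refine hfix.congr ?_
        have hnb : (W ∩ τ ⁻¹' (U (ξ a1))) ×ˢ (univ : Set ℝ) ∈ 𝓝 (a1, r1) :=
          (hW''.prod isOpen_univ).mem_nhds ⟨ha1W'', trivial⟩
        filter_upwards [hnb] with p hp
        have hξeq : ξ p.1 = ξ a1 := by
          by_contra hne
          exact (Set.disjoint_left.1 (hUd (hξ p.1 hp.1.1).1 hx1F hne)
            (hξ p.1 hp.1.1).2) hp.1.2
        show g (ξ a1) (G (p.1, c p.2)) = piece2 p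
        rw [hp2def]
        simp only [hξeq]
      set L' : A × ℝ → X := fun p => if p.2 ≤ tk then L p else piece2 p with hL'def
      have hL'c : ContinuousOn L' (W ×ˢ (univ : Set ℝ)) := by
        refine continuousOn_of_forall_continuousAt ?_
        rintro ⟨a1, r1⟩ ⟨ha1, -⟩
        rcases lt_trichotomy r1 tk with hlt | heq | hgt
        · have hLa : ContinuousAt L (a1, r1) :=
            hLc.continuousAt (hopenWu.mem_nhds ⟨ha1, trivial⟩)
          refine hLa.congr ?_
          have hnb : {p : A × ℝ | p.2 < tk} ∈ 𝓝 (a1, r1) :=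
            (isOpen_lt continuous_snd continuous_const).mem_nhds hlt
          filter_upwards [hnb] with p hp
          show L p = L' p
          rw [hL'def]
          simp only [if_pos (le_of_lt hp)]
        · have hr1le : r1 ≤ tk := le_of_eq heq
          have hval : L' (a1, r1) = L (a1, r1) := by
            rw [hL'def]; simp only [if_pos hr1le]
          have h1 : Tendsto L (𝓝 (a1, r1)) (𝓝 (L (a1, r1))) :=
            hLc.continuousAt (hopenWu.mem_nhds ⟨ha1, trivial⟩)
          have hpb : piece2 (a1, r1) = L (a1, r1) := by
            rw [hbd a1 ha1 r1 hr1le, hτdef]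
            show L (a1, tk) = L (a1, r1)
            rw [heq]
          have h2 : Tendsto piece2 (𝓝 (a1, r1)) (𝓝 (L (a1, r1))) := by
            have := hP2 (a1, r1) ha1
            rw [ContinuousAt] at this
            rwa [hpb] at this
          show ContinuousAt L' (a1, r1)
          rw [ContinuousAt, hval, tendsto_nhds]
          intro o hoo hzo
          have e1 := h1 ((hoo.mem_nhds hzo))
          have e2 := h2 ((hoo.mem_nhds hzo))
          filter_upwards [e1, e2] with p hp1 hp2
          by_cases hple : p.2 ≤ tk
          · show L' p ∈ o
            rw [hL'def]; simpa only [if_pos hple, mem_preimage] using hp1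
          · show L' p ∈ o
            rw [hL'def]; simpa only [if_neg hple, mem_preimage] using hp2
        · refine (hP2 (a1, r1) ha1).congr ?_
          have hnb : {p : A × ℝ | tk < p.2} ∈ 𝓝 (a1, r1) :=
            (isOpen_lt continuous_const continuous_snd).mem_nhds hgt
          filter_upwards [hnb] with p hp
          show piece2 p = L' p
          rw [hL'def]
          simp only [if_neg (not_le.2 hp)]
      have hcast : (((k:ℕ)+1 : ℕ):ℝ)/(N:ℝ) = tk1 := by
        rw [htk1def]; push_cast; ring
      refine ⟨L', hL'c, ?_, ?_⟩
      · intro a ha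
        have : L' (a, 0) = L (a, 0) := by
          rw [hL'def]; simp only [if_pos htk0]
        rw [this]; exact hL0 a ha
      · intro a ha r
        rw [hcast]
        by_cases hr : r ≤ tk
        · have hmin : min r tk1 = r := min_eq_left (hr.trans htkk1.le)
          rw [hmin]
          refine ⟨rfl, ?_⟩
          have h2 := (hLf a ha r).2
          rw [min_eq_left hr] at h2
          have : L' (a, r) = L (a, r) := by rw [hL'def]; simp only [if_pos hr]
          rw [this]; exact h2
        · push_neg at hr
          have hmin : tk < min r tk1 := lt_min hr htkk1
          have hb1 : L' (a, r) = piece2 (a, r) := by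
            rw [hL'def]; simp only [if_neg (not_le.2 hr)]
          have hb2 : L' (a, min r tk1) = piece2 (a, min r tk1) := by
            rw [hL'def]; simp only [if_neg (not_le.2 hmin)]
          have hcrr : c (min r tk1) = c r := by
            rw [hcdef]
            simp only []
            rw [min_assoc, min_self]
          have hcr : c r = min r tk1 := max_eq_right (le_min hr.le htkk1.le)
          constructor
          · rw [hb1, hb2, hp2def]
            simp only [hcrr]
          · rw [hb1]
            have hfg := (hgm _ (hξ a ha).1 _ (hGV a ha r)).1
            show f (g (ξ a) (G (a, c r))) = G (a, min r tk1)
            rw [hfg, hcr]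
  obtain ⟨L, hLc, hL0, hLf⟩ := key N le_rfl
  have hNN : ((N:ℕ):ℝ)/(N:ℝ) = 1 := div_self (ne_of_gt hNpos)
  refine ⟨W, hWo, hWm, fun p : A × I => L (p.1, (p.2:ℝ)), ?_, ?_, ?_⟩
  · refine hLc.comp ((continuous_fst.prodMk
      (continuous_subtype_val.comp continuous_snd)).continuousOn) ?_
    exact fun p hp => ⟨hp.1, trivial⟩
  · intro a ha
    have := hL0 a ha
    simpa using this
  · intro a ha t
    have h2 := (hLf a ha (t:ℝ)).2
    rw [hNN, min_eq_left t.2.2] at h2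
    rw [h2]
    show G (a, (t:ℝ)) = H (a, t)
    simp only [hGdef]
    rw [projIcc_val]

/-- Path lifting. -/
lemma path_lift [T2Space X] [T2Space Y] (hf : IsLocalHomeomorph f)
    (hprop : ∀ K : Set Y, IsCompact K → IsCompact (f ⁻¹' K))
    (γ : I → Y) (hγ : Continuous γ) (x0 : X) (h0 : f x0 = γ 0) :
    ∃ p : I → X, Continuous p ∧ p 0 = x0 ∧ ∀ t, f (p t) = γ t := by
  obtain ⟨W, hWo, hWm, L, hLc, hL0, hLf⟩ := tube_lift hf hprop
    (fun q : Unit × I => γ q.2) (hγ.comp continuous_snd) (fun _ => x0)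
    continuous_const (fun _ => h0) ()
  refine ⟨fun t => L ((), t), ?_, hL0 _ hWm, fun t => hLf _ hWm t⟩
  refine continuous_iff_continuousAt.2 fun t => ?_
  have hnb : W ×ˢ (univ : Set I) ∈ 𝓝 (((), t) : Unit × I) :=
    (hWo.prod isOpen_univ).mem_nhds ⟨hWm, trivial⟩
  exact (hLc.continuousAt hnb).comp
    ((continuous_const.prodMk continuous_id).continuousAt)

/-- Uniqueness of path lifts. -/
lemma lift_unique [T2Space X] (hf : IsLocalHomeomorph f) {p q : I → X}
    (hp : Continuous p) (hq : Continuous q) (h : ∀ t, f (p t) = f (q t))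
    (h0 : p 0 = q 0) : p = q :=
  (T2Space.isSeparatedMap f).eq_of_comp_eq hf.isLocallyInjective hp hq
    (funext h) 0 h0

end Stmt2Aux

/-- A local homeomorphism between path-connected Hausdorff spaces, with simply connected
codomain, is a global homeomorphism onto the codomain if and only if it is proper. -/
theorem stmt2 {X Y : Type*} [TopologicalSpace X] [TopologicalSpace Y]
    [PathConnectedSpace X] [PathConnectedSpace Y] [T2Space X] [T2Space Y]
    [SimplyConnectedSpace Y] (f : X → Y) (hf : IsLocalHomeomorph f) :
    (∀ K : Set Y, IsCompact K → IsCompact (f ⁻¹' K)) ↔ ∃ e : X ≃ₜ Y, ⇑e = f := by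
  constructor
  · intro hprop
    -- surjectivity
    have hsurj : Function.Surjective f := by
      intro y
      obtain ⟨x0⟩ := PathConnectedSpace.nonempty (X := X)
      obtain ⟨γ⟩ := PathConnectedSpace.joined (f x0) y
      obtain ⟨p, _, _, hpf⟩ := Stmt2Aux.path_lift hf hprop γ γ.continuous x0 γ.source.symm
      exact ⟨p 1, by rw [hpf 1, γ.target]⟩
    -- injectivity
    have hinj : Function.Injective f := by
      intro x1 x2 hx
      obtain ⟨p⟩ := PathConnectedSpace.joined x1 x2
      obtain ⟨Ht⟩ := SimplyConnectedSpace.paths_homotopic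
        ((p.map hf.continuous).cast rfl hx) (Path.refl (f x1))
      set H : I × I → Y := fun q => Ht q with hHdef
      have hHc : Continuous H := Ht.continuous
      have hH0 : ∀ s : I, H (s, 0) = f x1 := fun s => Ht.source s
      have hH1 : ∀ s : I, H (s, 1) = f x1 := fun s => Ht.target s
      have hHz : ∀ t : I, H (0, t) = f (p t) := fun t => by
        show Ht (0, t) = f (p t)
        simpa using Ht.apply_zero t
      have hHo : ∀ t : I, H (1, t) = f x1 := fun t => by
        show Ht (1, t) = f x1
        simpa using Ht.apply_one t
      -- lift each horizontal path
      have hl : ∀ s : I, ∃ q : I → X, Continuous q ∧ q 0 = x1 ∧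
          ∀ t, f (q t) = H (s, t) :=
        fun s => Stmt2Aux.path_lift hf hprop (fun t => H (s, t))
          (hHc.comp (continuous_const.prodMk continuous_id)) x1 (hH0 s).symm
      choose E hEc hE0 hEf using hl
      -- the endpoint function is locally constant
      have hfib : (f ⁻¹' {f x1}).Finite := Stmt2Aux.fiber_finite hf hprop (f x1)
      have hloc : ∀ s0 : I, ∀ᶠ s in 𝓝 s0, E s 1 = E s0 1 := by
        intro s0
        obtain ⟨W, hWo, hWm, L, hLc, hL0, hLf⟩ := Stmt2Aux.tube_lift hf hprop H hHc
          (fun _ => x1) continuous_const (fun s => (hH0 s).symm) s0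
        have hEL : ∀ s ∈ W, ∀ t, E s t = L (s, t) := by
          intro s hs
          have hcont : Continuous fun t => L (s, t) := by
            refine continuous_iff_continuousAt.2 fun t => ?_
            have hnb : W ×ˢ (univ : Set I) ∈ 𝓝 ((s, t) : I × I) :=
              (hWo.prod isOpen_univ).mem_nhds ⟨hs, trivial⟩
            exact (hLc.continuousAt hnb).comp
              ((continuous_const.prodMk continuous_id).continuousAt)
          have := Stmt2Aux.lift_unique hf (hEc s) hcont
            (fun t => by rw [hEf s t, hLf s hs t]) (by rw [hE0 s, hL0 s hs])
          exact fun t => congrFun this t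
        set lam : I → X := fun s => L (s, 1) with hlamdef
        have hlamc : ContinuousAt lam s0 := by
          have hnb : W ×ˢ (univ : Set I) ∈ 𝓝 ((s0, 1) : I × I) :=
            (hWo.prod isOpen_univ).mem_nhds ⟨hWm, trivial⟩
          exact ContinuousAt.comp
            (show ContinuousAt L ((fun s : I => ((s, 1) : I × I)) s0) from
              hLc.continuousAt hnb)
            ((continuous_id.prodMk continuous_const).continuousAt)
        have hlamfib : ∀ s ∈ W, lam s ∈ f ⁻¹' {f x1} := by
          intro s hs
          simp only [hlamdef, mem_preimage, mem_singleton_iff]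
          rw [hLf s hs 1]
          exact hH1 s
        set z0 : X := lam s0 with hz0def
        have hOo : IsOpen ((f ⁻¹' {f x1} \ {z0})ᶜ) :=
          ((hfib.subset diff_subset).isClosed).isOpen_compl
        have hz0O : z0 ∈ (f ⁻¹' {f x1} \ {z0})ᶜ := fun h => h.2 rfl
        have hev1 : ∀ᶠ s in 𝓝 s0, lam s ∈ (f ⁻¹' {f x1} \ {z0})ᶜ :=
          hlamc.eventually_mem (hOo.mem_nhds hz0O)
        have hev2 : ∀ᶠ s in 𝓝 s0, s ∈ W := hWo.mem_nhds hWm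
        filter_upwards [hev1, hev2] with s h1 h2
        have : lam s = z0 := by
          by_contra hne
          exact h1 ⟨hlamfib s h2, hne⟩
        rw [hEL s h2 1, hEL s0 hWm 1]
        exact this
      -- a locally constant function on the connected interval is constant
      have hconst : E 0 1 = E 1 1 := by
        set S : Set I := {s | E s 1 = E 1 1} with hSdef
        have hSo : IsOpen S := by
          refine isOpen_iff_mem_nhds.2 fun s hs => ?_
          filter_upwards [hloc s] with s' hs'
          rw [hSdef] at hs ⊢
          exact hs'.trans hs
        have hSc : IsOpen Sᶜ := by
          refine isOpen_iff_mem_nhds.2 fun s hs => ?_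
          filter_upwards [hloc s] with s' hs'
          intro hs'S
          exact hs (by rw [hSdef, mem_setOf_eq, ← hs']; exact hs'S)
        have hSclopen : IsClopen S := ⟨⟨hSc⟩, hSo⟩
        have : S = univ := hSclopen.eq_univ ⟨1, rfl⟩
        have h0S : (0:I) ∈ S := this ▸ mem_univ _
        exact h0S
      -- identify the two endpoints
      have hE0end : E 0 1 = x2 := by
        have : E 0 = fun t => p t := by
          refine Stmt2Aux.lift_unique hf (hEc 0) p.continuous ?_ ?_
          · intro t; rw [hEf 0 t, hHz t]
          · rw [hE0 0, p.source]
        rw [this]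
        exact p.target
      have hE1end : E 1 1 = x1 := by
        have : E 1 = fun _ => x1 := by
          refine Stmt2Aux.lift_unique hf (hEc 1) continuous_const ?_ ?_
          · intro t; rw [hEf 1 t, hHo t]
          · rw [hE0 1]
        rw [this]
      rw [← hE0end, hconst, hE1end]
    exact ⟨hf.toHomeomorphOfBijective ⟨hinj, hsurj⟩, rfl⟩
  · rintro ⟨e, rfl⟩ K hK
    exact e.isCompact_preimage.mpr hK
end

section
/- Let Φ : U → ℝⁿ be a C¹ diffeomorphism on an open set U ⊂ ℝⁿ and λ ∈ (0,1). Then for every x₀ ∈ U there is r₀ > 0 with B(x₀,r₀) compactly contained in U such that for every r ∈ (0, r₀] there exists a C¹ diffeomorphism H₁ : U → ℝⁿ equal to the affine map x ↦ Φ(x₀) + DΦ(x₀)(x − x₀) on the closed ball B̄(x₀, λr) and equal to Φ on U \ B(x₀, r). -/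
open Metric Set Filter Topology

set_option maxHeartbeats 1600000 in
/-- General version of the local affine replacement theorem in a finite-dimensional
real normed space. -/
theorem aux_main {E : Type*} [NormedAddCommGroup E] [NormedSpace ℝ E]
    [FiniteDimensional ℝ E] (U : Set E) (hU : IsOpen U)
    (Φ : E → E) (hC1 : ContDiffOn ℝ 1 Φ U)
    (hemb : Topology.IsEmbedding (U.restrict Φ))
    (hder : ∀ x ∈ U, IsUnit (fderiv ℝ Φ x))
    (lam : ℝ) (hlam : lam ∈ Set.Ioo (0 : ℝ) 1) :
    ∀ x₀ ∈ U, ∃ r₀ > (0 : ℝ), Metric.closedBall x₀ r₀ ⊆ U ∧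
      ∀ r ∈ Set.Ioc (0 : ℝ) r₀,
        ∃ H₁ : E → E,
          ContDiffOn ℝ 1 H₁ U ∧ Topology.IsEmbedding (U.restrict H₁) ∧
          (∀ x ∈ U, IsUnit (fderiv ℝ H₁ x)) ∧
          (∀ x ∈ Metric.closedBall x₀ (lam * r),
            H₁ x = Φ x₀ + fderiv ℝ Φ x₀ (x - x₀)) ∧
          (∀ x ∈ U \ Metric.ball x₀ r, H₁ x = Φ x) := by
  obtain ⟨hlam0, hlam1⟩ := hlam
  intro x₀ hx₀
  obtain ⟨ρU, hρU, hballU⟩ := Metric.isOpen_iff.1 hU x₀ hx₀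
  rcases subsingleton_or_nontrivial E with hsub | hnt
  · refine ⟨ρU / 2, by positivity, ?_, fun r hr => ⟨Φ, hC1, hemb, hder,
      fun x _ => Subsingleton.elim _ _, fun x _ => rfl⟩⟩
    exact (Metric.closedBall_subset_ball (by linarith)).trans hballU
  -- Notation for the derivative at the center and its inverse.
  set ℓ := fderiv ℝ Φ x₀ with hℓdef
  obtain ⟨u, hu⟩ := hder x₀ hx₀
  set c := ‖((u⁻¹ : (E →L[ℝ] E)ˣ) : E →L[ℝ] E)‖ with hcdef
  have hinv_mul : ∀ v : E, ((u⁻¹ : (E →L[ℝ] E)ˣ) : E →L[ℝ] E) ((u : E →L[ℝ] E) v) = v := by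
    intro v
    have h : ((u⁻¹ : (E →L[ℝ] E)ˣ) : E →L[ℝ] E) * (u : E →L[ℝ] E) = 1 := u.inv_mul
    calc ((u⁻¹ : (E →L[ℝ] E)ˣ) : E →L[ℝ] E) ((u : E →L[ℝ] E) v)
        = (((u⁻¹ : (E →L[ℝ] E)ˣ) : E →L[ℝ] E) * (u : E →L[ℝ] E)) v := rfl
      _ = (1 : E →L[ℝ] E) v := by rw [h]
      _ = v := rfl
  have hcpos : 0 < c := by
    obtain ⟨v, hv⟩ := exists_ne (0 : E)
    rcases (norm_nonneg ((u⁻¹ : (E →L[ℝ] E)ˣ) : E →L[ℝ] E)).lt_or_eq with h | h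
    · exact h
    · exfalso
      have h0 : ((u⁻¹ : (E →L[ℝ] E)ˣ) : E →L[ℝ] E) = 0 := by
        rwa [eq_comm, norm_eq_zero] at h
      have := hinv_mul v
      rw [h0] at this
      simp at this
      exact hv this.symm
  have hlow : ∀ v : E, ‖v‖ ≤ c * ‖ℓ v‖ := by
    intro v
    conv_lhs => rw [← hinv_mul v]
    calc ‖((u⁻¹ : (E →L[ℝ] E)ˣ) : E →L[ℝ] E) ((u : E →L[ℝ] E) v)‖
        ≤ c * ‖(u : E →L[ℝ] E) v‖ := ContinuousLinearMap.le_opNorm _ _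
      _ = c * ‖ℓ v‖ := by rw [hu]
  -- The bump function and its Lipschitz constant.
  set l₁ : ℝ := (2 * lam + 1) / 3 with hl₁def
  set l₂ : ℝ := (lam + 2) / 3 with hl₂def
  have hl₁pos : 0 < l₁ := by rw [hl₁def]; linarith
  have hlaml₁ : lam < l₁ := by rw [hl₁def]; linarith
  have hl₁l₂ : l₁ < l₂ := by rw [hl₁def, hl₂def]; linarith
  have hl₂1 : l₂ < 1 := by rw [hl₂def]; linarith
  let B : ContDiffBump (0 : E) := ⟨l₁, l₂, hl₁pos, hl₁l₂⟩
  obtain ⟨L, hL⟩ := ContDiff.lipschitzWith_of_hasCompactSupport B.hasCompactSupport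
    (B.contDiff (n := 1)) (by simp)
  -- The small parameters.
  have hLpos : (0 : ℝ) < (L : ℝ) + 2 := by positivity
  set ε := c⁻¹ / (2 * ((L : ℝ) + 2)) with hεdef
  have hεpos : 0 < ε := div_pos (inv_pos.2 hcpos) (by positivity)
  set κ := ε * (1 + (L : ℝ)) with hκdef
  have hκpos : 0 ≤ κ := by rw [hκdef]; positivity
  have hεκ : ε + κ = c⁻¹ / 2 := by
    rw [hκdef, hεdef]
    field_simp
    ring
  -- Choice of ρ using continuity of the derivative.
  have hcontAt : ContinuousAt (fderiv ℝ Φ) x₀ :=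
    (hC1.continuousOn_fderiv_of_isOpen hU le_rfl).continuousAt (hU.mem_nhds hx₀)
  obtain ⟨ρc, hρcpos, hρc⟩ := Metric.continuousAt_iff.1 hcontAt ε hεpos
  set ρ := min (ρU / 2) (ρc / 2) with hρdef
  have hρpos : 0 < ρ := lt_min (by linarith) (by linarith)
  have hρU' : Metric.closedBall x₀ ρ ⊆ U := by
    refine (Metric.closedBall_subset_ball ?_).trans hballU
    exact lt_of_le_of_lt (min_le_left _ _) (by linarith)
  have hρε : ∀ x ∈ Metric.closedBall x₀ ρ, ‖fderiv ℝ Φ x - ℓ‖ ≤ ε := by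
    intro x hx
    have h1 : dist x x₀ < ρc :=
      lt_of_le_of_lt (Metric.mem_closedBall.1 hx)
        (lt_of_le_of_lt (min_le_right _ _) (by linarith))
    have h2 := hρc h1
    rw [dist_eq_norm] at h2
    exact h2.le
  have hcne : c ≠ 0 := hcpos.ne'
  clear_value c ε κ ρ l₁ l₂
  -- Differentiability facts.
  have hΦdiff : ∀ x ∈ U, DifferentiableAt ℝ Φ x := fun x hx =>
    (hC1.differentiableOn (by simp) x hx).differentiableAt (hU.mem_nhds hx)
  -- The affine approximation and the error.
  set A : E → E := fun x => Φ x₀ + ℓ (x - x₀) with hAdef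
  have hAderiv : ∀ x : E, HasFDerivAt A ℓ x := by
    intro x
    have h1 : HasFDerivAt (fun y : E => ℓ (y - x₀)) ℓ x := by
      have h0 := ℓ.hasFDerivAt.comp x ((hasFDerivAt_id x).sub_const x₀)
      simpa [Function.comp_def] using h0
    simpa [hAdef] using h1.const_add (Φ x₀)
  have hAcd : ContDiff ℝ 1 A := by
    apply ContDiff.add contDiff_const
    exact ℓ.contDiff.comp (contDiff_id.sub contDiff_const)
  set Efun : E → E := fun x => Φ x - A x with hEdef
  have hEderiv : ∀ x ∈ U, HasFDerivAt Efun (fderiv ℝ Φ x - ℓ) x := fun x hx =>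
    ((hΦdiff x hx).hasFDerivAt).sub (hAderiv x)
  have hElip : ∀ x ∈ Metric.closedBall x₀ ρ, ∀ y ∈ Metric.closedBall x₀ ρ,
      ‖Efun x - Efun y‖ ≤ ε * ‖x - y‖ := by
    intro x hx y hy
    exact Convex.norm_image_sub_le_of_norm_fderiv_le
      (fun z hz => (hEderiv z (hρU' hz)).differentiableAt)
      (fun z hz => by rw [(hEderiv z (hρU' hz)).fderiv]; exact hρε z hz)
      (convex_closedBall _ _) hy hx
  have hE0 : Efun x₀ = 0 := by simp [hEdef, hAdef]
  have hEbound : ∀ x ∈ Metric.closedBall x₀ ρ, ‖Efun x‖ ≤ ε * ‖x - x₀‖ := by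
    intro x hx
    have h := hElip x hx x₀ (Metric.mem_closedBall_self hρpos.le)
    rwa [hE0, sub_zero] at h
  have hEcd : ∀ x ∈ U, ContDiffAt ℝ 1 Efun x := fun x hx =>
    (hC1.contDiffAt (hU.mem_nhds hx)).sub hAcd.contDiffAt
  clear_value A Efun
  -- The separation constant δ.
  have hδex : ∃ δ > 0, ∀ a ∈ Metric.closedBall x₀ (ρ / 2), ∀ b ∈ U \ Metric.ball x₀ ρ,
      δ ≤ dist (Φ a) (Φ b) := by
    rcases (U \ Metric.ball x₀ ρ).eq_empty_or_nonempty with hDe | hDne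
    · exact ⟨1, one_pos, fun a _ b hb => absurd (hDe ▸ hb) (Set.notMem_empty b)⟩
    have hsub2 : Metric.closedBall x₀ (ρ / 2) ⊆ U :=
      (Metric.closedBall_subset_closedBall (by linarith)).trans hρU'
    set D := Φ '' (U \ Metric.ball x₀ ρ) with hDdef
    have hDne' : D.Nonempty := hDne.image _
    have hpt : ∀ a ∈ Metric.closedBall x₀ (ρ / 2), 0 < Metric.infDist (Φ a) D := by
      intro a ha
      have haU : a ∈ U := hsub2 ha
      rcases (Metric.infDist_nonneg (s := D) (x := Φ a)).lt_or_eq with h | h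
      · exact h
      exfalso
      have hclos : Φ a ∈ closure D := (Metric.mem_closure_iff_infDist_zero hDne').2 h.symm
      have hmap := hemb.isInducing.map_nhds_eq (⟨a, haU⟩ : U)
      have haball : a ∈ Metric.ball x₀ ρ :=
        Metric.mem_ball.2 (lt_of_le_of_lt (Metric.mem_closedBall.1 ha) (by linarith))
      have hsnb : (Subtype.val ⁻¹' Metric.ball x₀ ρ : Set U) ∈ 𝓝 (⟨a, haU⟩ : U) :=
        continuous_subtype_val.continuousAt.preimage_mem_nhds
          (Metric.isOpen_ball.mem_nhds haball)
      have himg : U.restrict Φ '' (Subtype.val ⁻¹' Metric.ball x₀ ρ) ∈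
          𝓝[Set.range (U.restrict Φ)] (Φ a) := by
        rw [show Φ a = U.restrict Φ ⟨a, haU⟩ from rfl, ← hmap]
        exact Filter.image_mem_map hsnb
      rw [mem_nhdsWithin] at himg
      obtain ⟨W, hWopen, hpW, hWsub⟩ := himg
      obtain ⟨q, hqW, hqD⟩ := _root_.mem_closure_iff.1 hclos W hWopen hpW
      obtain ⟨b, hb, rfl⟩ := hqD
      have hqrange : Φ b ∈ Set.range (U.restrict Φ) := ⟨⟨b, hb.1⟩, rfl⟩
      obtain ⟨⟨v, hvU⟩, hv2, hveq⟩ := hWsub ⟨hqW, hqrange⟩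
      have hinj := hemb.injective (a₁ := ⟨v, hvU⟩) (a₂ := ⟨b, hb.1⟩) hveq
      have hvb : v = b := congrArg Subtype.val hinj
      exact hb.2 (hvb ▸ hv2)
    have hCcomp : IsCompact (Φ '' Metric.closedBall x₀ (ρ / 2)) :=
      (isCompact_closedBall x₀ _).image_of_continuousOn (hC1.continuousOn.mono hsub2)
    have hCne : (Φ '' Metric.closedBall x₀ (ρ / 2)).Nonempty :=
      ⟨Φ x₀, x₀, Metric.mem_closedBall_self (by linarith), rfl⟩
    obtain ⟨p₀, hp₀, hmin⟩ := hCcomp.exists_isMinOn hCne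
      ((Metric.continuous_infDist_pt D).continuousOn)
    obtain ⟨a₀, ha₀, rfl⟩ := hp₀
    refine ⟨Metric.infDist (Φ a₀) D, hpt a₀ ha₀, fun a ha b hb => ?_⟩
    calc Metric.infDist (Φ a₀) D ≤ Metric.infDist (Φ a) D :=
          isMinOn_iff.1 hmin _ ⟨a, ha, rfl⟩
      _ ≤ dist (Φ a) (Φ b) := Metric.infDist_le_dist_of_mem ⟨b, hb, rfl⟩
  obtain ⟨δ, hδpos, hδ⟩ := hδex
  -- The radius r₀.
  refine ⟨min (ρ / 2) (δ / (2 * ε)), lt_min (by linarith) (div_pos hδpos (by linarith)), ?_, ?_⟩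
  · exact (Metric.closedBall_subset_closedBall
      (le_trans (min_le_left _ _) (by linarith))).trans hρU'
  intro r hr
  obtain ⟨hrpos, hrr₀⟩ := hr
  have hrρ : r ≤ ρ / 2 := hrr₀.trans (min_le_left _ _)
  have hrδ : ε * r ≤ δ / 2 := by
    have h1 : r ≤ δ / (2 * ε) := hrr₀.trans (min_le_right _ _)
    calc ε * r ≤ ε * (δ / (2 * ε)) := mul_le_mul_of_nonneg_left h1 hεpos.le
      _ = δ / 2 := by field_simp
  -- The cutoff function χ.
  set χ : E → ℝ := fun x => B (r⁻¹ • (x - x₀)) with hχdef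
  have hmemval : ∀ x : E, ‖r⁻¹ • (x - x₀)‖ = r⁻¹ * dist x x₀ := by
    intro x
    rw [norm_smul, dist_eq_norm, Real.norm_eq_abs, abs_of_pos (inv_pos.2 hrpos)]
  have hχ1 : ∀ x : E, dist x x₀ ≤ l₁ * r → χ x = 1 := by
    intro x hx
    apply B.one_of_mem_closedBall
    rw [Metric.mem_closedBall, dist_zero_right, hmemval]
    calc r⁻¹ * dist x x₀ ≤ r⁻¹ * (l₁ * r) :=
          mul_le_mul_of_nonneg_left hx (inv_pos.2 hrpos).le
      _ = l₁ := by field_simp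
  have hχ0 : ∀ x : E, l₂ * r ≤ dist x x₀ → χ x = 0 := by
    intro x hx
    apply B.zero_of_le_dist
    rw [dist_zero_right, hmemval]
    calc (l₂ : ℝ) = r⁻¹ * (l₂ * r) := by field_simp
      _ ≤ r⁻¹ * dist x x₀ := mul_le_mul_of_nonneg_left hx (inv_pos.2 hrpos).le
  have hχcd : ContDiff ℝ 1 χ :=
    (B.contDiff (n := 1)).comp ((contDiff_id.sub contDiff_const).const_smul r⁻¹)
  have hinner : LipschitzWith ‖(r : ℝ)⁻¹‖₊ (fun x : E => r⁻¹ • (x - x₀)) := by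
    apply LipschitzWith.of_dist_le_mul
    intro x y
    have h1 : r⁻¹ • (x - x₀) - r⁻¹ • (y - x₀) = r⁻¹ • (x - y) := by
      rw [← smul_sub]
      congr 1
      abel
    rw [dist_eq_norm, h1, norm_smul, dist_eq_norm]
    rfl
  have hχlip : LipschitzWith (L * ‖(r : ℝ)⁻¹‖₊) χ := hL.comp hinner
  have hDχ : ∀ x : E, ‖fderiv ℝ χ x‖ ≤ (L : ℝ) * r⁻¹ := by
    intro x
    have h := norm_fderiv_le_of_lipschitz ℝ hχlip (x₀ := x)
    have h2 : ((L * ‖(r : ℝ)⁻¹‖₊ : NNReal) : ℝ) = (L : ℝ) * r⁻¹ := by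
      push_cast
      rw [Real.norm_eq_abs, abs_of_pos (inv_pos.2 hrpos)]
    rwa [h2] at h
  have hχabs : ∀ x : E, |χ x| ≤ 1 := by
    intro x
    rw [abs_of_nonneg B.nonneg]
    exact B.le_one
  -- The perturbation ψ.
  set ψ : E → E := fun x => χ x • Efun x with hψdef
  have hl₂r : l₂ * r < r := by nlinarith
  have hballρ : Metric.ball x₀ r ⊆ Metric.closedBall x₀ ρ :=
    Metric.ball_subset_closedBall.trans (Metric.closedBall_subset_closedBall (by linarith))
  have hballU2 : Metric.ball x₀ r ⊆ U := hballρ.trans hρU'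
  have hψ0pt : ∀ x : E, l₂ * r ≤ dist x x₀ → ψ x = 0 := by
    intro x hx
    simp only [hψdef, hχ0 x hx, zero_smul]
  have hψev : ∀ x : E, l₂ * r < dist x x₀ → ψ =ᶠ[𝓝 x] fun _ => (0 : E) := by
    intro x hx
    have hop : IsOpen {y : E | l₂ * r < dist y x₀} :=
      isOpen_lt continuous_const (continuous_id.dist continuous_const)
    filter_upwards [hop.mem_nhds hx] with y hy
    exact hψ0pt y hy.le
  have hcover : ∀ x : E, dist x x₀ < r ∨ l₂ * r < dist x x₀ := by
    intro x
    rcases lt_or_ge (dist x x₀) r with h | h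
    · exact Or.inl h
    · exact Or.inr (lt_of_lt_of_le hl₂r h)
  have hψcd : ContDiff ℝ 1 ψ := by
    rw [contDiff_iff_contDiffAt]
    intro x
    rcases hcover x with h | h
    · have hxU : x ∈ U := hballU2 (Metric.mem_ball.2 h)
      exact hχcd.contDiffAt.smul (hEcd x hxU)
    · exact contDiffAt_const.congr_of_eventuallyEq (hψev x h)
  have hψdiff : Differentiable ℝ ψ := hψcd.differentiable (by simp)
  have hψfderiv0 : ∀ x : E, l₂ * r < dist x x₀ → fderiv ℝ ψ x = 0 := by
    intro x hx
    rw [(hψev x hx).fderiv_eq]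
    exact fderiv_const_apply 0
  have hDψ : ∀ x : E, ‖fderiv ℝ ψ x‖ ≤ κ := by
    intro x
    rcases le_or_gt (dist x x₀) (l₂ * r) with h | h
    · have hxball : dist x x₀ < r := lt_of_le_of_lt h hl₂r
      have hxU : x ∈ U := hballU2 (Metric.mem_ball.2 hxball)
      have hxρ : x ∈ Metric.closedBall x₀ ρ := hballρ (Metric.mem_ball.2 hxball)
      have hχd : DifferentiableAt ℝ χ x := (hχcd.differentiable (by simp)) x
      have hEd : DifferentiableAt ℝ Efun x := (hEderiv x hxU).differentiableAt
      have hsmul : fderiv ℝ ψ x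
          = χ x • fderiv ℝ Efun x + (fderiv ℝ χ x).smulRight (Efun x) := by
        simp only [hψdef]
        exact fderiv_smul hχd hEd
      rw [hsmul]
      have h1 : ‖χ x • fderiv ℝ Efun x‖ ≤ ε := by
        rw [norm_smul, (hEderiv x hxU).fderiv]
        calc |χ x| * ‖fderiv ℝ Φ x - ℓ‖ ≤ 1 * ε :=
              mul_le_mul (hχabs x) (hρε x hxρ) (norm_nonneg _) one_pos.le
          _ = ε := one_mul _
      have h2 : ‖(fderiv ℝ χ x).smulRight (Efun x)‖ ≤ (L : ℝ) * ε := by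
        rw [ContinuousLinearMap.norm_smulRight_apply]
        have hb2 : ‖Efun x‖ ≤ ε * r := by
          refine le_trans (hEbound x hxρ) ?_
          apply mul_le_mul_of_nonneg_left _ hεpos.le
          rw [← dist_eq_norm]
          exact hxball.le
        calc ‖fderiv ℝ χ x‖ * ‖Efun x‖ ≤ ((L : ℝ) * r⁻¹) * (ε * r) :=
              mul_le_mul (hDχ x) hb2 (norm_nonneg _) (by positivity)
          _ = (L : ℝ) * ε := by field_simp
      calc ‖χ x • fderiv ℝ Efun x + (fderiv ℝ χ x).smulRight (Efun x)‖
          ≤ ε + (L : ℝ) * ε := le_trans (norm_add_le _ _) (add_le_add h1 h2)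
        _ = κ := by rw [hκdef]; ring
    · rw [hψfderiv0 x h]
      simpa using hκpos
  have hψlip : ∀ x y : E, ‖ψ x - ψ y‖ ≤ κ * ‖x - y‖ := by
    intro x y
    exact Convex.norm_image_sub_le_of_norm_fderiv_le (fun z _ => hψdiff z)
      (fun z _ => hDψ z) convex_univ (Set.mem_univ y) (Set.mem_univ x)
  have hψnorm : ∀ x : E, ‖ψ x‖ ≤ ε * r := by
    intro x
    rcases le_or_gt (dist x x₀) (l₂ * r) with h | h
    · have hxball : dist x x₀ < r := lt_of_le_of_lt h hl₂r
      have hxρ : x ∈ Metric.closedBall x₀ ρ := hballρ (Metric.mem_ball.2 hxball)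
      have hψx : ‖ψ x‖ = |χ x| * ‖Efun x‖ := by
        simp only [hψdef]
        rw [norm_smul]
        rfl
      rw [hψx]
      calc |χ x| * ‖Efun x‖ ≤ 1 * (ε * r) := by
            apply mul_le_mul (hχabs x) _ (norm_nonneg _) one_pos.le
            refine le_trans (hEbound x hxρ) ?_
            apply mul_le_mul_of_nonneg_left _ hεpos.le
            rw [← dist_eq_norm]
            exact hxball.le
        _ = ε * r := one_mul _
    · rw [hψ0pt x h.le]
      simp
      positivity
  clear_value χ ψ
  -- The map H₁.
  set H₁ : E → E := fun x => Φ x - ψ x with hH₁def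
  have hH₁cd : ContDiffOn ℝ 1 H₁ U := hC1.sub hψcd.contDiffOn
  have hH₁units : ∀ x ∈ U, IsUnit (fderiv ℝ H₁ x) := by
    intro x hxU
    have hfd : fderiv ℝ H₁ x = fderiv ℝ Φ x - fderiv ℝ ψ x := by
      simp only [hH₁def]
      exact fderiv_sub (hΦdiff x hxU) (hψdiff x)
    rcases le_or_gt (dist x x₀) (l₂ * r) with h | h
    · have hxball : dist x x₀ < r := lt_of_le_of_lt h hl₂r
      have hxρ : x ∈ Metric.closedBall x₀ ρ := hballρ (Metric.mem_ball.2 hxball)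
      set S := (fderiv ℝ Φ x - ℓ) - fderiv ℝ ψ x with hSdef
      have hSnorm : ‖S‖ ≤ c⁻¹ / 2 := by
        calc ‖S‖ ≤ ‖fderiv ℝ Φ x - ℓ‖ + ‖fderiv ℝ ψ x‖ := norm_sub_le _ _
          _ ≤ ε + κ := add_le_add (hρε x hxρ) (hDψ x)
          _ = c⁻¹ / 2 := hεκ
      have hdecomp : fderiv ℝ H₁ x = ℓ + S := by
        rw [hfd, hSdef]
        abel
      rw [hdecomp]
      have hT : ‖S * ((u⁻¹ : (E →L[ℝ] E)ˣ) : E →L[ℝ] E)‖ < 1 := by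
        calc ‖S * ((u⁻¹ : (E →L[ℝ] E)ˣ) : E →L[ℝ] E)‖ ≤ ‖S‖ * c := by rw [hcdef]; exact norm_mul_le _ _
          _ ≤ (c⁻¹ / 2) * c := mul_le_mul_of_nonneg_right hSnorm hcpos.le
          _ = 1 / 2 := by rw [div_mul_eq_mul_div, inv_mul_cancel₀ hcne]
          _ < 1 := by norm_num
      have hunit1 : IsUnit (1 + S * ((u⁻¹ : (E →L[ℝ] E)ˣ) : E →L[ℝ] E)) := by
        have h := isUnit_one_sub_of_norm_lt_one
          (x := -(S * ((u⁻¹ : (E →L[ℝ] E)ˣ) : E →L[ℝ] E))) (by rwa [norm_neg])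
        simpa [sub_neg_eq_add] using h
      have hkey : (1 + S * ((u⁻¹ : (E →L[ℝ] E)ˣ) : E →L[ℝ] E)) * (u : E →L[ℝ] E)
          = ℓ + S := by
        rw [add_mul, one_mul, mul_assoc, u.inv_mul, mul_one, hu]
      rw [← hkey]
      exact hunit1.mul u.isUnit
    · rw [hfd, hψfderiv0 x h, sub_zero]
      exact hder x hxU
  -- Values of H₁.
  have hH₁far : ∀ x : E, l₂ * r ≤ dist x x₀ → H₁ x = Φ x := by
    intro x hx
    simp only [hH₁def]
    rw [hψ0pt x hx, sub_zero]
  -- Injectivity of H₁ on U.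
  have hΦinjU : ∀ x ∈ U, ∀ y ∈ U, Φ x = Φ y → x = y := by
    intro x hx y hy h
    have h2 := hemb.injective (a₁ := ⟨x, hx⟩) (a₂ := ⟨y, hy⟩) h
    exact congrArg Subtype.val h2
  have hAsub : ∀ x y : E, A x - A y = ℓ (x - y) := by
    intro x y
    simp only [hAdef]
    have h1 : ℓ (x - x₀) - ℓ (y - x₀) = ℓ (x - y) := by
      rw [← map_sub]
      congr 1
      abel
    rw [add_sub_add_left_eq_sub, h1]
  have hkeyinj : ∀ x ∈ U, ∀ y ∈ U, dist x x₀ < r → H₁ x = H₁ y → x = y := by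
    intro x hx y hy hxr heq
    have heq' : Φ x - ψ x = Φ y - ψ y := heq
    by_cases hyρ : dist y x₀ ≤ ρ
    · have hxρ : x ∈ Metric.closedBall x₀ ρ := hballρ (Metric.mem_ball.2 hxr)
      have hyρ' : y ∈ Metric.closedBall x₀ ρ := Metric.mem_closedBall.2 hyρ
      have h2 : Φ x - Φ y = ψ x - ψ y := sub_eq_sub_iff_sub_eq_sub.1 heq'
      have h0 : ℓ (x - y) = (ψ x - ψ y) - (Efun x - Efun y) := by
        rw [← hAsub, ← h2]
        simp only [hEdef]
        abel
      have hnorm : ‖ℓ (x - y)‖ ≤ (ε + κ) * ‖x - y‖ := by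
        calc ‖ℓ (x - y)‖ = ‖(ψ x - ψ y) - (Efun x - Efun y)‖ := by rw [h0]
          _ ≤ ‖ψ x - ψ y‖ + ‖Efun x - Efun y‖ := norm_sub_le _ _
          _ ≤ κ * ‖x - y‖ + ε * ‖x - y‖ :=
              add_le_add (hψlip x y) (hElip x hxρ y hyρ')
          _ = (ε + κ) * ‖x - y‖ := by ring
      have hfinal : ‖x - y‖ ≤ (1 / 2) * ‖x - y‖ := by
        calc ‖x - y‖ ≤ c * ‖ℓ (x - y)‖ := hlow _
          _ ≤ c * ((ε + κ) * ‖x - y‖) := mul_le_mul_of_nonneg_left hnorm hcpos.le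
          _ = (c * (ε + κ)) * ‖x - y‖ := by ring
          _ ≤ (1 / 2) * ‖x - y‖ := by
              apply mul_le_mul_of_nonneg_right _ (norm_nonneg _)
              rw [hεκ]
              exact le_of_eq (by rw [← mul_div_assoc, mul_inv_cancel₀ hcne])
      have h3 : ‖x - y‖ = 0 := le_antisymm (by linarith) (norm_nonneg _)
      exact sub_eq_zero.1 (norm_eq_zero.1 h3)
    · push_neg at hyρ
      have hyU' : y ∈ U \ Metric.ball x₀ ρ := by
        refine ⟨hy, ?_⟩
        simp only [Metric.mem_ball, not_lt]
        linarith
      have hxball2 : x ∈ Metric.closedBall x₀ (ρ / 2) :=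
        Metric.mem_closedBall.2 (hxr.le.trans hrρ)
      have hδ2 := hδ x hxball2 y hyU'
      have hH₁y : H₁ y = Φ y := hH₁far y (by linarith)
      have hΦsub : Φ x - Φ y = ψ x := by
        have h1 : Φ x - ψ x = Φ y := by rw [← hH₁y]; exact heq'
        rw [← h1]
        abel
      have hcontr : dist (Φ x) (Φ y) ≤ ε * r := by
        rw [dist_eq_norm, hΦsub]
        exact hψnorm x
      exfalso
      linarith
  have hinj : Function.Injective (U.restrict H₁) := by
    rintro ⟨x, hx⟩ ⟨y, hy⟩ h
    have h' : H₁ x = H₁ y := h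
    rcases lt_or_ge (dist x x₀) r with hx' | hx'
    · exact Subtype.ext (hkeyinj x hx y hy hx' h')
    rcases lt_or_ge (dist y x₀) r with hy' | hy'
    · exact Subtype.ext ((hkeyinj y hy x hx hy' h'.symm).symm)
    · have e1 : H₁ x = Φ x := hH₁far x (le_trans hl₂r.le hx')
      have e2 : H₁ y = Φ y := hH₁far y (le_trans hl₂r.le hy')
      exact Subtype.ext (hΦinjU x hx y hy (by rw [← e1, ← e2, h']))
  -- Openness of H₁ on U.
  have hmapnhds : ∀ x ∈ U, Filter.map H₁ (𝓝 x) = 𝓝 (H₁ x) := by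
    intro x hx
    obtain ⟨w, hw⟩ := hH₁units x hx
    have h1 : Function.LeftInverse ((w⁻¹ : (E →L[ℝ] E)ˣ) : E →L[ℝ] E)
        (w : E →L[ℝ] E) := by
      intro v
      have h : ((w⁻¹ : (E →L[ℝ] E)ˣ) : E →L[ℝ] E) * (w : E →L[ℝ] E) = 1 := w.inv_mul
      calc ((w⁻¹ : (E →L[ℝ] E)ˣ) : E →L[ℝ] E) ((w : E →L[ℝ] E) v)
          = (((w⁻¹ : (E →L[ℝ] E)ˣ) : E →L[ℝ] E) * (w : E →L[ℝ] E)) v := rfl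
        _ = (1 : E →L[ℝ] E) v := by rw [h]
        _ = v := rfl
    have h2 : Function.RightInverse ((w⁻¹ : (E →L[ℝ] E)ˣ) : E →L[ℝ] E)
        (w : E →L[ℝ] E) := by
      intro v
      have h : (w : E →L[ℝ] E) * ((w⁻¹ : (E →L[ℝ] E)ˣ) : E →L[ℝ] E) = 1 := w.mul_inv
      calc (w : E →L[ℝ] E) (((w⁻¹ : (E →L[ℝ] E)ˣ) : E →L[ℝ] E) v)
          = ((w : E →L[ℝ] E) * ((w⁻¹ : (E →L[ℝ] E)ˣ) : E →L[ℝ] E)) v := rfl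
        _ = (1 : E →L[ℝ] E) v := by rw [h]
        _ = v := rfl
    set e := ContinuousLinearEquiv.equivOfInverse (w : E →L[ℝ] E) _ h1 h2 with hedef
    have hstr : HasStrictFDerivAt H₁ (e : E →L[ℝ] E) x := by
      have hca : ContDiffAt ℝ 1 H₁ x := hH₁cd.contDiffAt (hU.mem_nhds hx)
      have hcoe : (e : E →L[ℝ] E) = fderiv ℝ H₁ x := by
        ext v
        rw [← hw]
        rfl
      rw [hcoe]
      exact hca.hasStrictFDerivAt (by simp)
    exact hstr.map_nhds_eq_of_equiv
  have hopenmap : IsOpenMap (U.restrict H₁) := by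
    intro V hV
    rw [isOpen_iff_mem_nhds]
    rintro p ⟨⟨x, hxU⟩, hxV, rfl⟩
    have hVopen : IsOpen (Subtype.val '' V : Set E) := hU.isOpenMap_subtype_val V hV
    have hmem : (Subtype.val '' V : Set E) ∈ 𝓝 x := hVopen.mem_nhds ⟨⟨x, hxU⟩, hxV, rfl⟩
    have himg : U.restrict H₁ '' V = H₁ '' (Subtype.val '' V) := by
      rw [Set.image_image]
      rfl
    show U.restrict H₁ '' V ∈ 𝓝 (U.restrict H₁ ⟨x, hxU⟩)
    rw [himg, show U.restrict H₁ ⟨x, hxU⟩ = H₁ x from rfl, ← hmapnhds x hxU]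
    exact Filter.image_mem_map hmem
  have hembH : Topology.IsEmbedding (U.restrict H₁) :=
    (Topology.IsOpenEmbedding.of_continuous_injective_isOpenMap
      hH₁cd.continuousOn.restrict hinj hopenmap).isEmbedding
  refine ⟨H₁, hH₁cd, hembH, hH₁units, ?_, ?_⟩
  · intro x hx
    have hx1 : dist x x₀ ≤ l₁ * r := by
      refine le_trans (Metric.mem_closedBall.1 hx) ?_
      nlinarith
    have hχx := hχ1 x hx1
    simp only [hH₁def, hψdef, hχx, one_smul, hEdef, hAdef]
    abel
  · intro x hx
    have hfar : l₂ * r ≤ dist x x₀ := by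
      refine le_trans hl₂r.le ?_
      have := hx.2
      simpa [Metric.mem_ball, not_lt] using this
    exact hH₁far x hfar

/-- A `C¹` diffeomorphism can be locally replaced by its affine approximation:
for every `x₀ ∈ U` there is `r₀ > 0` such that for all `0 < r ≤ r₀` there is a `C¹`
diffeomorphism `H₁` of `U` equal to the affine map `x ↦ Φ(x₀) + DΦ(x₀)(x − x₀)` on
`B̄(x₀, λr)` and equal to `Φ` outside `B(x₀, r)`. -/
theorem stmt6 {n : ℕ} (U : Set (EuclideanSpace ℝ (Fin n))) (hU : IsOpen U)
    (Φ : EuclideanSpace ℝ (Fin n) → EuclideanSpace ℝ (Fin n))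
    (hC1 : ContDiffOn ℝ 1 Φ U)
    (hemb : Topology.IsEmbedding (U.restrict Φ))
    (hder : ∀ x ∈ U, IsUnit (fderiv ℝ Φ x))
    (lam : ℝ) (hlam : lam ∈ Set.Ioo (0 : ℝ) 1) :
    ∀ x₀ ∈ U, ∃ r₀ > (0 : ℝ), Metric.closedBall x₀ r₀ ⊆ U ∧
      ∀ r ∈ Set.Ioc (0 : ℝ) r₀,
        ∃ H₁ : EuclideanSpace ℝ (Fin n) → EuclideanSpace ℝ (Fin n),
          ContDiffOn ℝ 1 H₁ U ∧ Topology.IsEmbedding (U.restrict H₁) ∧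
          (∀ x ∈ U, IsUnit (fderiv ℝ H₁ x)) ∧
          (∀ x ∈ Metric.closedBall x₀ (lam * r),
            H₁ x = Φ x₀ + fderiv ℝ Φ x₀ (x - x₀)) ∧
          (∀ x ∈ U \ Metric.ball x₀ r, H₁ x = Φ x) := by
  exact aux_main U hU Φ hC1 hemb hder lam hlam
end

section
/- Fix ℓ ∈ ℤ. Let 𝒱 be a finite family of closed axis-parallel cubes in ℝⁿ with pairwise disjoint interiors, each of side-length 2^{−ℓ}. Let 𝒲 be another finite family of closed axis-parallel cubes such that each W ∈ 𝒲 has side-length 2^{−k} for some integer k ≥ ℓ, and the total volume of the cubes in 𝒲 is at most the total volume of the cubes in 𝒱. Then for each W ∈ 𝒲 there exists a translated copy W̃ of W (same side-length) such that the cubes {W̃ : W ∈ 𝒲} have pairwise disjoint interiors and their union is contained in the union of the cubes of 𝒱. -/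
open MeasureTheory

section AuxNat

lemma digit_sum (g : ℕ → ℕ) (hg : ∀ b, g b ≤ 1) (t : ℕ) : ∀ (lvl : ℕ),
    (∑ b ∈ Finset.range lvl, g b * 2 ^ b) / 2 ^ t % 2 = if t < lvl then g t else 0 := by
  induction t generalizing g with
  | zero =>
    intro lvl
    cases lvl with
    | zero => simp
    | succ m =>
      rw [Finset.sum_range_succ']
      have h2 : ∑ b ∈ Finset.range m, g (b + 1) * 2 ^ (b + 1) + g 0 * 2 ^ 0 =
          2 * (∑ b ∈ Finset.range m, g (b + 1) * 2 ^ b) + g 0 := by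
        rw [Finset.mul_sum]; simp only [pow_zero, mul_one]; congr 1
        apply Finset.sum_congr rfl; intro b _; ring
      rw [h2]
      have := hg 0
      simp only [pow_zero, Nat.div_one, Nat.lt_succ_iff, Nat.zero_le, if_true]
      omega
  | succ t ih =>
    intro lvl
    cases lvl with
    | zero => simp
    | succ m =>
      rw [Finset.sum_range_succ']
      have h2 : ∑ b ∈ Finset.range m, g (b + 1) * 2 ^ (b + 1) + g 0 * 2 ^ 0 =
          2 * (∑ b ∈ Finset.range m, g (b + 1) * 2 ^ b) + g 0 := by
        rw [Finset.mul_sum]; simp only [pow_zero, mul_one]; congr 1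
        apply Finset.sum_congr rfl; intro b _; ring
      rw [h2, pow_succ', ← Nat.div_div_eq_div_mul]
      have h3 : (2 * (∑ b ∈ Finset.range m, g (b + 1) * 2 ^ b) + g 0) / 2 =
          ∑ b ∈ Finset.range m, g (b + 1) * 2 ^ b := by
        have := hg 0; omega
      rw [h3, ih (fun b => g (b + 1)) (fun b => hg (b + 1)) m]
      simp [Nat.succ_lt_succ_iff]

/-- Morton / bit-interleaving decode: coordinate `i` of `r`, reading bits at positions
`b*nn + i` for `b < lvl`. -/
def mort (lvl nn r i : ℕ) : ℕ := ∑ b ∈ Finset.range lvl, (r / 2 ^ (b * nn + i) % 2) * 2 ^ b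

lemma mort_digit (lvl nn r i t : ℕ) :
    mort lvl nn r i / 2 ^ t % 2 = if t < lvl then r / 2 ^ (t * nn + i) % 2 else 0 :=
  digit_sum _ (fun b => Nat.le_of_lt_succ (Nat.mod_lt _ (by norm_num))) t lvl

lemma mort_lt (lvl nn r i : ℕ) : mort lvl nn r i < 2 ^ lvl := by
  calc mort lvl nn r i ≤ ∑ b ∈ Finset.range lvl, 1 * 2 ^ b := by
        apply Finset.sum_le_sum
        intro b _
        exact Nat.mul_le_mul_right _ (Nat.le_of_lt_succ (Nat.mod_lt _ (by norm_num)))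
    _ < 2 ^ lvl := by
        simp only [one_mul]
        induction lvl with
        | zero => norm_num
        | succ m ihm => rw [Finset.sum_range_succ, pow_succ]; omega

lemma nat_digits_eq {x y : ℕ} (h : ∀ t, x / 2 ^ t % 2 = y / 2 ^ t % 2) : x = y := by
  apply Nat.eq_of_testBit_eq
  intro i
  rw [Nat.testBit_eq_decide_div_mod_eq, Nat.testBit_eq_decide_div_mod_eq, h i]

lemma mort_div (lvl nn r i c : ℕ) :
    mort lvl nn r i / 2 ^ c = mort (lvl - c) nn (r / 2 ^ (c * nn)) i := by
  apply nat_digits_eq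
  intro t
  rw [Nat.div_div_eq_div_mul, ← pow_add, mort_digit, mort_digit,
    Nat.div_div_eq_div_mul, ← pow_add]
  have h1 : c + t < lvl ↔ t < lvl - c := by omega
  rw [show c * nn + (t * nn + i) = (c + t) * nn + i by ring]
  by_cases h : c + t < lvl
  · rw [if_pos h, if_pos (h1.mp h)]
  · rw [if_neg h, if_neg (fun hh => h (h1.mpr hh))]

lemma mort_inj {lvl nn r r' : ℕ} (hn : 0 < nn) (hr : r < 2 ^ (lvl * nn))
    (hr' : r' < 2 ^ (lvl * nn)) (h : ∀ i < nn, mort lvl nn r i = mort lvl nn r' i) :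
    r = r' := by
  apply nat_digits_eq
  intro t
  by_cases ht : t < lvl * nn
  · have hi : t % nn < nn := Nat.mod_lt _ hn
    have hb : t / nn < lvl := by
      rcases Nat.lt_or_ge (t / nn) lvl with h' | h'
      · exact h'
      · exfalso
        have h2 : lvl * nn ≤ t / nn * nn := Nat.mul_le_mul_right _ h'
        have h3 := Nat.div_mul_le_self t nn
        omega
    have key := h (t % nn) hi
    have e1 := mort_digit lvl nn r (t % nn) (t / nn)
    have e2 := mort_digit lvl nn r' (t % nn) (t / nn)
    rw [if_pos hb] at e1 e2
    have ht' : t / nn * nn + t % nn = t := Nat.div_add_mod' t nn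
    rw [ht'] at e1 e2
    rw [← e1, ← e2, key]
  · have h1 : r / 2 ^ t = 0 := Nat.div_eq_of_lt (lt_of_lt_of_le hr (Nat.pow_le_pow_right (by norm_num) (by omega)))
    have h2 : r' / 2 ^ t = 0 := Nat.div_eq_of_lt (lt_of_lt_of_le hr' (Nat.pow_le_pow_right (by norm_num) (by omega)))
    rw [h1, h2]

lemma mort_dvd {lvl nn r : ℕ} (c : ℕ) (i : ℕ) (hi : i < nn) (hdvd : 2 ^ (c * nn) ∣ r) :
    2 ^ c ∣ mort lvl nn r i := by
  unfold mort
  apply Finset.dvd_sum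
  intro b _
  rcases Nat.lt_or_ge b c with hb | hb
  · have hd2 : 2 ^ (b * nn + i + 1) ∣ r := by
      refine dvd_trans (pow_dvd_pow 2 ?_) hdvd
      have h1 : (b + 1) * nn ≤ c * nn := Nat.mul_le_mul_right _ (by omega)
      have h2 : b * nn + nn = (b + 1) * nn := by ring
      omega
    obtain ⟨u, hu⟩ := hd2
    have hz : r / 2 ^ (b * nn + i) % 2 = 0 := by
      rw [hu, pow_succ, mul_assoc,
        Nat.mul_div_cancel_left _ (Nat.pow_pos (by norm_num)), Nat.mul_mod_right]
    simp [hz]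
  · exact Dvd.dvd.mul_left (pow_dvd_pow 2 hb) _

lemma nat_add_dvd_le {d a b : ℕ} (hd : d ∣ a) (hd' : d ∣ b) (h : a < b) : a + d ≤ b := by
  obtain ⟨x, rfl⟩ := hd
  obtain ⟨y, rfl⟩ := hd'
  have hd0 : 0 < d := by
    rcases Nat.eq_zero_or_pos d with h0 | h0
    · subst h0; simp at h
    · exact h0
  have : x < y := lt_of_mul_lt_mul_left h (Nat.zero_le d)
  calc d * x + d = d * (x + 1) := by ring
    _ ≤ d * y := Nat.mul_le_mul_left _ (by omega)

end AuxNat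

/-- The closed axis-parallel cube in `ℝⁿ` with lower corner `c` and side-length `s`. -/
def cube {n : ℕ} (c : Fin n → ℝ) (s : ℝ) : Set (Fin n → ℝ) :=
  Set.Icc c (c + fun _ => s)

section Geo

lemma cube_eq_pi {n : ℕ} (c : Fin n → ℝ) (s : ℝ) :
    cube c s = Set.pi Set.univ (fun i => Set.Icc (c i) (c i + s)) := by
  ext x
  simp [cube, Set.mem_Icc, Pi.le_def, Set.mem_pi, forall_and]

lemma volume_cube {n : ℕ} (c : Fin n → ℝ) (s : ℝ) :
    volume (cube c s) = ENNReal.ofReal s ^ n := by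
  rw [cube_eq_pi, volume_pi_pi]
  simp [Real.volume_Icc]

lemma interior_cube {n : ℕ} (c : Fin n → ℝ) (s : ℝ) :
    interior (cube c s) = Set.pi Set.univ (fun i => Set.Ioo (c i) (c i + s)) := by
  rw [cube_eq_pi, interior_pi_set Set.finite_univ]
  simp [interior_Icc]

lemma cube_subset {n : ℕ} {c c' : Fin n → ℝ} {s s' : ℝ} (h : ∀ i, c' i ≤ c i)
    (h2 : ∀ i, c i + s ≤ c' i + s') : cube c s ⊆ cube c' s' := by
  rw [cube_eq_pi, cube_eq_pi]
  exact Set.pi_mono fun i _ => Set.Icc_subset_Icc (h i) (h2 i)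

lemma cube_disjoint {n : ℕ} {c c' : Fin n → ℝ} {s s' : ℝ} {i : Fin n} (h : c i + s ≤ c' i) :
    Disjoint (interior (cube c s)) (interior (cube c' s')) := by
  rw [interior_cube, interior_cube, Set.disjoint_left]
  intro x hx hx'
  have h1 := hx i (Set.mem_univ i)
  have h2 := hx' i (Set.mem_univ i)
  simp only [Set.mem_Ioo] at h1 h2
  linarith

end Geo

/-- Storage lemma: dyadic boxes of side-lengths `2^{-k}`, `k ≥ ℓ`, of total volume at most
that of a finite family of storage cubes of side `2^{-ℓ}` with pairwise disjoint interiors,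
can be translated so as to have pairwise disjoint interiors and fit inside the storage. -/
theorem stmt9 {n : ℕ} (ℓ : ℤ) {ι κ : Type*} [Fintype ι] [Fintype κ]
    (v : ι → (Fin n → ℝ)) (w : κ → (Fin n → ℝ)) (s : κ → ℝ)
    (hdisj : Pairwise fun i i' =>
      Disjoint (interior (cube (v i) ((2 : ℝ) ^ (-ℓ))))
        (interior (cube (v i') ((2 : ℝ) ^ (-ℓ)))))
    (hs : ∀ j, ∃ k : ℤ, ℓ ≤ k ∧ s j = (2 : ℝ) ^ (-k))
    (hvol : ∑ j, volume (cube (w j) (s j)) ≤ ∑ i, volume (cube (v i) ((2 : ℝ) ^ (-ℓ)))) :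
    ∃ t : κ → (Fin n → ℝ),
      (Pairwise fun j j' =>
        Disjoint (interior (cube (t j) (s j))) (interior (cube (t j') (s j')))) ∧
      (⋃ j, cube (t j) (s j)) ⊆ ⋃ i, cube (v i) ((2 : ℝ) ^ (-ℓ)) := by
  classical
  choose k hkℓ hks using hs
  -- the case n = 0
  rcases Nat.eq_zero_or_pos n with hn | hn
  · subst hn
    have hcube0 : ∀ (c : Fin 0 → ℝ) (sd : ℝ), cube c sd = Set.univ := by
      intro c sd
      ext x
      simp only [cube, Set.mem_Icc, Set.mem_univ, iff_true, Pi.le_def]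
      exact ⟨fun i => i.elim0, fun i => i.elim0⟩
    have hcard : Fintype.card κ ≤ Fintype.card ι := by
      have h1 : ∀ j : κ, volume (cube (w j) (s j)) = 1 := by
        intro j; rw [volume_cube]; simp
      have h2 : ∀ i : ι, volume (cube (v i) ((2:ℝ) ^ (-ℓ))) = 1 := by
        intro i; rw [volume_cube]; simp
      rw [Finset.sum_congr rfl (fun j _ => h1 j), Finset.sum_congr rfl (fun i _ => h2 i),
        Finset.sum_const, Finset.sum_const, Finset.card_univ, Finset.card_univ,
        nsmul_eq_mul, nsmul_eq_mul, mul_one, mul_one] at hvol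
      exact_mod_cast hvol
    have hι1 : Fintype.card ι ≤ 1 := by
      by_contra hc
      push_neg at hc
      obtain ⟨i1, i2, hne⟩ := Fintype.exists_pair_of_one_lt_card hc
      have : Disjoint (interior (cube (v i1) ((2:ℝ) ^ (-ℓ))))
          (interior (cube (v i2) ((2:ℝ) ^ (-ℓ)))) := hdisj hne
      rw [hcube0, hcube0, interior_univ] at this
      have hx : (fun _ : Fin 0 => (0:ℝ)) ∈ (Set.univ : Set (Fin 0 → ℝ)) := Set.mem_univ _
      exact Set.disjoint_left.mp this hx hx
    refine ⟨w, ?_, ?_⟩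
    · intro j j' hne
      exfalso
      have : 1 < Fintype.card κ := Fintype.one_lt_card_iff_nontrivial.mpr ⟨j, j', hne⟩
      omega
    · intro x hx
      simp only [Set.mem_iUnion] at hx ⊢
      obtain ⟨j, _⟩ := hx
      have hκpos : 0 < Fintype.card κ := Fintype.card_pos_iff.mpr ⟨j⟩
      have : Nonempty ι := Fintype.card_pos_iff.mp (by omega)
      obtain ⟨i⟩ := this
      exact ⟨i, by rw [hcube0]; trivial⟩
  -- now n ≥ 1
  set M := Fintype.card ι with hM
  set e : κ → ℕ := fun j => (k j - ℓ).toNat with he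
  have hke : ∀ j, k j = ℓ + e j := by
    intro j; have := hkℓ j; simp only [he]; omega
  set E : ℕ := Finset.univ.sup e with hE
  have heE : ∀ j, e j ≤ E := fun j => Finset.le_sup (Finset.mem_univ j)
  set L : κ → ℕ := fun j => 2 ^ ((E - e j) * n) with hL
  set B : ℕ := 2 ^ (E * n) with hB
  have hB0 : 0 < B := Nat.pow_pos (by norm_num)
  have hL1 : ∀ j, 1 ≤ L j := fun j => Nat.one_le_two_pow
  have hLB : ∀ j, L j ∣ B := fun j =>
    pow_dvd_pow 2 (Nat.mul_le_mul_right _ (Nat.sub_le _ _))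
  -- the counting inequality
  have hs0 : ∀ j, (0:ℝ) < s j := by
    intro j; rw [hks j]; exact zpow_pos (by norm_num) _
  have hnat : ∑ j, L j ≤ M * B := by
    have hvol' : ∑ j : κ, ENNReal.ofReal ((s j) ^ n) ≤ ∑ _i : ι, ENNReal.ofReal (((2:ℝ) ^ (-ℓ)) ^ n) := by
      have e1 : ∀ j : κ, volume (cube (w j) (s j)) = ENNReal.ofReal ((s j) ^ n) := by
        intro j; rw [volume_cube, ENNReal.ofReal_pow (hs0 j).le]
      have e2 : ∀ i : ι, volume (cube (v i) ((2:ℝ) ^ (-ℓ))) =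
          ENNReal.ofReal (((2:ℝ) ^ (-ℓ)) ^ n) := by
        intro i
        rw [volume_cube, ENNReal.ofReal_pow (zpow_pos (by norm_num) _).le]
      rw [Finset.sum_congr rfl (fun j _ => e1 j), Finset.sum_congr rfl (fun i _ => e2 i)] at hvol
      exact hvol
    rw [← ENNReal.ofReal_sum_of_nonneg (fun j _ => pow_nonneg (hs0 j).le n),
      ← ENNReal.ofReal_sum_of_nonneg
        (fun i _ => pow_nonneg (zpow_pos (by norm_num : (0:ℝ) < 2) (-ℓ)).le n)] at hvol'
    have hreal : ∑ j, (s j) ^ n ≤ ∑ _i : ι, ((2:ℝ) ^ (-ℓ)) ^ n :=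
      (ENNReal.ofReal_le_ofReal_iff
        (Finset.sum_nonneg fun i _ => pow_nonneg (zpow_pos (by norm_num : (0:ℝ) < 2) (-ℓ)).le n)).mp hvol'
    simp only [hL, hB]
    rw [← Nat.cast_le (α := ℝ)]
    push_cast
    set X : ℝ := ((2:ℝ) ^ (ℓ + E : ℤ)) ^ n with hX
    have hX0 : (0:ℝ) < X := pow_pos (zpow_pos (by norm_num) _) n
    have hbase : ∀ j, s j * (2:ℝ) ^ (ℓ + E : ℤ) = (2:ℝ) ^ (E - e j : ℕ) := by
      intro j
      rw [hks j, hke j, ← zpow_natCast (2:ℝ) (E - e j), ← zpow_add₀ (by norm_num : (2:ℝ) ≠ 0)]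
      congr 1
      have := heE j
      push_cast [Nat.cast_sub this]
      ring
    have hterm : ∀ j, ((2:ℝ) ^ ((E - e j) * n)) = (s j) ^ n * X := by
      intro j
      rw [hX, ← mul_pow, hbase j, ← pow_mul]
    have hRHS : ((2:ℝ) ^ (-ℓ)) ^ n * X = (2:ℝ) ^ (E * n) := by
      rw [hX, ← mul_pow, ← zpow_add₀ (by norm_num : (2:ℝ) ≠ 0),
        show -ℓ + (ℓ + (E:ℤ)) = (E:ℤ) by ring, zpow_natCast, ← pow_mul]
    calc ∑ j, ((2:ℝ) ^ ((E - e j) * n))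
        = ∑ j, (s j) ^ n * X := Finset.sum_congr rfl fun j _ => hterm j
      _ = (∑ j, (s j) ^ n) * X := (Finset.sum_mul _ _ _).symm
      _ ≤ (∑ _i : ι, ((2:ℝ) ^ (-ℓ)) ^ n) * X := mul_le_mul_of_nonneg_right hreal hX0.le
      _ = (M : ℝ) * (2:ℝ) ^ (E * n) := by
          rw [Finset.sum_const, Finset.card_univ, nsmul_eq_mul, mul_assoc, hRHS, hM]
  -- ordering and partial sums
  set q : κ ≃ Fin (Fintype.card κ) := Fintype.equivFin κ with hq
  set rel : κ → κ → Prop := fun j j' => e j < e j' ∨ (e j = e j' ∧ (q j : ℕ) < (q j' : ℕ))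
    with hrel
  have hrel_trans : ∀ {j1 j2 j3}, rel j1 j2 → rel j2 j3 → rel j1 j3 := by
    intro j1 j2 j3 h1 h2; simp only [hrel] at *; omega
  have hrel_irr : ∀ j, ¬ rel j j := by intro j; simp [hrel]
  have hrel_tri : ∀ {j j'}, j ≠ j' → rel j j' ∨ rel j' j := by
    intro j j' hne
    have : (q j : ℕ) ≠ (q j' : ℕ) := by
      intro hc
      exact hne (q.injective (Fin.val_injective hc))
    simp only [hrel]; omega
  have hrel_e : ∀ {j j'}, rel j j' → e j ≤ e j' := by
    intro j j' h; simp only [hrel] at h; omega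
  set a : κ → ℕ := fun j => ∑ j' ∈ Finset.univ.filter (fun j' => rel j' j), L j' with ha
  have hsub_ins : ∀ {j j'}, rel j j' →
      insert j (Finset.univ.filter (fun x => rel x j)) ⊆ Finset.univ.filter (fun x => rel x j') := by
    intro j j' hjj' x hx
    rcases Finset.mem_insert.mp hx with rfl | hx'
    · simp [hjj']
    · simp only [Finset.mem_filter, Finset.mem_univ, true_and] at hx' ⊢
      exact hrel_trans hx' hjj'
  have hins : ∀ j, a j + L j = ∑ j' ∈ insert j (Finset.univ.filter (fun x => rel x j)), L j' := by
    intro j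
    rw [Finset.sum_insert (by simp [hrel_irr j])]
    ring
  have hsep : ∀ {j j'}, rel j j' → a j + L j ≤ a j' := by
    intro j j' hjj'
    rw [hins j]
    exact Finset.sum_le_sum_of_subset (hsub_ins hjj')
  have hbound : ∀ j, a j + L j ≤ M * B := by
    intro j
    rw [hins j]
    exact le_trans (Finset.sum_le_sum_of_subset (Finset.subset_univ _)) hnat
  have hdvdA : ∀ j, L j ∣ a j := by
    intro j
    apply Finset.dvd_sum
    intro j' hj'
    simp only [Finset.mem_filter, Finset.mem_univ, true_and] at hj'
    exact pow_dvd_pow 2 (Nat.mul_le_mul_right _ (by have := hrel_e hj'; omega))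
  set m : κ → ℕ := fun j => a j / B with hm
  set r : κ → ℕ := fun j => a j % B with hr
  have hmM : ∀ j, m j < M := by
    intro j
    have h1 := hbound j
    have h2 := hL1 j
    exact (Nat.div_lt_iff_lt_mul hB0).mpr (by omega)
  have hrB : ∀ j, r j < B := fun j => Nat.mod_lt _ hB0
  have hdvdr : ∀ j, L j ∣ r j := fun j => (Nat.dvd_mod_iff (hLB j)).mpr (hdvdA j)
  have hdecomp : ∀ j, B * m j + r j = a j := fun j => Nat.div_add_mod _ _
  -- the construction
  set eι : ι ≃ Fin M := Fintype.equivFin ι with heι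
  set idx : κ → ι := fun j => eι.symm ⟨m j, hmM j⟩ with hidx
  set δ : ℝ := (2 : ℝ) ^ (-(ℓ + E : ℤ)) with hδdef
  have hδ : 0 < δ := zpow_pos (by norm_num) _
  set D : κ → Fin n → ℕ := fun j i => mort E n (r j) i with hD
  set t : κ → Fin n → ℝ := fun j => v (idx j) + fun i => (D j i : ℝ) * δ with ht
  have hsj : ∀ j, s j = (2 ^ (E - e j) : ℕ) * δ := by
    intro j
    rw [hks j, hke j, hδdef]
    push_cast
    rw [← zpow_natCast (2:ℝ) (E - e j), ← zpow_add₀ (by norm_num : (2:ℝ) ≠ 0)]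
    congr 1
    have := heE j
    push_cast [Nat.cast_sub this]
    ring
  have hside : (2 : ℝ) ^ (-ℓ) = (2 ^ E : ℕ) * δ := by
    rw [hδdef]
    push_cast
    rw [← zpow_natCast (2:ℝ) E, ← zpow_add₀ (by norm_num : (2:ℝ) ≠ 0)]
    congr 1
    ring
  have hDlt : ∀ j i, D j i < 2 ^ E := fun j i => mort_lt _ _ _ _
  have hDdvd : ∀ j i, 2 ^ (E - e j) ∣ D j i := by
    intro j i
    exact mort_dvd _ _ i.isLt (hdvdr j)
  -- containment in the assigned storage cube
  have hsub : ∀ j, cube (t j) (s j) ⊆ cube (v (idx j)) ((2 : ℝ) ^ (-ℓ)) := by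
    intro j
    apply cube_subset
    · intro i
      simp only [ht, Pi.add_apply]
      have : (0:ℝ) ≤ (D j i : ℝ) * δ := mul_nonneg (Nat.cast_nonneg _) hδ.le
      linarith
    · intro i
      simp only [ht, Pi.add_apply]
      rw [hsj j, hside]
      have hnle : (D j i + 2 ^ (E - e j) : ℕ) ≤ 2 ^ E :=
        nat_add_dvd_le (hDdvd j i) (pow_dvd_pow 2 (Nat.sub_le _ _)) (hDlt j i)
      have : ((D j i + 2 ^ (E - e j) : ℕ) : ℝ) * δ ≤ ((2 ^ E : ℕ) : ℝ) * δ :=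
        mul_le_mul_of_nonneg_right (by exact_mod_cast Nat.cast_le.mpr hnle) hδ.le
      push_cast at this ⊢
      linarith
  refine ⟨t, ?_, ?_⟩
  · -- pairwise disjointness
    have key : ∀ j j', rel j j' →
        Disjoint (interior (cube (t j) (s j))) (interior (cube (t j') (s j'))) := by
      intro j j' hjj'
      by_cases hmm : m j = m j'
      · -- same storage cube: use Morton separation
        have hidx_eq : idx j = idx j' := by
          simp only [hidx]
          congr 1
          exact Fin.mk_eq_mk.mpr hmm
        have hrr : r j + L j ≤ r j' := by
          have h1 := hsep hjj'
          have d1 := hdecomp j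
          have d2 := hdecomp j'
          rw [hmm] at d1
          omega
        have hee : e j ≤ e j' := hrel_e hjj'
        have hcE : E - e j' ≤ E - e j := by omega
        have hLcn : L j = 2 ^ ((E - e j) * n) := rfl
        have hLpos : 0 < L j := hL1 j
        have hq12 : r j / L j + 1 ≤ r j' / L j := by
          rw [← Nat.add_div_right _ hLpos]
          exact Nat.div_le_div_right hrr
        have hpow_split : 2 ^ ((E - (E - e j)) * n) * 2 ^ ((E - e j) * n) = B := by
          rw [hB, ← pow_add]
          congr 1
          have := heE j
          have h1 : E - (E - e j) = e j := by omega
          rw [h1]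
          have h2 : e j * n + (E - e j) * n = E * n := by
            rw [← Nat.add_mul]
            congr 1
            omega
          exact h2
        have hqlt : r j / L j < 2 ^ ((E - (E - e j)) * n) := by
          rw [hLcn, Nat.div_lt_iff_lt_mul (Nat.pow_pos (by norm_num)), hpow_split]
          exact hrB j
        have hqlt' : r j' / L j < 2 ^ ((E - (E - e j)) * n) := by
          rw [hLcn, Nat.div_lt_iff_lt_mul (Nat.pow_pos (by norm_num)), hpow_split]
          exact hrB j'
        have hex : ∃ i0, i0 < n ∧
            mort (E - (E - e j)) n (r j / 2 ^ ((E - e j) * n)) i0 ≠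
              mort (E - (E - e j)) n (r j' / 2 ^ ((E - e j) * n)) i0 := by
          by_contra hcon
          push_neg at hcon
          have := mort_inj hn (by rw [← hLcn]; exact hqlt) (by rw [← hLcn]; exact hqlt')
            (fun i0 hi0 => hcon i0 hi0)
          rw [← hLcn] at this
          omega
        obtain ⟨i0, hi0, hneq⟩ := hex
        set i : Fin n := ⟨i0, hi0⟩ with hi
        have hdivneq : D j i / 2 ^ (E - e j) ≠ D j' i / 2 ^ (E - e j) := by
          simp only [hD]
          rw [mort_div E n (r j) i0 (E - e j), mort_div E n (r j') i0 (E - e j)]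
          exact hneq
        have ha1 : 2 ^ (E - e j) ∣ D j i := hDdvd j i
        have ha2 : 2 ^ (E - e j') ∣ D j' i := hDdvd j' i
        have hc2 : (2:ℕ) ^ (E - e j') ∣ 2 ^ (E - e j) := pow_dvd_pow 2 hcE
        obtain ⟨u, hu⟩ := ha1
        have hudiv : D j i / 2 ^ (E - e j) = u := by
          rw [hu, Nat.mul_div_cancel_left _ (Nat.pow_pos (by norm_num))]
        rcases lt_trichotomy (D j i / 2 ^ (E - e j)) (D j' i / 2 ^ (E - e j)) with hlt | heq2 | hgt
        · -- t j i + s j ≤ t j' i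
          have hnle : D j i + 2 ^ (E - e j) ≤ D j' i := by
            rw [hudiv] at hlt
            have h5 : (u + 1) * 2 ^ (E - e j) ≤ D j' i := (Nat.le_div_iff_mul_le
              (Nat.pow_pos (n := E - e j) (by norm_num))).mp hlt
            calc D j i + 2 ^ (E - e j) = (u + 1) * 2 ^ (E - e j) := by rw [hu]; ring
              _ ≤ D j' i := h5
          apply cube_disjoint (i := i)
          simp only [ht, Pi.add_apply, hidx_eq]
          rw [hsj j]
          have hcast : ((D j i + 2 ^ (E - e j) : ℕ) : ℝ) * δ ≤ ((D j' i : ℕ) : ℝ) * δ :=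
            mul_le_mul_of_nonneg_right (by exact_mod_cast Nat.cast_le.mpr hnle) hδ.le
          push_cast at hcast ⊢
          linarith
        · exact absurd heq2 hdivneq
        · -- t j' i + s j' ≤ t j i
          have hlt2 : D j' i < D j i := by
            rw [hudiv] at hgt
            have h5 : D j' i < u * 2 ^ (E - e j) := (Nat.div_lt_iff_lt_mul
              (Nat.pow_pos (n := E - e j) (by norm_num))).mp hgt
            calc D j' i < u * 2 ^ (E - e j) := h5
              _ = D j i := by rw [hu]; ring
          have hnle : D j' i + 2 ^ (E - e j') ≤ D j i :=
            nat_add_dvd_le ha2 (hc2.trans ⟨u, hu⟩) hlt2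
          apply Disjoint.symm
          apply cube_disjoint (i := i)
          simp only [ht, Pi.add_apply, hidx_eq]
          rw [hsj j']
          have hcast : ((D j' i + 2 ^ (E - e j') : ℕ) : ℝ) * δ ≤ ((D j i : ℕ) : ℝ) * δ :=
            mul_le_mul_of_nonneg_right (by exact_mod_cast Nat.cast_le.mpr hnle) hδ.le
          push_cast at hcast ⊢
          linarith
      · -- different storage cubes
        have hne : idx j ≠ idx j' := by
          simp only [hidx]
          intro hc
          exact hmm (congrArg Fin.val (eι.symm.injective hc))
        exact (hdisj hne).mono (interior_mono (hsub j)) (interior_mono (hsub j'))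
    intro j j' hne
    rcases hrel_tri hne with h | h
    · exact key j j' h
    · exact (key j' j h).symm
  · -- containment
    exact Set.iUnion_subset fun j =>
      (hsub j).trans (Set.subset_iUnion (fun i => cube (v i) ((2:ℝ) ^ (-ℓ))) (idx j))
end

section
/- Let Φ : 𝒬 → 𝒬 be a C¹ diffeomorphism of the closed unit cube onto itself with Φ = id in a neighborhood of ∂𝒬. Then there is a sequence of C^∞ diffeomorphisms Φ_k : 𝒬 → 𝒬, each equal to the identity in a neighborhood of ∂𝒬, converging to Φ in the uniform metric d(Φ,Ψ) = ‖Φ−Ψ‖_∞ + ‖Φ⁻¹−Ψ⁻¹‖_∞. -/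
open Metric Set Function MeasureTheory Filter
open scoped Convolution Topology Pointwise

section Aux1

variable {d : ℕ}

local notation "E" => EuclideanSpace ℝ (Fin d)

lemma smoothApprox (g : E → E) (hg : ContDiff ℝ 1 g) (hgsupp : HasCompactSupport g)
    (S : Set E) (hS : IsOpen S) (hgS : tsupport g ⊆ S) {η : ℝ} (hη : 0 < η) :
    ∃ h : E → E, ContDiff ℝ (⊤ : ℕ∞) h ∧ tsupport h ⊆ S ∧
      (∀ x, dist (h x) (g x) ≤ η) ∧ (∀ x, dist (fderiv ℝ h x) (fderiv ℝ g x) ≤ η) := by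
  obtain ⟨ε₀, hε₀, hthick⟩ := hgsupp.exists_thickening_subset_open hS hgS
  have hgc : Continuous g := hg.continuous
  have hg'c : Continuous (fderiv ℝ g) := hg.continuous_fderiv one_ne_zero
  have hg'supp : HasCompactSupport (fderiv ℝ g) := hgsupp.fderiv (𝕜 := ℝ)
  have hgu : UniformContinuous g := hgsupp.uniformContinuous_of_continuous hgc
  have hg'u : UniformContinuous (fderiv ℝ g) := hg'supp.uniformContinuous_of_continuous hg'c
  obtain ⟨δ₁, hδ₁, hδ₁'⟩ := Metric.uniformContinuous_iff.1 hgu η hη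
  obtain ⟨δ₂, hδ₂, hδ₂'⟩ := Metric.uniformContinuous_iff.1 hg'u η hη
  set ε : ℝ := min (ε₀ / 2) (min δ₁ δ₂) with hε
  have hεpos : 0 < ε := lt_min (by linarith) (lt_min hδ₁ hδ₂)
  have hεδ₁ : ε ≤ δ₁ := (min_le_right _ _).trans (min_le_left _ _)
  have hεδ₂ : ε ≤ δ₂ := (min_le_right _ _).trans (min_le_right _ _)
  have hεε₀ : ε < ε₀ := lt_of_le_of_lt (min_le_left _ _) (by linarith)
  set φ : ContDiffBump (0 : E) := ⟨ε / 2, ε, half_pos hεpos, half_lt_self hεpos⟩ with hφ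
  have hrOut : φ.rOut = ε := rfl
  set h : E → E := (φ.normed volume) ⋆[ContinuousLinearMap.lsmul ℝ ℝ, volume] g with hh
  have hloc : LocallyIntegrable (φ.normed volume) volume :=
    (φ.integrable_normed).locallyIntegrable
  refine ⟨h, ?_, ?_, ?_, ?_⟩
  · exact (φ.hasCompactSupport_normed).contDiff_convolution_left _ φ.contDiff_normed
      hgc.locallyIntegrable
  · have h1 : support h ⊆ support (φ.normed volume) + support g :=
      support_convolution_subset _
    have h2 : support (φ.normed volume) + support g ⊆ Metric.thickening ε (tsupport g) := by
      rw [φ.support_normed_eq]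
      rintro z ⟨a, ha, b, hb, rfl⟩
      rw [Metric.mem_thickening_iff]
      refine ⟨b, subset_tsupport g hb, ?_⟩
      rw [hrOut] at ha
      calc dist (a + b) b = ‖a‖ := by simp [dist_eq_norm]
        _ < ε := by simpa using mem_ball_iff_norm.1 ha
    have h3 : tsupport h ⊆ Metric.cthickening ε (tsupport g) :=
      (closure_mono (h1.trans h2)).trans (Metric.closure_thickening_subset_cthickening _ _)
    exact h3.trans ((Metric.cthickening_subset_thickening' hε₀ hεε₀ _).trans hthick)
  · intro x
    refine φ.dist_normed_convolution_le hgc.aestronglyMeasurable fun y hy => ?_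
    exact le_of_lt (hδ₁' (lt_of_lt_of_le (mem_ball.1 hy) (hrOut.le.trans hεδ₁)))
  · intro x
    have key : HasFDerivAt h
        (((φ.normed volume) ⋆[(ContinuousLinearMap.lsmul ℝ ℝ).precompR (EuclideanSpace ℝ (Fin d)), volume] (fderiv ℝ g)) x) x :=
      hgsupp.hasFDerivAt_convolution_right _ hloc hg x
    have e1 : ((ContinuousLinearMap.lsmul ℝ ℝ).precompR (EuclideanSpace ℝ (Fin d)) :
        ℝ →L[ℝ] (E →L[ℝ] E) →L[ℝ] (E →L[ℝ] E)) = ContinuousLinearMap.lsmul ℝ ℝ := by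
      ext s T v
      simp [ContinuousLinearMap.precompR_apply]
    rw [key.fderiv, e1]
    refine φ.dist_normed_convolution_le hg'c.aestronglyMeasurable fun y hy => ?_
    exact le_of_lt (hδ₂' (lt_of_lt_of_le (mem_ball.1 hy) (hrOut.le.trans hεδ₂)))

lemma injModulus {f : E → E} (hf : Continuous f) {C : Set E} (hC : IsCompact C)
    (hinj : Set.InjOn f C) {t : ℝ} (ht : 0 < t) :
    ∃ δ > 0, ∀ a ∈ C, ∀ b ∈ C, dist (f a) (f b) < δ → dist a b < t := by
  set S : Set (EuclideanSpace ℝ (Fin d) × EuclideanSpace ℝ (Fin d)) :=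
    (C ×ˢ C) ∩ {p | t ≤ dist p.1 p.2} with hS
  have hSclosed : IsClosed S :=
    (hC.isClosed.prod hC.isClosed).inter
      (isClosed_le continuous_const (continuous_fst.dist continuous_snd))
  have hScpt : IsCompact S := (hC.prod hC).of_isClosed_subset hSclosed inter_subset_left
  rcases S.eq_empty_or_nonempty with hemp | hne
  · refine ⟨1, one_pos, fun a ha b hb _ => ?_⟩
    by_contra hcon
    have hmem : (a, b) ∈ S := ⟨⟨ha, hb⟩, not_lt.1 hcon⟩
    rw [hemp] at hmem
    exact hmem
  · obtain ⟨p₀, hp₀S, hp₀min⟩ := hScpt.exists_isMinOn hne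
      ((hf.comp continuous_fst).dist (hf.comp continuous_snd)).continuousOn
    have hδpos : 0 < dist (f p₀.1) (f p₀.2) := by
      rw [dist_pos]
      intro heq
      have := hinj hp₀S.1.1 hp₀S.1.2 heq
      have ht' : t ≤ dist p₀.1 p₀.2 := hp₀S.2
      rw [this, dist_self] at ht'
      linarith
    refine ⟨dist (f p₀.1) (f p₀.2), hδpos, fun a ha b hb hd => ?_⟩
    by_contra hcon
    have hmem : (a, b) ∈ S := ⟨⟨ha, hb⟩, not_lt.1 hcon⟩
    exact absurd (hp₀min hmem) (not_le.2 hd)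

end Aux1

section Aux2

variable {n : ℕ}

local notation "E" => EuclideanSpace ℝ (Fin (n + 2))

/-- A smooth self-map of Euclidean space with everywhere invertible derivative, equal to the
identity outside a compact set and injective, is a diffeomorphism. -/
lemma existsEquiv (F : E → E) (hF : ContDiff ℝ (⊤ : ℕ∞) F)
    (hunit : ∀ x, IsUnit (fderiv ℝ F x)) {K : Set E} (hK : IsCompact K)
    (hKid : ∀ x ∉ K, F x = x) (hinj : Function.Injective F) :
    ∃ e : (EuclideanSpace ℝ (Fin (n + 2))) ≃ (EuclideanSpace ℝ (Fin (n + 2))),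
      (∀ x, e x = F x) ∧ ContDiff ℝ (⊤ : ℕ∞) ⇑e ∧ ContDiff ℝ (⊤ : ℕ∞) ⇑e.symm := by
  have hFc : Continuous F := hF.continuous
  -- strict derivative with an equiv derivative at every point
  have hstrict : ∀ x : E, HasStrictFDerivAt F
      (((ContinuousLinearEquiv.unitsEquiv ℝ (EuclideanSpace ℝ (Fin (n+2))) (hunit x).unit) :
        E ≃L[ℝ] E) : E →L[ℝ] E) x := by
    intro x
    have hcoe : (((ContinuousLinearEquiv.unitsEquiv ℝ (EuclideanSpace ℝ (Fin (n+2)))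
        (hunit x).unit) : E ≃L[ℝ] E) : E →L[ℝ] E) = fderiv ℝ F x := by
      ext v
      rw [ContinuousLinearEquiv.coe_coe, ContinuousLinearEquiv.unitsEquiv_apply]
      rw [IsUnit.unit_spec]
    rw [hcoe]
    exact (hF.contDiffAt).hasStrictFDerivAt (by simp)
  -- surjectivity
  have hfixed : IsClosed {x : E | F x = x} := isClosed_eq hFc continuous_id
  have hrange : range F = F '' K ∪ Kᶜ := by
    apply Set.eq_of_subset_of_subset
    · rintro _ ⟨x, rfl⟩
      by_cases hx : x ∈ K
      · exact Or.inl ⟨x, hx, rfl⟩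
      · rw [hKid x hx]; exact Or.inr hx
    · rintro y (⟨x, hx, rfl⟩ | hy)
      · exact ⟨x, rfl⟩
      · exact ⟨y, hKid y hy⟩
  have hopen : IsOpen (range F) := by
    rw [isOpen_iff_mem_nhds]
    rintro _ ⟨x, rfl⟩
    rw [← (hstrict x).map_nhds_eq_of_equiv, mem_map]
    exact univ_mem' fun z => ⟨z, rfl⟩
  have hclosed : IsClosed (range F) := by
    rw [← closure_subset_iff_isClosed]
    rw [hrange, closure_union]
    have h1 : closure (F '' K) = F '' K := (hK.image hFc).isClosed.closure_eq
    have h2 : closure (Kᶜ : Set E) ⊆ range F := by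
      have hsub : (Kᶜ : Set E) ⊆ {x : E | F x = x} := fun x hx => hKid x hx
      intro x hx
      have : F x = x := (closure_minimal hsub hfixed hx :)
      exact ⟨x, this⟩
    rw [h1, ← hrange]
    exact union_subset (fun y hy => hrange ▸ Or.inl hy) h2
  have hsurj : Function.Surjective F := by
    have : range F = univ := by
      refine IsClopen.eq_univ ⟨hclosed, hopen⟩ ⟨F 0, ⟨0, rfl⟩⟩
    exact range_eq_univ.1 this
  -- the equivalence
  refine ⟨Equiv.ofBijective F ⟨hinj, hsurj⟩, fun x => rfl, hF, ?_⟩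
  rw [contDiff_iff_contDiffAt]
  intro y
  set e := Equiv.ofBijective F ⟨hinj, hsurj⟩ with he
  have hy : F (e.symm y) = y := e.apply_symm_apply y
  set x := e.symm y with hx
  have hFat : ContDiffAt ℝ (⊤ : ℕ∞) F x := hF.contDiffAt
  have hfd : HasFDerivAt F
      (((ContinuousLinearEquiv.unitsEquiv ℝ (EuclideanSpace ℝ (Fin (n+2))) (hunit x).unit) :
        E ≃L[ℝ] E) : E →L[ℝ] E) x := (hstrict x).hasFDerivAt
  have hle : ((⊤ : ℕ∞) : WithTop ℕ∞) ≠ 0 := by simp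
  have hloc : ContDiffAt ℝ (⊤ : ℕ∞) (hFat.localInverse hfd hle) (F x) :=
    hFat.to_localInverse hfd hle
  have hev : ∀ᶠ z in 𝓝 (F x), F ((hFat.localInverse hfd hle) z) = z :=
    (hFat.hasStrictFDerivAt' hfd hle).eventually_right_inverse
  have hev2 : (⇑e.symm) =ᶠ[𝓝 (F x)] (hFat.localInverse hfd hle) := by
    filter_upwards [hev] with z hz
    have : F (e.symm z) = z := e.apply_symm_apply z
    exact hinj (this.trans hz.symm)
  rw [← hy]
  exact hloc.congr_of_eventuallyEq hev2

lemma approxStep (Q : Set E) (hQcpt : IsCompact Q)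
    (W : E → E) (hW : ContDiff ℝ 1 W) (hWunit : ∀ x, IsUnit (fderiv ℝ W x))
    (hWinj : Function.Injective W) (hWQ : Set.MapsTo W Q Q)
    (hsupp : tsupport (fun x => W x - x) ⊆ interior Q)
    {η : ℝ} (hη : 0 < η) :
    ∃ e : (EuclideanSpace ℝ (Fin (n + 2))) ≃ (EuclideanSpace ℝ (Fin (n + 2))),
      ContDiff ℝ (⊤ : ℕ∞) ⇑e ∧ ContDiff ℝ (⊤ : ℕ∞) ⇑e.symm ∧ Set.BijOn ⇑e Q Q ∧
      (∃ V, IsOpen V ∧ frontier Q ⊆ V ∧ ∀ x ∈ V, e x = x) ∧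
      (∀ x ∈ Q, dist (e x) (W x) ≤ η) ∧
      (∀ y ∈ Q, ∀ b ∈ Q, W b = y → dist (e.symm y) b ≤ η) := by
  classical
  set g : EuclideanSpace ℝ (Fin (n+2)) → EuclideanSpace ℝ (Fin (n+2)) :=
    fun x => W x - x with hgdef
  have hgC1 : ContDiff ℝ 1 g := hW.sub contDiff_id
  have hgts : tsupport g ⊆ interior Q := hsupp
  have hgcs : HasCompactSupport g :=
    hQcpt.of_isClosed_subset (isClosed_tsupport _) (hgts.trans interior_subset)
  have hWeq : W = fun x => x + g x := funext fun x => by simp [hgdef]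
  have hgdiff : Differentiable ℝ g := hgC1.differentiable one_ne_zero
  have hWd : ∀ z, fderiv ℝ W z = ContinuousLinearMap.id ℝ (EuclideanSpace ℝ (Fin (n+2)))
      + fderiv ℝ g z := by
    intro z
    conv_lhs => rw [hWeq]
    rw [fderiv_fun_add differentiableAt_fun_id (hgdiff z), fderiv_id']

  -- continuity of the derivative of `W` and bound on the inverse
  have hWc' : Continuous (fderiv ℝ W) := hW.continuous_fderiv one_ne_zero
  have hcont : ContinuousOn (fun x => ‖Ring.inverse (fderiv ℝ W x)‖) Q := by
    intro x _
    have h1 := NormedRing.inverse_continuousAt (hWunit x).unit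
    rw [(hWunit x).unit_spec] at h1
    exact ((h1.comp hWc'.continuousAt).norm).continuousWithinAt
  obtain ⟨M₀, hM₀⟩ := hQcpt.exists_bound_of_continuousOn hcont
  set M : ℝ := max M₀ 1 with hMdef
  have hM1 : (1 : ℝ) ≤ M := le_max_right _ _
  have hMpos : (0 : ℝ) < M := lt_of_lt_of_le one_pos hM1
  have hMbound : ∀ x, ‖Ring.inverse (fderiv ℝ W x)‖ ≤ M := by
    intro x
    by_cases hx : x ∈ Q
    · calc ‖Ring.inverse (fderiv ℝ W x)‖
          ≤ |‖Ring.inverse (fderiv ℝ W x)‖| := le_abs_self _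
        _ = ‖‖Ring.inverse (fderiv ℝ W x)‖‖ := (Real.norm_eq_abs _).symm
        _ ≤ M₀ := hM₀ x hx
        _ ≤ M := le_max_left _ _
    · have hx' : x ∉ tsupport g := fun hc => hx (interior_subset (hgts hc))
      have hev : W =ᶠ[nhds x] id := by
        filter_upwards [(isClosed_tsupport g).isOpen_compl.mem_nhds hx'] with z hz
        have hgz : g z = 0 := image_eq_zero_of_notMem_tsupport hz
        calc W z = z + g z := by rw [hWeq]
          _ = z := by rw [hgz, add_zero]
      have : fderiv ℝ W x = 1 := by
        rw [hev.fderiv_eq]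
        exact fderiv_id.trans (ContinuousLinearMap.one_def).symm
      rw [this, Ring.inverse_one]
      have hid1 : ‖(1 : EuclideanSpace ℝ (Fin (n+2)) →L[ℝ] EuclideanSpace ℝ (Fin (n+2)))‖ ≤ 1 := by
        rw [ContinuousLinearMap.one_def]
        exact ContinuousLinearMap.norm_id_le
      exact hid1.trans hM1
  have hlow : ∀ x (v : EuclideanSpace ℝ (Fin (n+2))), ‖v‖ ≤ M * ‖fderiv ℝ W x v‖ := by
    intro x v
    set u := (hWunit x).unit with hu
    have hus : (u : EuclideanSpace ℝ (Fin (n+2)) →L[ℝ] EuclideanSpace ℝ (Fin (n+2)))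
        = fderiv ℝ W x := (hWunit x).unit_spec
    have h1 : v = (↑u⁻¹ : EuclideanSpace ℝ (Fin (n+2)) →L[ℝ] EuclideanSpace ℝ (Fin (n+2)))
        (fderiv ℝ W x v) := by
      rw [← hus, ← ContinuousLinearMap.mul_apply, u.inv_mul, ContinuousLinearMap.one_apply]
    calc ‖v‖ = ‖(↑u⁻¹ : EuclideanSpace ℝ (Fin (n+2)) →L[ℝ] EuclideanSpace ℝ (Fin (n+2)))
          (fderiv ℝ W x v)‖ := by rw [← h1]
      _ ≤ ‖(↑u⁻¹ : EuclideanSpace ℝ (Fin (n+2)) →L[ℝ] EuclideanSpace ℝ (Fin (n+2)))‖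
          * ‖fderiv ℝ W x v‖ := ContinuousLinearMap.le_opNorm _ _
      _ ≤ M * ‖fderiv ℝ W x v‖ := by
          apply mul_le_mul_of_nonneg_right _ (norm_nonneg _)
          rw [← Ring.inverse_unit u]
          exact hu ▸ hMbound x
  have huinv_pos : ∀ x, (0:ℝ) <
      ‖((((hWunit x).unit)⁻¹ : (EuclideanSpace ℝ (Fin (n+2)) →L[ℝ]
        EuclideanSpace ℝ (Fin (n+2)))ˣ) : EuclideanSpace ℝ (Fin (n+2)) →L[ℝ]
        EuclideanSpace ℝ (Fin (n+2)))‖ := by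
    intro x
    set B : EuclideanSpace ℝ (Fin (n+2)) →L[ℝ] EuclideanSpace ℝ (Fin (n+2)) :=
      ((((hWunit x).unit)⁻¹ : (EuclideanSpace ℝ (Fin (n+2)) →L[ℝ]
        EuclideanSpace ℝ (Fin (n+2)))ˣ) : EuclideanSpace ℝ (Fin (n+2)) →L[ℝ]
        EuclideanSpace ℝ (Fin (n+2))) with hB
    rcases eq_or_lt_of_le (norm_nonneg B) with h0 | h
    · exfalso
      have hz : B = 0 := norm_eq_zero.1 h0.symm
      have h1 : (1 : EuclideanSpace ℝ (Fin (n+2)) →L[ℝ] EuclideanSpace ℝ (Fin (n+2)))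
          = 0 := by
        have h2 := ((hWunit x).unit).inv_mul
        rw [← hB] at h2
        rw [← h2, hz, zero_mul]
      have hv : (0 : EuclideanSpace ℝ (Fin (n+2))) ≠ EuclideanSpace.single 0 (1:ℝ) := by
        intro hc
        have h00 := congrArg (fun v => v (0 : Fin (n+2))) hc
        rw [EuclideanSpace.single_apply] at h00
        simp at h00
      apply hv
      calc (0 : EuclideanSpace ℝ (Fin (n+2)))
          = (0 : EuclideanSpace ℝ (Fin (n+2)) →L[ℝ] EuclideanSpace ℝ (Fin (n+2)))
            (EuclideanSpace.single 0 (1:ℝ)) := by simp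
        _ = (1 : EuclideanSpace ℝ (Fin (n+2)) →L[ℝ] EuclideanSpace ℝ (Fin (n+2)))
            (EuclideanSpace.single 0 (1:ℝ)) := by rw [h1]
        _ = EuclideanSpace.single 0 (1:ℝ) := ContinuousLinearMap.one_apply _
    · exact h
  -- uniform continuity of the derivative of W
  have hUCg : UniformContinuous (fderiv ℝ g) :=
    (hgcs.fderiv (𝕜 := ℝ)).uniformContinuous_of_continuous (hgC1.continuous_fderiv one_ne_zero)
  have hUCW : UniformContinuous (fderiv ℝ W) := by
    have : (fderiv ℝ W) = fun z => ContinuousLinearMap.id ℝ (EuclideanSpace ℝ (Fin (n+2)))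
        + fderiv ℝ g z := funext hWd
    rw [this]
    exact uniformContinuous_const.add hUCg
  have h4M : (0:ℝ) < 1 / (4 * M) := by positivity
  obtain ⟨δ₃, hδ₃, hδ₃'⟩ := Metric.uniformContinuous_iff.1 hUCW (1 / (4 * M)) h4M
  set t : ℝ := δ₃ / 2 with htdef
  have ht : 0 < t := by positivity
  -- global injectivity moduli
  set Q₁ : Set (EuclideanSpace ℝ (Fin (n+2))) := Metric.cthickening 1 Q with hQ₁def
  have hQ₁cpt : IsCompact Q₁ := hQcpt.cthickening
  have hQQ₁ : Q ⊆ Q₁ := Metric.self_subset_cthickening Q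
  obtain ⟨δ₁, hδ₁, hδ₁'⟩ := injModulus hW.continuous hQ₁cpt (hWinj.injOn) ht
  obtain ⟨δ₂, hδ₂, hδ₂'⟩ := injModulus hW.continuous hQcpt (hWinj.injOn) hη
  -- the smoothing parameter
  set η' : ℝ := min (min 1 η) (min (1 / (4 * M)) (min (δ₁ / 3) (δ₂ / 2))) with hη'def
  have hη'pos : 0 < η' :=
    lt_min (lt_min one_pos hη) (lt_min h4M (lt_min (by positivity) (by positivity)))
  have hη'1 : η' ≤ 1 := (min_le_left _ _).trans (min_le_left _ _)
  have hη'η : η' ≤ η := (min_le_left _ _).trans (min_le_right _ _)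
  have hη'M : η' ≤ 1 / (4 * M) := (min_le_right _ _).trans (min_le_left _ _)
  have hη'δ₁ : η' ≤ δ₁ / 3 := (min_le_right _ _).trans ((min_le_right _ _).trans (min_le_left _ _))
  have hη'δ₂ : η' ≤ δ₂ / 2 := (min_le_right _ _).trans ((min_le_right _ _).trans (min_le_right _ _))
  -- mollify
  obtain ⟨h, hhsm, hhts, hh0, hh1⟩ :=
    smoothApprox g hgC1 hgcs (interior Q) isOpen_interior hgts hη'pos
  have hhdiff : Differentiable ℝ h := hhsm.differentiable (by simp)
  set F : EuclideanSpace ℝ (Fin (n+2)) → EuclideanSpace ℝ (Fin (n+2)) :=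
    fun x => x + h x with hFdef
  have hFsm : ContDiff ℝ (⊤ : ℕ∞) F := contDiff_id.add hhsm
  have hF' : ∀ z, fderiv ℝ F z = ContinuousLinearMap.id ℝ (EuclideanSpace ℝ (Fin (n+2)))
      + fderiv ℝ h z := by
    intro z
    have e0 : fderiv ℝ F z = fderiv ℝ (fun x => x + h x) z := rfl
    rw [e0, fderiv_fun_add differentiableAt_fun_id (hhdiff z), fderiv_id']
  have hdist0 : ∀ z, dist (F z) (W z) ≤ η' := by
    intro z
    have hWz : W z = z + g z := by rw [hWeq]
    have e1 : dist (F z) (W z) = dist (h z) (g z) := by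
      rw [dist_eq_norm, dist_eq_norm]
      congr 1
      show z + h z - W z = h z - g z
      rw [hWz]
      exact add_sub_add_left_eq_sub (h z) (g z) z
    rw [e1]; exact hh0 z
  have hdist1 : ∀ z, ‖fderiv ℝ F z - fderiv ℝ W z‖ ≤ η' := by
    intro z
    rw [hF' z, hWd z, add_sub_add_left_eq_sub, ← dist_eq_norm]
    exact hh1 z
  -- invertibility of the derivative of F
  have hFunit : ∀ x, IsUnit (fderiv ℝ F x) := by
    intro x
    set u := (hWunit x).unit with hu
    have hus : (u : EuclideanSpace ℝ (Fin (n+2)) →L[ℝ] EuclideanSpace ℝ (Fin (n+2)))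
        = fderiv ℝ W x := (hWunit x).unit_spec
    have hbound : ‖(↑u⁻¹ : EuclideanSpace ℝ (Fin (n+2)) →L[ℝ]
        EuclideanSpace ℝ (Fin (n+2)))‖ ≤ M := by
      rw [← Ring.inverse_unit u]
      exact hu ▸ hMbound x
    have hnear : ‖fderiv ℝ F x - (u : EuclideanSpace ℝ (Fin (n+2)) →L[ℝ]
        EuclideanSpace ℝ (Fin (n+2)))‖ < ‖(↑u⁻¹ : EuclideanSpace ℝ (Fin (n+2)) →L[ℝ]
        EuclideanSpace ℝ (Fin (n+2)))‖⁻¹ := by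
      calc ‖fderiv ℝ F x - (u : EuclideanSpace ℝ (Fin (n+2)) →L[ℝ]
            EuclideanSpace ℝ (Fin (n+2)))‖ = ‖fderiv ℝ F x - fderiv ℝ W x‖ := by rw [hus]
        _ ≤ η' := hdist1 x
        _ ≤ 1 / (4 * M) := hη'M
        _ < 1 / M := one_div_lt_one_div_of_lt hMpos (by linarith)
        _ = M⁻¹ := one_div M
        _ ≤ ‖(↑u⁻¹ : EuclideanSpace ℝ (Fin (n+2)) →L[ℝ]
            EuclideanSpace ℝ (Fin (n+2)))‖⁻¹ := inv_anti₀ (huinv_pos x) hbound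
    exact (Units.ofNearby u (fderiv ℝ F x) hnear).isUnit
  -- F is the identity off the support of h
  have hhtsQ : tsupport h ⊆ Q := hhts.trans interior_subset
  have hTcpt : IsCompact (tsupport h) :=
    hQcpt.of_isClosed_subset (isClosed_tsupport _) hhtsQ
  have hFid : ∀ x ∉ tsupport h, F x = x := by
    intro x hx
    show x + h x = x
    rw [image_eq_zero_of_notMem_tsupport hx, add_zero]
  -- injectivity of F
  have haux : ∀ x y, x ∈ tsupport h → F x = F y → x = y := by
    intro x y hxT hFxy
    have hxQ : x ∈ Q := interior_subset (hhts hxT)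
    have hWxQ : W x ∈ Q := hWQ hxQ
    have hyQ₁ : y ∈ Q₁ := by
      by_cases hyQ : y ∈ Q₁
      · exact hyQ
      · exfalso
        have hyQ' : y ∉ Q := fun hc => hyQ (hQQ₁ hc)
        have hyT : y ∉ tsupport h := fun hc => hyQ' (hhtsQ hc)
        have hFy : F y = y := hFid y hyT
        have hdy : dist y (W x) ≤ 1 := by
          calc dist y (W x) = dist (F x) (W x) := by rw [← hFy, ← hFxy]
            _ ≤ η' := hdist0 x
            _ ≤ 1 := hη'1
        exact hyQ (Metric.mem_cthickening_of_dist_le y (W x) 1 Q hWxQ hdy)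
    have hxyt : dist x y < t := by
      apply hδ₁' x (hQQ₁ hxQ) y hyQ₁
      calc dist (W x) (W y) ≤ dist (W x) (F x) + dist (F x) (W y) := dist_triangle _ _ _
        _ = dist (W x) (F x) + dist (F y) (W y) := by rw [hFxy]
        _ ≤ η' + η' := add_le_add ((dist_comm (W x) (F x)) ▸ hdist0 x) (hdist0 y)
        _ < δ₁ := by linarith [hη'δ₁, hδ₁]
    -- local estimate on the closed ball
    set A := fderiv ℝ W x with hA
    have hball : ∀ z ∈ Metric.closedBall x t, ‖fderiv ℝ F z - A‖ ≤ η' + 1 / (4 * M) := by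
      intro z hz
      have h1 : ‖fderiv ℝ F z - fderiv ℝ W z‖ ≤ η' := hdist1 z
      have h2 : ‖fderiv ℝ W z - A‖ ≤ 1 / (4 * M) := by
        rw [hA, ← dist_eq_norm]
        exact le_of_lt (hδ₃' (lt_of_le_of_lt (Metric.mem_closedBall.1 hz) (by linarith)))
      calc ‖fderiv ℝ F z - A‖ = ‖(fderiv ℝ F z - fderiv ℝ W z) + (fderiv ℝ W z - A)‖ := by
            rw [sub_add_sub_cancel]
        _ ≤ ‖fderiv ℝ F z - fderiv ℝ W z‖ + ‖fderiv ℝ W z - A‖ := norm_add_le _ _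
        _ ≤ η' + 1 / (4 * M) := add_le_add h1 h2
    have hmv : ‖F y - F x - A (y - x)‖ ≤ (η' + 1 / (4 * M)) * ‖y - x‖ := by
      apply (convex_closedBall x t).norm_image_sub_le_of_norm_fderiv_le'
        (fun z _ => (hFsm.differentiable (by simp)) z) hball
        (Metric.mem_closedBall_self ht.le)
      exact Metric.mem_closedBall.2 (le_of_lt ((dist_comm x y) ▸ hxyt))
    have hAyx : ‖A (y - x)‖ ≤ (η' + 1 / (4 * M)) * ‖y - x‖ := by
      rw [hFxy] at hmv
      rwa [sub_self, zero_sub, norm_neg] at hmv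
    have hyx : ‖y - x‖ ≤ M * ‖A (y - x)‖ := hlow x (y - x)
    have hsmall : η' + 1 / (4 * M) ≤ 1 / (2 * M) := by
      have : 1 / (4 * M) + 1 / (4 * M) = 1 / (2 * M) := by field_simp; ring
      linarith [hη'M]
    have hfinal : ‖y - x‖ ≤ 0 := by
      have hM2 : M * (1 / (2 * M)) = 1 / 2 := by
        field_simp
      have h5 : ‖A (y - x)‖ ≤ (1 / (2*M)) * ‖y - x‖ :=
        hAyx.trans (mul_le_mul_of_nonneg_right hsmall (norm_nonneg _))
      have h6 : ‖y - x‖ ≤ M * ((1 / (2*M)) * ‖y - x‖) :=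
        hyx.trans (mul_le_mul_of_nonneg_left h5 hMpos.le)
      rw [← mul_assoc, hM2] at h6
      linarith
    have : y - x = 0 := norm_le_zero_iff.1 hfinal
    exact (sub_eq_zero.1 this).symm
  have hFinj : Function.Injective F := by
    intro x y hxy
    by_cases hxT : x ∈ tsupport h
    · exact haux x y hxT hxy
    by_cases hyT : y ∈ tsupport h
    · exact (haux y x hyT hxy.symm).symm
    · rw [hFid x hxT, hFid y hyT] at hxy; exact hxy
  -- global smooth inverse
  obtain ⟨e, he, hesm, hesm'⟩ := existsEquiv F hFsm hFunit hTcpt hFid hFinj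
  have hecoe : ⇑e = F := funext he
  have hFbij : Function.Bijective F :=
    ⟨hFinj, fun y => ⟨e.symm y, by rw [← he (e.symm y)]; exact e.apply_symm_apply y⟩⟩
  -- F preserves Q
  have hcompl : F '' Qᶜ = Qᶜ := by
    apply Set.eq_of_subset_of_subset
    · rintro _ ⟨x, hx, rfl⟩
      rw [hFid x (fun hc => hx (hhtsQ hc))]
      exact hx
    · intro y hy
      exact ⟨y, hy, hFid y (fun hc => hy (hhtsQ hc))⟩
  have himg : F '' Q = Q := by
    have h1 : F '' Qᶜ = (F '' Q)ᶜ := Set.image_compl_eq hFbij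
    have h2 : (F '' Q)ᶜ = Qᶜ := by rw [← h1, hcompl]
    exact compl_injective h2
  have hbijQ : Set.BijOn F Q Q := by
    refine ⟨fun x hx => ?_, hFinj.injOn, ?_⟩
    · rw [← himg]; exact Set.mem_image_of_mem F hx
    · show Q ⊆ F '' Q
      rw [himg]
  refine ⟨e, hesm, hesm', by rwa [hecoe], ⟨(tsupport h)ᶜ, (isClosed_tsupport h).isOpen_compl,
    ?_, fun x hx => (he x).trans (hFid x hx)⟩, ?_, ?_⟩
  · -- frontier Q ⊆ (tsupport h)ᶜ
    intro x hx
    intro hc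
    exact hx.2 (hhts hc)
  · intro x hx
    rw [he x]
    exact (hdist0 x).trans hη'η
  · intro y hy b hb hWb
    have hFa : F (e.symm y) = y := by rw [← he (e.symm y)]; exact e.apply_symm_apply y
    have haQ : e.symm y ∈ Q := by
      by_contra haQ'
      have : F (e.symm y) = e.symm y := hFid _ (fun hc => haQ' (hhtsQ hc))
      rw [hFa] at this
      exact haQ' (this ▸ hy)
    have hd : dist (W (e.symm y)) (W b) < δ₂ := by
      calc dist (W (e.symm y)) (W b) = dist (W (e.symm y)) (F (e.symm y)) := by rw [hFa, hWb]
        _ = dist (F (e.symm y)) (W (e.symm y)) := dist_comm _ _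
        _ ≤ η' := hdist0 _
        _ < δ₂ := by linarith [hη'δ₂, hδ₂]
    exact le_of_lt (hδ₂' (e.symm y) haQ b hb hd)


end Aux2

/-- A `C¹` diffeomorphism of the closed unit cube onto itself which is the identity near the
boundary can be approximated in the uniform metric by `C^∞` diffeomorphisms which are the
identity near the boundary. -/
theorem stmt13 {n : ℕ} (Q : Set (EuclideanSpace ℝ (Fin (n + 2))))
    (hQ : Q = {x | ∀ i, x i ∈ Set.Icc (0 : ℝ) 1})
    (Φ Ψ : EuclideanSpace ℝ (Fin (n + 2)) → EuclideanSpace ℝ (Fin (n + 2)))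
    (hbij : Set.BijOn Φ Q Q)
    (hinv : ∀ x ∈ Q, Ψ (Φ x) = x ∧ Φ (Ψ x) = x)
    (hC1 : ∃ U, IsOpen U ∧ Q ⊆ U ∧ ContDiffOn ℝ 1 Φ U ∧ Set.InjOn Φ U ∧
      ∀ x ∈ U, IsUnit (fderiv ℝ Φ x))
    (hid : ∃ V, IsOpen V ∧ frontier Q ⊆ V ∧ Set.EqOn Φ id V) :
    ∃ Φk : ℕ → (EuclideanSpace ℝ (Fin (n + 2)) ≃ EuclideanSpace ℝ (Fin (n + 2))),
      (∀ k, ContDiff ℝ (⊤ : ℕ∞) ⇑(Φk k) ∧ ContDiff ℝ (⊤ : ℕ∞) ⇑(Φk k).symm ∧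
        Set.BijOn (Φk k) Q Q ∧
        ∃ V, IsOpen V ∧ frontier Q ⊆ V ∧ ∀ x ∈ V, (Φk k) x = x) ∧
      Filter.Tendsto
        (fun k => (⨆ x : Q, dist ((Φk k) x) (Φ x)) + ⨆ x : Q, dist ((Φk k).symm x) (Ψ x))
        Filter.atTop (nhds 0) := by
  classical
  obtain ⟨U, hUopen, hQU, hΦC1, hΦinjU, hΦunit⟩ := hC1
  obtain ⟨V, hVopen, hVfr, hVeq⟩ := hid
  -- basic facts about the cube
  have hQeq : Q = ⇑(EuclideanSpace.equiv (Fin (n+2)) ℝ) ⁻¹'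
      (Set.univ.pi fun _ => Set.Icc (0:ℝ) 1) := by
    rw [hQ]
    ext x
    simp only [Set.mem_setOf_eq, Set.mem_preimage, Set.mem_pi, Set.mem_univ, forall_true_left,
      true_implies]
    rfl
  have hQclosed : IsClosed Q := by
    rw [hQeq]
    exact (isClosed_set_pi fun i _ => isClosed_Icc).preimage
      (EuclideanSpace.equiv (Fin (n+2)) ℝ).continuous
  have hQcpt : IsCompact Q := by
    rw [hQeq]
    rw [show (⇑(EuclideanSpace.equiv (Fin (n+2)) ℝ) ⁻¹'
        (Set.univ.pi fun _ => Set.Icc (0:ℝ) 1)) =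
        ⇑(EuclideanSpace.equiv (Fin (n+2)) ℝ).toHomeomorph ⁻¹'
        (Set.univ.pi fun _ => Set.Icc (0:ℝ) 1) from rfl]
    rw [Homeomorph.isCompact_preimage]
    exact isCompact_univ_pi fun _ => isCompact_Icc
  have hQne : Q.Nonempty := by
    refine ⟨0, ?_⟩
    rw [hQ]
    intro i
    constructor <;> norm_num
  -- the extension of Φ by the identity
  set W : EuclideanSpace ℝ (Fin (n+2)) → EuclideanSpace ℝ (Fin (n+2)) :=
    fun x => if x ∈ Q then Φ x else x with hWdef
  have hWQeq : ∀ x ∈ Q, W x = Φ x := fun x hx => if_pos hx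
  have hWid : ∀ x ∉ Q, W x = x := fun x hx => if_neg hx
  have hWidV : ∀ x ∈ V ∪ Qᶜ, W x = x := by
    rintro x (hxV | hxQ)
    · by_cases hxQ : x ∈ Q
      · rw [hWQeq x hxQ]; exact hVeq hxV
      · exact hWid x hxQ
    · exact hWid x hxQ
  have hopen2 : IsOpen (V ∪ Qᶜ) := hVopen.union hQclosed.isOpen_compl
  have hcover : ∀ x : EuclideanSpace ℝ (Fin (n+2)), x ∈ interior Q ∨ x ∈ V ∪ Qᶜ := by
    intro x
    by_cases hxQ : x ∈ Q
    · by_cases hxI : x ∈ interior Q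
      · exact Or.inl hxI
      · refine Or.inr (Or.inl (hVfr ?_))
        rw [hQclosed.frontier_eq]
        exact ⟨hxQ, hxI⟩
    · exact Or.inr (Or.inr hxQ)
  have hWC1 : ContDiff ℝ 1 W := by
    rw [contDiff_iff_contDiffAt]
    intro x
    rcases hcover x with hx | hx
    · have hΦat : ContDiffAt ℝ 1 Φ x :=
        hΦC1.contDiffAt (hUopen.mem_nhds (hQU (interior_subset hx)))
      apply hΦat.congr_of_eventuallyEq
      filter_upwards [isOpen_interior.mem_nhds hx] with y hy
      exact hWQeq y (interior_subset hy)
    · apply contDiffAt_id.congr_of_eventuallyEq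
      filter_upwards [hopen2.mem_nhds hx] with y hy
      exact hWidV y hy
  have hWunit : ∀ x, IsUnit (fderiv ℝ W x) := by
    intro x
    rcases hcover x with hx | hx
    · have hev : W =ᶠ[nhds x] Φ := by
        filter_upwards [isOpen_interior.mem_nhds hx] with y hy
        exact hWQeq y (interior_subset hy)
      rw [hev.fderiv_eq]
      exact hΦunit x (hQU (interior_subset hx))
    · have hev : W =ᶠ[nhds x] id := by
        filter_upwards [hopen2.mem_nhds hx] with y hy
        exact hWidV y hy
      rw [hev.fderiv_eq]
      rw [fderiv_id]
      rw [← ContinuousLinearMap.one_def]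
      exact isUnit_one
  have hWinj : Function.Injective W := by
    intro a b hab
    by_cases haQ : a ∈ Q <;> by_cases hbQ : b ∈ Q
    · rw [hWQeq a haQ, hWQeq b hbQ] at hab
      exact hbij.injOn haQ hbQ hab
    · rw [hWQeq a haQ, hWid b hbQ] at hab
      exact absurd (hab ▸ hbij.mapsTo haQ) hbQ
    · rw [hWid a haQ, hWQeq b hbQ] at hab
      exact absurd (hab ▸ hbij.mapsTo hbQ) haQ
    · rwa [hWid a haQ, hWid b hbQ] at hab
  have hWmapsTo : Set.MapsTo W Q Q := fun x hx => (hWQeq x hx) ▸ hbij.mapsTo hx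
  have hsupp : tsupport (fun x => W x - x) ⊆ interior Q := by
    have hsub : Function.support (fun x => W x - x) ⊆ Q ∩ Vᶜ := by
      intro x hx
      have hne : W x ≠ x := fun hc => hx (by simp [hc])
      constructor
      · by_contra hxQ
        exact hne (hWid x hxQ)
      · intro hxV
        exact hne (hWidV x (Or.inl hxV))
    have hclosed : IsClosed (Q ∩ Vᶜ) := hQclosed.inter hVopen.isClosed_compl
    have hts : tsupport (fun x => W x - x) ⊆ Q ∩ Vᶜ := closure_minimal hsub hclosed
    refine hts.trans ?_
    rintro x ⟨hxQ, hxV⟩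
    by_contra hxI
    apply hxV
    apply hVfr
    rw [hQclosed.frontier_eq]
    exact ⟨hxQ, hxI⟩
  -- apply the approximation step
  have hstep := fun k : ℕ => approxStep Q hQcpt W hWC1 hWunit hWinj hWmapsTo hsupp
    (show (0:ℝ) < 1 / (k + 1) by positivity)
  choose e h1 h2 h3 h4 h5 h6 using hstep
  refine ⟨e, fun k => ⟨h1 k, h2 k, h3 k, h4 k⟩, ?_⟩
  have hA : ∀ k : ℕ, (⨆ x : Q, dist ((e k) x) (Φ x)) ≤ 1 / (k + 1) := by
    intro k
    refine Real.iSup_le (fun x => ?_) (by positivity)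
    have := h5 k x x.2
    rwa [hWQeq x x.2] at this
  have hB : ∀ k : ℕ, (⨆ x : Q, dist ((e k).symm x) (Ψ x)) ≤ 1 / (k + 1) := by
    intro k
    refine Real.iSup_le (fun y => ?_) (by positivity)
    have hΨQ : Ψ ↑y ∈ Q := by
      obtain ⟨x, hx, hΦx⟩ := hbij.surjOn y.2
      have hxy : Ψ ↑y = x := by rw [← hΦx]; exact (hinv x hx).1
      rw [hxy]; exact hx
    have hWb : W (Ψ ↑y) = ↑y := by
      rw [hWQeq _ hΨQ]
      exact (hinv ↑y y.2).2
    exact h6 k ↑y y.2 (Ψ ↑y) hΨQ hWb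
  apply squeeze_zero (fun k => add_nonneg (Real.iSup_nonneg fun x => dist_nonneg)
    (Real.iSup_nonneg fun x => dist_nonneg))
    (fun k => add_le_add (hA k) (hB k))
  have := (tendsto_one_div_add_atTop_nhds_zero_nat (𝕜 := ℝ)).add
    (tendsto_one_div_add_atTop_nhds_zero_nat (𝕜 := ℝ))
  simpa using this
end

section
/- Let U ⊂ ℝⁿ be open and Φ : U → ℝⁿ a homeomorphism onto its image that is approximately differentiable almost everywhere and satisfies the Lusin condition (N) (it maps sets of Lebesgue measure zero to sets of measure zero). Then Φ⁻¹ is approximately differentiable almost everywhere on Φ(U), and D_a Φ⁻¹(y) = (D_a Φ)⁻¹(Φ⁻¹(y)) for almost every y ∈ Φ(U). -/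
open MeasureTheory Filter Metric

/-- `x` is a Lebesgue density point of `E`. -/
def DensityPt {n : ℕ} (E : Set (EuclideanSpace ℝ (Fin n)))
    (x : EuclideanSpace ℝ (Fin n)) : Prop :=
  Tendsto (fun r => volume (E ∩ closedBall x r) / volume (closedBall x r))
    (nhdsWithin 0 (Set.Ioi 0)) (nhds 1)

/-- `f` is approximately differentiable at `x` with approximate derivative `L`. -/
def ApproxDiffAt {n : ℕ} {F : Type*} [NormedAddCommGroup F] [NormedSpace ℝ F]
    (f : EuclideanSpace ℝ (Fin n) → F) (L : EuclideanSpace ℝ (Fin n) →L[ℝ] F)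
    (x : EuclideanSpace ℝ (Fin n)) : Prop :=
  ∃ E : Set (EuclideanSpace ℝ (Fin n)), MeasurableSet E ∧ DensityPt E x ∧
    Tendsto (fun y => ‖f y - f x - L (y - x)‖ / ‖y - x‖)
      (nhdsWithin x (E \ {x})) (nhds 0)

section Stmt18Aux

open Set Topology
open scoped NNReal ENNReal

noncomputable section

variable {n : ℕ}

/-- The smallness threshold used in the Federer-type decomposition. -/
def deltaN (n : ℕ) : ℝ≥0∞ := 2⁻¹ ^ (n + 2)

lemma deltaN_pos : 0 < deltaN n := by
  apply ENNReal.pow_pos; norm_num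

lemma deltaN_ne_zero : deltaN n ≠ 0 := deltaN_pos.ne'

lemma deltaN_le_one : deltaN n ≤ 1 :=
  pow_le_one' (by norm_num : (2 : ℝ≥0∞)⁻¹ ≤ 1) _

lemma deltaN_mul_pow : deltaN n * 2 ^ (n + 1) = 2⁻¹ := by
  have h2 : (2 : ℝ≥0∞) ≠ 0 := by norm_num
  have h2' : (2 : ℝ≥0∞) ≠ ⊤ := by norm_num
  have key : (2 : ℝ≥0∞)⁻¹ ^ (n + 1) * 2 ^ (n + 1) = 1 := by
    rw [← mul_pow, ENNReal.inv_mul_cancel h2 h2', one_pow]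
  calc deltaN n * 2 ^ (n + 1) = (2⁻¹ ^ (n + 1) * 2⁻¹) * 2 ^ (n + 1) := by
        rw [deltaN, pow_succ]
    _ = (2⁻¹ ^ (n + 1) * 2 ^ (n + 1)) * 2⁻¹ := by ring
    _ = 2⁻¹ := by rw [key, one_mul]

variable (U : Set (EuclideanSpace ℝ (Fin n))) (Φ : EuclideanSpace ℝ (Fin n) → EuclideanSpace ℝ (Fin n))

local notation "𝕍" => EuclideanSpace ℝ (Fin n)

/-- Points of `U` nearby which `Φ` grows at most at rate `k`, relative to `x`. -/
def Tset (k : ℕ) (x : 𝕍) : Set 𝕍 :=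
  {y | y ∈ U ∧ dist (Φ y) (Φ x) ≤ k * dist y x}

/-- The set of points where the `k`-growth set has density defect at most `deltaN n`
at all scales below `1 / (m+1)`. -/
def Aset (k m : ℕ) : Set 𝕍 :=
  {x | x ∈ U ∧ ∀ q : ℚ, 0 < (q : ℝ) → (q : ℝ) < 1 / (m + 1) →
    volume (closedBall x (q : ℝ) \ Tset U Φ k x) ≤
      deltaN n * volume (closedBall x (q : ℝ))}

variable {U Φ}

lemma measurableSet_Aset (hU : IsOpen U) (hΦc : ContinuousOn Φ U) (k m : ℕ) :
    MeasurableSet (Aset U Φ k m) := by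
  classical
  have hφ : Measurable (U.piecewise Φ 0) :=
    hΦc.measurable_piecewise continuous_const.continuousOn hU.measurableSet
  set φ := U.piecewise Φ (0 : 𝕍 → 𝕍) with hφdef
  set W : ℚ → Set (𝕍 × 𝕍) := fun q =>
    {p | dist p.2 p.1 ≤ (q : ℝ) ∧ ¬(p.2 ∈ U ∧ dist (φ p.2) (φ p.1) ≤ k * dist p.2 p.1)} with hW
  have hWm : ∀ q, MeasurableSet (W q) := by
    intro q
    have hc1 : Measurable fun p : 𝕍 × 𝕍 => dist p.2 p.1 :=
      (continuous_dist.comp (continuous_snd.prodMk continuous_fst)).measurable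
    have hd : Measurable fun p : 𝕍 × 𝕍 => dist (φ p.2) (φ p.1) :=
      (hφ.comp measurable_snd).dist (hφ.comp measurable_fst)
    have hrw : W q = {p : 𝕍 × 𝕍 | dist p.2 p.1 ≤ (q : ℝ)} ∩
        ({p : 𝕍 × 𝕍 | p.2 ∈ U} ∩
          {p : 𝕍 × 𝕍 | dist (φ p.2) (φ p.1) ≤ k * dist p.2 p.1})ᶜ := rfl
    rw [hrw]
    refine (measurableSet_le hc1 measurable_const).inter (MeasurableSet.compl ?_)
    exact (measurable_snd hU.measurableSet).inter
      (measurableSet_le hd (measurable_const.mul hc1))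
  have hMm : ∀ q : ℚ, Measurable fun x => volume (Prod.mk x ⁻¹' W q) := fun q =>
    measurable_measure_prodMk_left (hWm q)
  have key : ∀ x ∈ U, ∀ q : ℚ,
      Prod.mk x ⁻¹' W q = closedBall x (q : ℝ) \ Tset U Φ k x := by
    intro x hx q
    ext y
    simp only [hW, mem_preimage, mem_setOf_eq, mem_diff, mem_closedBall, Tset]
    have hx' : φ x = Φ x := Set.piecewise_eq_of_mem _ _ _ hx
    constructor
    · rintro ⟨h1, h2⟩
      refine ⟨h1, fun h3 => h2 ⟨h3.1, ?_⟩⟩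
      have hy' : φ y = Φ y := Set.piecewise_eq_of_mem _ _ _ h3.1
      rw [hy', hx']; exact h3.2
    · rintro ⟨h1, h2⟩
      refine ⟨h1, fun h3 => h2 ⟨h3.1, ?_⟩⟩
      have hy' : φ y = Φ y := Set.piecewise_eq_of_mem _ _ _ h3.1
      rw [← hx', ← hy']; exact h3.2
  have hrw : Aset U Φ k m = U ∩ ⋂ (q : ℚ), ⋂ (_ : 0 < (q : ℝ)), ⋂ (_ : (q : ℝ) < 1 / (m + 1)),
      {x | volume (Prod.mk x ⁻¹' W q) ≤ deltaN n * volume (closedBall (0 : 𝕍) (q : ℝ))} := by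
    ext x
    simp only [Aset, mem_setOf_eq, mem_inter_iff, mem_iInter]
    constructor
    · rintro ⟨hx, h⟩
      refine ⟨hx, fun q hq1 hq2 => ?_⟩
      rw [key x hx q, ← Measure.addHaar_closedBall_center volume x]
      exact h q hq1 hq2
    · rintro ⟨hx, h⟩
      refine ⟨hx, fun q hq1 hq2 => ?_⟩
      rw [← key x hx q, Measure.addHaar_closedBall_center volume x (q:ℝ)]
      exact h q hq1 hq2
  rw [hrw]
  refine hU.measurableSet.inter ?_
  refine MeasurableSet.iInter fun q => MeasurableSet.iInter fun _ => MeasurableSet.iInter fun _ => ?_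
  exact (hMm q) measurableSet_Iic

lemma Aset_ball_bound {k m : ℕ} {x : 𝕍} (hx : x ∈ Aset U Φ k m) {r : ℝ} (hr : 0 < r)
    (hrm : r ≤ 1 / (m + 1)) :
    volume (ball x r \ Tset U Φ k x) ≤ deltaN n * volume (ball x r) := by
  have hcov : ball x r \ Tset U Φ k x =
      ⋃ q : {q : ℚ // 0 < (q : ℝ) ∧ (q : ℝ) < r},
        closedBall x (q : ℝ) \ Tset U Φ k x := by
    ext y
    simp only [mem_diff, mem_ball, mem_iUnion, mem_closedBall]
    constructor
    · rintro ⟨h1, h2⟩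
      obtain ⟨q, hq1, hq2⟩ := exists_rat_btwn (show dist y x < r from h1)
      exact ⟨⟨q, lt_of_le_of_lt dist_nonneg hq1, hq2⟩, hq1.le, h2⟩
    · rintro ⟨q, h1, h2⟩
      exact ⟨lt_of_le_of_lt h1 q.2.2, h2⟩
  have hdir : Directed (· ⊆ ·)
      (fun q : {q : ℚ // 0 < (q : ℝ) ∧ (q : ℝ) < r} =>
        closedBall x (q : ℝ) \ Tset U Φ k x) := by
    intro a b
    rcases le_total (a : ℚ) (b : ℚ) with h | h
    · exact ⟨b, diff_subset_diff_left (closedBall_subset_closedBall (by exact_mod_cast h)),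
        subset_rfl⟩
    · exact ⟨a, subset_rfl,
        diff_subset_diff_left (closedBall_subset_closedBall (by exact_mod_cast h))⟩
  rw [hcov, hdir.measure_iUnion]
  refine iSup_le fun q => ?_
  calc volume (closedBall x (q : ℝ) \ Tset U Φ k x)
      ≤ deltaN n * volume (closedBall x (q : ℝ)) :=
        hx.2 q q.2.1 (lt_of_lt_of_le q.2.2 hrm)
    _ ≤ deltaN n * volume (ball x r) :=
        mul_le_mul_right (measure_mono (closedBall_subset_ball q.2.2)) _

lemma lipschitzOnWith_Aset_piece (k m : ℕ) (z0 : 𝕍) :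
    LipschitzOnWith (3 * k) Φ (Aset U Φ k m ∩ ball z0 (1 / (5 * (m + 1)))) := by
  apply LipschitzOnWith.of_dist_le_mul
  rintro x ⟨hxA, hxz⟩ z ⟨hzA, hzz⟩
  rcases eq_or_ne x z with rfl | hne
  · simp
  have hnt : Nontrivial 𝕍 := ⟨⟨x, z, hne⟩⟩
  set d := dist x z with hd
  have hd0 : 0 < d := dist_pos.2 hne
  have hdm : 2 * d < 1 / (m + 1) := by
    rw [mem_ball] at hxz hzz
    have hA : (0:ℝ) < 1 / ((m:ℝ) + 1) := by positivity
    have htri : d ≤ dist x z0 + dist z z0 := dist_triangle_right x z z0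
    have hsplit : 1 / (5 * ((m:ℝ) + 1)) = (1/5) * (1 / ((m:ℝ)+1)) := by
      rw [one_div, mul_inv, ← one_div (5:ℝ), ← one_div ((m:ℝ)+1)]
    rw [hsplit] at hxz hzz
    linarith
  have h1 := Aset_ball_bound hxA (by positivity : (0:ℝ) < 2 * d) hdm.le
  have h2 := Aset_ball_bound hzA (by positivity : (0:ℝ) < 2 * d) hdm.le
  have hsub1 : ball x d ⊆ ball x (2 * d) := ball_subset_ball (by linarith)
  have hsub2 : ball x d ⊆ ball z (2 * d) := by
    intro y hy
    rw [mem_ball] at hy ⊢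
    calc dist y z ≤ dist y x + dist x z := dist_triangle y x z
      _ < d + d := by rw [← hd]; linarith
      _ = 2 * d := by ring
  have hvol : volume (ball x (2 * d)) = (2:ℝ≥0∞) ^ n * volume (ball x d) := by
    have h1 := Measure.addHaar_ball_mul (volume : Measure (EuclideanSpace ℝ (Fin n))) x
      (by norm_num : (0:ℝ) ≤ 2) d
    rw [finrank_euclideanSpace_fin] at h1
    rw [h1, Measure.addHaar_ball_center volume x]
    congr 1
    rw [ENNReal.ofReal_pow (by norm_num : (0:ℝ) ≤ 2)]
    norm_num
  have hvolz : volume (ball z (2 * d)) = (2:ℝ≥0∞) ^ n * volume (ball x d) := by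
    rw [Measure.addHaar_ball_center volume z, ← Measure.addHaar_ball_center volume x,
      hvol]
  have hcover : ball x d \ (Tset U Φ k x ∩ Tset U Φ k z) ⊆
      (ball x (2*d) \ Tset U Φ k x) ∪ (ball z (2*d) \ Tset U Φ k z) := by
    rintro y ⟨hy, hy2⟩
    rcases not_and_or.1 hy2 with h | h
    · exact Or.inl ⟨hsub1 hy, h⟩
    · exact Or.inr ⟨hsub2 hy, h⟩
  have hhalf : volume (ball x d \ (Tset U Φ k x ∩ Tset U Φ k z)) ≤
      2⁻¹ * volume (ball x d) := by
    calc volume (ball x d \ (Tset U Φ k x ∩ Tset U Φ k z))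
        ≤ volume (ball x (2*d) \ Tset U Φ k x) + volume (ball z (2*d) \ Tset U Φ k z) :=
          le_trans (measure_mono hcover) (measure_union_le _ _)
      _ ≤ deltaN n * volume (ball x (2*d)) + deltaN n * volume (ball z (2*d)) :=
          add_le_add h1 h2
      _ = (deltaN n * 2 ^ (n+1)) * volume (ball x d) := by
          rw [hvol, hvolz, pow_succ]; ring
      _ = 2⁻¹ * volume (ball x d) := by rw [deltaN_mul_pow]
  have hne' : (ball x d ∩ (Tset U Φ k x ∩ Tset U Φ k z)).Nonempty := by
    by_contra hcon
    rw [Set.not_nonempty_iff_eq_empty] at hcon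
    have hsub : ball x d ⊆ ball x d \ (Tset U Φ k x ∩ Tset U Φ k z) := by
      intro y hy
      refine ⟨hy, fun hmem => ?_⟩
      exact absurd (Set.mem_inter hy hmem) (by simp [hcon])
    have hv1 : volume (ball x d) ≤ 2⁻¹ * volume (ball x d) :=
      le_trans (measure_mono hsub) hhalf
    have hv2 : 2⁻¹ * volume (ball x d) < volume (ball x d) := by
      rw [← ENNReal.div_eq_inv_mul]
      exact ENNReal.half_lt_self (measure_ball_pos volume x hd0).ne' measure_ball_lt_top.ne
    exact absurd hv1 (not_le.2 hv2)
  obtain ⟨w, hwb, hwx, hwz⟩ := hne'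
  rw [mem_ball] at hwb
  have e1 : dist (Φ w) (Φ x) ≤ k * dist w x := hwx.2
  have e2 : dist (Φ w) (Φ z) ≤ k * dist w z := hwz.2
  have e3 : dist w z ≤ dist w x + d := by
    have := dist_triangle w x z; linarith
  calc dist (Φ x) (Φ z) ≤ dist (Φ x) (Φ w) + dist (Φ w) (Φ z) := dist_triangle _ _ _
    _ = dist (Φ w) (Φ x) + dist (Φ w) (Φ z) := by rw [dist_comm]
    _ ≤ k * dist w x + k * dist w z := add_le_add e1 e2
    _ ≤ k * d + k * (d + d) := by
        have hk0 : (0:ℝ) ≤ (k:ℝ) := Nat.cast_nonneg k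
        have h5 : dist w x ≤ d := hwb.le
        have h4 : dist w z ≤ d + d := le_trans e3 (by linarith)
        have := mul_le_mul_of_nonneg_left h4 hk0
        have := mul_le_mul_of_nonneg_left h5 hk0
        linarith
    _ = (3 * k : ℝ≥0) * dist x z := by push_cast; ring


lemma mem_Aset_of_approxDiffAt (hU : IsOpen U) {x : EuclideanSpace ℝ (Fin n)} (hxU : x ∈ U)
    {L : 𝕍 →L[ℝ] 𝕍} (h : ApproxDiffAt Φ L x) : ∃ k m : ℕ, x ∈ Aset U Φ k m := by
  obtain ⟨E, hEm, hEd, hEt⟩ := h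
  obtain ⟨k, hk⟩ := exists_nat_ge (‖L‖ + 1)
  have h1 : ∀ᶠ y in nhdsWithin x (E \ {x}), ‖Φ y - Φ x - L (y - x)‖ / ‖y - x‖ < 1 :=
    hEt.eventually_lt_const one_pos
  rw [eventually_nhdsWithin_iff] at h1
  obtain ⟨ε, hε, hball⟩ := Metric.eventually_nhds_iff.1 h1
  obtain ⟨ε₁, hε₁, hbU⟩ := Metric.isOpen_iff.1 hU x hxU
  have hTsub : E ∩ ball x ε ∩ U ⊆ Tset U Φ k x := by
    rintro y ⟨⟨hyE, hyb⟩, hyU⟩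
    rcases eq_or_ne y x with rfl | hyx
    · exact ⟨hyU, by simp⟩
    · have hq := hball (mem_ball.1 hyb) ⟨hyE, by simpa using hyx⟩
      have hvpos : (0:ℝ) < ‖y - x‖ := by
        rw [norm_pos_iff, sub_ne_zero]; exact hyx
      have hnum : ‖Φ y - Φ x - L (y - x)‖ ≤ ‖y - x‖ := (div_le_one hvpos).1 hq.le
      refine ⟨hyU, ?_⟩
      have hsplit : Φ y - Φ x = (Φ y - Φ x - L (y - x)) + L (y - x) := by abel
      have hbound : ‖Φ y - Φ x‖ ≤ (‖L‖ + 1) * ‖y - x‖ := by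
        calc ‖Φ y - Φ x‖ = ‖(Φ y - Φ x - L (y - x)) + L (y - x)‖ := by rw [← hsplit]
          _ ≤ ‖Φ y - Φ x - L (y - x)‖ + ‖L (y - x)‖ := norm_add_le _ _
          _ ≤ ‖y - x‖ + ‖L‖ * ‖y - x‖ := add_le_add hnum (L.le_opNorm _)
          _ = (‖L‖ + 1) * ‖y - x‖ := by ring
      calc dist (Φ y) (Φ x) = ‖Φ y - Φ x‖ := dist_eq_norm _ _
        _ ≤ (‖L‖ + 1) * ‖y - x‖ := hbound
        _ ≤ k * ‖y - x‖ := by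
            apply mul_le_mul_of_nonneg_right hk (norm_nonneg _)
        _ = k * dist y x := by rw [dist_eq_norm]
  have hδlt : (1:ℝ≥0∞) - deltaN n < 1 :=
    ENNReal.sub_lt_self ENNReal.one_ne_top one_ne_zero deltaN_ne_zero
  have h2 : ∀ᶠ r in nhdsWithin 0 (Set.Ioi (0:ℝ)), 1 - deltaN n <
      volume (E ∩ closedBall x r) / volume (closedBall x r) :=
    (tendsto_order.1 hEd).1 _ hδlt
  rw [eventually_nhdsWithin_iff] at h2
  obtain ⟨ρ, hρ, hrat⟩ := Metric.eventually_nhds_iff.1 h2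
  obtain ⟨m, hm⟩ := exists_nat_one_div_lt (show (0:ℝ) < min ρ (min ε ε₁) by positivity)
  refine ⟨k, m, hxU, fun q hq1 hq2 => ?_⟩
  have hqρ : (q:ℝ) < ρ := lt_of_lt_of_le (hq2.trans hm) (min_le_left _ _)
  have hqε : (q:ℝ) < ε :=
    lt_of_lt_of_le (hq2.trans hm) ((min_le_right _ _).trans (min_le_left _ _))
  have hqε₁ : (q:ℝ) < ε₁ :=
    lt_of_lt_of_le (hq2.trans hm) ((min_le_right _ _).trans (min_le_right _ _))
  set B := closedBall x (q:ℝ) with hB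
  have hBsub : B ⊆ ball x ε ∩ U := by
    intro y hy
    exact ⟨closedBall_subset_ball hqε hy, hbU (closedBall_subset_ball hqε₁ hy)⟩
  have hv0 : volume B ≠ 0 := (measure_closedBall_pos volume x hq1).ne'
  have hvt : volume B ≠ ⊤ := measure_closedBall_lt_top.ne
  have hratq : 1 - deltaN n < volume (E ∩ B) / volume B := by
    apply hrat _ (Set.mem_Ioi.2 hq1)
    rw [Real.dist_eq, sub_zero, abs_of_pos hq1]
    exact hqρ
  have hEB : (1 - deltaN n) * volume B ≤ volume (E ∩ B) :=
    (ENNReal.le_div_iff_mul_le (Or.inl hv0) (Or.inl hvt)).1 hratq.le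
  have hsubT : B \ Tset U Φ k x ⊆ B \ (E ∩ B) := by
    rintro y ⟨hy1, hy2⟩
    refine ⟨hy1, fun hmem => hy2 (hTsub ⟨⟨hmem.1, (hBsub hy1).1⟩, (hBsub hy1).2⟩)⟩
  have hEBne : volume (E ∩ B) ≠ ⊤ :=
    (lt_of_le_of_lt (measure_mono Set.inter_subset_right) measure_closedBall_lt_top).ne
  calc volume (B \ Tset U Φ k x) ≤ volume (B \ (E ∩ B)) := measure_mono hsubT
    _ = volume B - volume (E ∩ B) := by
        rw [measure_diff Set.inter_subset_right (hEm.inter measurableSet_closedBall).nullMeasurableSet hEBne]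
    _ ≤ volume B - (1 - deltaN n) * volume B := tsub_le_tsub_left hEB _
    _ = deltaN n * volume B := by
        have hone : (1 : ℝ≥0∞) * volume B - (1 - deltaN n) * volume B
            = deltaN n * volume B := by
          rw [← ENNReal.sub_mul (fun _ _ => hvt),
            ENNReal.sub_sub_cancel ENNReal.one_ne_top deltaN_le_one]
        rw [← hone, one_mul]

lemma exists_decomposition (hU : IsOpen U) (hΦc : ContinuousOn Φ U) :
    ∃ P : ℕ × ℕ × ℕ → Set (EuclideanSpace ℝ (Fin n)),
      (∀ p, MeasurableSet (P p)) ∧ (∀ p, P p ⊆ U) ∧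
      (∀ p, ∃ K : ℝ≥0, LipschitzOnWith K Φ (P p)) ∧
      (∀ x ∈ U, (∃ L, ApproxDiffAt Φ L x) → ∃ p, x ∈ P p) := by
  obtain ⟨u, hu⟩ := TopologicalSpace.exists_dense_seq (EuclideanSpace ℝ (Fin n))
  refine ⟨fun p => Aset U Φ p.1 p.2.1 ∩ ball (u p.2.2) (1 / (5 * (p.2.1 + 1))), ?_, ?_, ?_, ?_⟩
  · exact fun p => (measurableSet_Aset hU hΦc _ _).inter measurableSet_ball
  · exact fun p x hx => hx.1.1
  · exact fun p => ⟨3 * (p.1 : ℝ≥0), lipschitzOnWith_Aset_piece _ _ _⟩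
  · rintro x hxU ⟨L, hL⟩
    obtain ⟨k, m, hkm⟩ := mem_Aset_of_approxDiffAt hU hxU hL
    obtain ⟨j, hj⟩ := hu.exists_dist_lt x (show (0:ℝ) < 1/(5*((m:ℝ)+1)) by positivity)
    exact ⟨(k, m, j), hkm, mem_ball.2 hj⟩

lemma exists_lipschitz_extension {s : Set (EuclideanSpace ℝ (Fin n))}
    {f : EuclideanSpace ℝ (Fin n) → EuclideanSpace ℝ (Fin n)} {K : ℝ≥0}
    (hf : LipschitzOnWith K f s) :
    ∃ g, (∃ C : ℝ≥0, LipschitzWith C g) ∧ Set.EqOn f g s := by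
  set e := EuclideanSpace.equiv (Fin n) ℝ with he
  have h1 : LipschitzOnWith (‖(e : 𝕍 →L[ℝ] (Fin n → ℝ))‖₊ * K) (⇑e ∘ f) s :=
    ((e : 𝕍 →L[ℝ] (Fin n → ℝ)).lipschitz).comp_lipschitzOnWith hf
  obtain ⟨g1, hg1, heq⟩ := h1.extend_pi
  refine ⟨⇑e.symm ∘ g1, ⟨_, ((e.symm : (Fin n → ℝ) →L[ℝ] 𝕍).lipschitz).comp hg1⟩,
    fun x hx => ?_⟩
  have h2 := heq hx
  simp only [Function.comp_apply, ← h2]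
  exact (e.symm_apply_apply (f x)).symm

lemma tendsto_inv_within (U : Set (EuclideanSpace ℝ (Fin n)))
    {Φ Ψ : EuclideanSpace ℝ (Fin n) → EuclideanSpace ℝ (Fin n)}
    (hemb : Topology.IsEmbedding (U.restrict Φ)) (hΨ : ∀ x ∈ U, Ψ (Φ x) = x)
    {x : EuclideanSpace ℝ (Fin n)} (hxU : x ∈ U) :
    Tendsto Ψ (nhdsWithin (Φ x) (Φ '' U)) (nhds x) := by
  have he := hemb.toIsInducing
  have h1 : map (U.restrict Φ) (nhds ⟨x, hxU⟩) = nhdsWithin (Φ x) (Φ '' U) := by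
    rw [he.nhds_eq_comap ⟨x, hxU⟩, map_comap, show Set.range (U.restrict Φ) = Φ '' U from Set.range_domRestrict Φ U, nhdsWithin]
    rfl
  rw [← h1, tendsto_map'_iff]
  have h2 : (Ψ ∘ U.restrict Φ) = fun a : ↥U => (a : EuclideanSpace ℝ (Fin n)) :=
    funext fun a => hΨ a a.2
  rw [h2]
  exact continuous_subtype_val.continuousAt

end

end Stmt18Aux


set_option maxHeartbeats 1000000 in
open Set Topology in
open scoped NNReal ENNReal in
/-- If a homeomorphism onto its image `Φ : U → ℝⁿ` is a.e. approximately differentiable and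
satisfies the Lusin condition (N), then its inverse `Ψ` is a.e. approximately
differentiable on `Φ(U)` and `D_a Ψ(y) = (D_a Φ)⁻¹(Ψ(y))` for a.e. `y ∈ Φ(U)`. -/
theorem stmt18 {n : ℕ} (U : Set (EuclideanSpace ℝ (Fin n))) (hU : IsOpen U)
    (Φ Ψ : EuclideanSpace ℝ (Fin n) → EuclideanSpace ℝ (Fin n))
    (hemb : Topology.IsEmbedding (U.restrict Φ))
    (hΨ : ∀ x ∈ U, Ψ (Φ x) = x)
    (hdiff : ∀ᵐ x ∂volume, x ∈ U → ∃ L, ApproxDiffAt Φ L x)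
    (hN : ∀ A ⊆ U, volume A = 0 → volume (Φ '' A) = 0) :
    ∀ᵐ y ∂volume, y ∈ Φ '' U →
      ∃ L : EuclideanSpace ℝ (Fin n) ≃L[ℝ] EuclideanSpace ℝ (Fin n),
        ApproxDiffAt Φ (L : EuclideanSpace ℝ (Fin n) →L[ℝ] EuclideanSpace ℝ (Fin n)) (Ψ y) ∧
        ApproxDiffAt Ψ (L.symm : EuclideanSpace ℝ (Fin n) →L[ℝ] EuclideanSpace ℝ (Fin n)) y := by
  classical
  have hΦc : ContinuousOn Φ U := continuousOn_iff_continuous_restrict.2 hemb.continuous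
  have hinj : Set.InjOn Φ U := fun a ha b hb h => by rw [← hΨ a ha, h, hΨ b hb]
  obtain ⟨P, hPm, hPU, hPL, hPcov⟩ := exists_decomposition hU hΦc
  have hext : ∀ p, ∃ g, (∃ C : ℝ≥0, LipschitzWith C g) ∧ Set.EqOn Φ g (P p) := fun p => by
    obtain ⟨K, hK⟩ := hPL p; exact exists_lipschitz_extension hK
  choose g hgC hgE using hext
  choose C hC using hgC
  set Q : ℕ × ℕ × ℕ → Set (EuclideanSpace ℝ (Fin n)) := fun p => Φ '' P p with hQ
  have hQm : ∀ p, MeasurableSet (Q p) := fun p =>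
    (hPm p).image_of_continuousOn_injOn (hΦc.mono (hPU p)) (hinj.mono (hPU p))
  set Dt : ℕ × ℕ × ℕ → Set (EuclideanSpace ℝ (Fin n)) :=
    fun p => {x | DifferentiableAt ℝ (g p) x} with hDt
  set Z : ℕ × ℕ × ℕ → Set (EuclideanSpace ℝ (Fin n)) :=
    fun p => (P p ∩ Dt p) ∩ {x | (fderiv ℝ (g p) x).det = 0} with hZ
  set bad : Set (EuclideanSpace ℝ (Fin n)) :=
    Φ '' (U \ ⋃ p, P p) ∪ ⋃ p, (Φ '' (P p \ Dt p) ∪ Φ '' Z p ∪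
      Φ '' {x | x ∈ P p ∧ ¬ DensityPt (P p) x} ∪
      {y | y ∈ Q p ∧ ¬ DensityPt (Q p) y}) with hbad
  have hbad0 : volume bad = 0 := by
    rw [hbad]
    apply measure_union_null
    · apply hN _ diff_subset
      refine measure_mono_null ?_ (ae_iff.1 hdiff)
      rintro x ⟨hxU', hxn⟩
      simp only [Set.mem_setOf_eq]
      intro hco
      obtain ⟨p, hp⟩ := hPcov x hxU' (hco hxU')
      exact hxn (Set.mem_iUnion.2 ⟨p, hp⟩)
    · apply measure_iUnion_null; intro p
      apply measure_union_null; swap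
      · -- y-side density
        refine measure_mono_null ?_ (ae_iff.1
          (Besicovitch.ae_tendsto_measure_inter_div_of_measurableSet volume (hQm p)))
        rintro y ⟨hyQ, hyd⟩
        simp only [Set.mem_setOf_eq]
        intro hco
        apply hyd
        have hind : (Q p).indicator (1 : EuclideanSpace ℝ (Fin n) → ℝ≥0∞) y = 1 := by
          rw [Set.indicator_of_mem hyQ]; rfl
        rw [hind] at hco
        exact hco
      apply measure_union_null; swap
      · -- x-side density
        apply hN _ (fun x hx => hPU p hx.1)
        refine measure_mono_null ?_ (ae_iff.1
          (Besicovitch.ae_tendsto_measure_inter_div_of_measurableSet volume (hPm p)))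
        rintro x ⟨hxP, hxd⟩
        simp only [Set.mem_setOf_eq]
        intro hco
        apply hxd
        have hind : (P p).indicator (1 : EuclideanSpace ℝ (Fin n) → ℝ≥0∞) x = 1 := by
          rw [Set.indicator_of_mem hxP]; rfl
        rw [hind] at hco
        exact hco
      apply measure_union_null
      · -- non-differentiability points
        apply hN _ (diff_subset.trans (hPU p))
        refine measure_mono_null ?_ (ae_iff.1 (hC p).ae_differentiableAt)
        rintro x ⟨_, hx2⟩
        exact hx2
      · -- singular points, via the area formula
        have hZm : MeasurableSet (Z p) := by
          refine ((hPm p).inter (measurableSet_of_differentiableAt ℝ (g p))).inter ?_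
          exact (ContinuousLinearMap.continuous_det.measurable.comp
            (measurable_fderiv ℝ (g p))) (measurableSet_singleton 0)
        have hf' : ∀ x ∈ Z p, HasFDerivWithinAt Φ (fderiv ℝ (g p) x) (Z p) x := by
          intro x hx
          exact (hx.1.2.hasFDerivAt.hasFDerivWithinAt).congr
            (fun y hy => hgE p hy.1.1) (hgE p hx.1.1)
        have harea := addHaar_image_le_lintegral_abs_det_fderiv volume hZm hf'
        have hzero' : ∀ x ∈ Z p,
            ENNReal.ofReal |(fderiv ℝ (g p) x).det| = (fun _ => (0:ℝ≥0∞)) x := by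
          intro x hx
          have hdet : (fderiv ℝ (g p) x).det = 0 := hx.2
          rw [hdet, abs_zero, ENNReal.ofReal_zero]
        have hzero : ∫⁻ x in Z p, ENNReal.ofReal |(fderiv ℝ (g p) x).det| ∂volume = 0 := by
          rw [setLIntegral_congr_fun hZm hzero']
          exact lintegral_zero
        exact le_antisymm (hzero ▸ harea) zero_le
  rw [ae_iff]
  refine measure_mono_null (fun y hy => ?_) hbad0
  rw [Set.mem_setOf_eq, Classical.not_imp] at hy
  obtain ⟨hyU, hy2⟩ := hy
  obtain ⟨x₀, hx₀U, rfl⟩ := hyU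
  by_cases h1 : ∃ p, x₀ ∈ P p
  swap
  · exact Set.mem_union_left _ ⟨x₀, ⟨hx₀U, by simpa using h1⟩, rfl⟩
  obtain ⟨p, hx₀P⟩ := h1
  apply Set.mem_union_right
  apply Set.mem_iUnion.2
  refine ⟨p, ?_⟩
  by_cases h2 : x₀ ∈ Dt p
  swap
  · exact Set.mem_union_left _ (Set.mem_union_left _
      (Set.mem_union_left _ ⟨x₀, ⟨hx₀P, h2⟩, rfl⟩))
  by_cases h3 : (fderiv ℝ (g p) x₀).det = 0
  · exact Set.mem_union_left _ (Set.mem_union_left _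
      (Set.mem_union_right _ ⟨x₀, ⟨⟨hx₀P, h2⟩, h3⟩, rfl⟩))
  by_cases h4 : DensityPt (P p) x₀
  swap
  · exact Set.mem_union_left _ (Set.mem_union_right _ ⟨x₀, ⟨hx₀P, h4⟩, rfl⟩)
  by_cases h5 : DensityPt (Q p) (Φ x₀)
  swap
  · exact Set.mem_union_right _ ⟨⟨x₀, hx₀P, rfl⟩, h5⟩
  exfalso
  apply hy2
  -- the good case: construct the invertible derivative
  have hΨx : Ψ (Φ x₀) = x₀ := hΨ x₀ hx₀U
  set A := fderiv ℝ (g p) x₀ with hA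
  set L : EuclideanSpace ℝ (Fin n) ≃L[ℝ] EuclideanSpace ℝ (Fin n) :=
    ((A : EuclideanSpace ℝ (Fin n) →ₗ[ℝ] EuclideanSpace ℝ (Fin n)).equivOfDetNeZero
      h3).toContinuousLinearEquiv with hLdef
  have hLA : (L : EuclideanSpace ℝ (Fin n) →L[ℝ] EuclideanSpace ℝ (Fin n)) = A := by
    ext v; simp [hLdef, LinearMap.equivOfDetNeZero]
  have hΦw : HasFDerivWithinAt Φ A (P p) x₀ :=
    ((h2 : DifferentiableAt ℝ (g p) x₀).hasFDerivAt.hasFDerivWithinAt).congr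
      (fun y hy => hgE p hy) (hgE p hx₀P)
  have hq0 : Tendsto (fun x' => ‖Φ x' - Φ x₀ - A (x' - x₀)‖ / ‖x' - x₀‖)
      (nhdsWithin x₀ (P p \ {x₀})) (nhds 0) := by
    have h' := (hasFDerivWithinAt_iff_tendsto.1 hΦw).mono_left
      (nhdsWithin_mono x₀ (Set.diff_subset : P p \ {x₀} ⊆ P p))
    exact h'.congr fun x' => (div_eq_inv_mul _ _).symm
  have hside1 : ApproxDiffAt Φ
      (L : EuclideanSpace ℝ (Fin n) →L[ℝ] EuclideanSpace ℝ (Fin n)) (Ψ (Φ x₀)) := by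
    rw [hΨx]
    refine ⟨P p, hPm p, h4, ?_⟩
    rw [hLA]
    exact hq0
  -- inverse side
  have hc0 : Tendsto Ψ (nhdsWithin (Φ x₀) (Φ '' U)) (nhds x₀) :=
    tendsto_inv_within U hemb hΨ hx₀U
  have hΨten : Tendsto Ψ (nhdsWithin (Φ x₀) (Q p \ {Φ x₀}))
      (nhdsWithin x₀ (P p \ {x₀})) := by
    rw [tendsto_nhdsWithin_iff]
    constructor
    · exact hc0.mono_left (nhdsWithin_mono _ (fun y hy => Set.image_mono (hPU p) hy.1))
    · filter_upwards [self_mem_nhdsWithin] with y' hy'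
      obtain ⟨⟨x', hx'P, rfl⟩, hne⟩ := hy'
      have hΨ' : Ψ (Φ x') = x' := hΨ x' (hPU p hx'P)
      rw [hΨ']
      exact ⟨hx'P, fun hco => hne (by rw [hco]; exact Set.mem_singleton _)⟩
  set c := ‖(L.symm : EuclideanSpace ℝ (Fin n) →L[ℝ] EuclideanSpace ℝ (Fin n))‖ with hcdef
  have hcnn : 0 ≤ c := norm_nonneg _
  have hlow : ∀ v : EuclideanSpace ℝ (Fin n), ‖v‖ ≤ c * ‖A v‖ := by
    intro v
    have h' : (L.symm : EuclideanSpace ℝ (Fin n) →L[ℝ] EuclideanSpace ℝ (Fin n)) (A v) = v := by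
      rw [← hLA]; simp
    calc ‖v‖ = ‖(L.symm : EuclideanSpace ℝ (Fin n) →L[ℝ] EuclideanSpace ℝ (Fin n)) (A v)‖ := by
          rw [h']
      _ ≤ c * ‖A v‖ := ContinuousLinearMap.le_opNorm _ _
  set ε₀ := (2 * (c + 1))⁻¹ with hε₀def
  have hε₀pos : 0 < ε₀ := by positivity
  have hev1 : ∀ᶠ x' in nhdsWithin x₀ (P p \ {x₀}),
      ‖Φ x' - Φ x₀ - A (x' - x₀)‖ / ‖x' - x₀‖ ≤ ε₀ :=
    hq0.eventually_le_const hε₀pos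
  have hkey : ∀ᶠ y' in nhdsWithin (Φ x₀) (Q p \ {Φ x₀}),
      ‖Ψ y' - Ψ (Φ x₀) - (L.symm : EuclideanSpace ℝ (Fin n) →L[ℝ]
        EuclideanSpace ℝ (Fin n)) (y' - Φ x₀)‖ / ‖y' - Φ x₀‖ ≤
      2 * c ^ 2 * (‖Φ (Ψ y') - Φ x₀ - A (Ψ y' - x₀)‖ / ‖Ψ y' - x₀‖) := by
    filter_upwards [hΨten.eventually hev1, self_mem_nhdsWithin] with y' hqb hy'
    obtain ⟨⟨x', hx'P, rfl⟩, hne⟩ := hy'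
    have hΨ' : Ψ (Φ x') = x' := hΨ x' (hPU p hx'P)
    rw [hΨ'] at hqb
    rw [hΨ', hΨx]
    have hxne : x' ≠ x₀ := fun hco => hne (by rw [hco]; exact Set.mem_singleton _)
    have hnv : 0 < ‖x' - x₀‖ := by rw [norm_pos_iff, sub_ne_zero]; exact hxne
    set qv := ‖Φ x' - Φ x₀ - A (x' - x₀)‖ / ‖x' - x₀‖ with hqvdef
    have hqnn : 0 ≤ qv := div_nonneg (norm_nonneg _) (norm_nonneg _)
    have hnum : ‖Φ x' - Φ x₀ - A (x' - x₀)‖ = qv * ‖x' - x₀‖ := by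
      rw [hqvdef, div_mul_cancel₀ _ hnv.ne']
    have hlow1 : ‖x' - x₀‖ ≤ c * ‖Φ x' - Φ x₀‖ + c * (qv * ‖x' - x₀‖) := by
      calc ‖x' - x₀‖ ≤ c * ‖A (x' - x₀)‖ := hlow _
        _ ≤ c * (‖Φ x' - Φ x₀‖ + ‖Φ x' - Φ x₀ - A (x' - x₀)‖) := by
            refine mul_le_mul_of_nonneg_left ?_ hcnn
            have heq : A (x' - x₀) = (Φ x' - Φ x₀) - (Φ x' - Φ x₀ - A (x' - x₀)) := by abel
            calc ‖A (x' - x₀)‖ = ‖(Φ x' - Φ x₀) - (Φ x' - Φ x₀ - A (x' - x₀))‖ := by rw [← heq]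
              _ ≤ ‖Φ x' - Φ x₀‖ + ‖Φ x' - Φ x₀ - A (x' - x₀)‖ := norm_sub_le _ _
        _ = c * ‖Φ x' - Φ x₀‖ + c * (qv * ‖x' - x₀‖) := by rw [hnum]; ring
    have hqe : qv ≤ ε₀ := hqb
    have hcq : c * qv ≤ 2⁻¹ := by
      have h2 : c * ε₀ ≤ 2⁻¹ := by
        rw [hε₀def]
        rw [mul_inv_le_iff₀ (by positivity)]
        nlinarith
      nlinarith
    have hab : ‖x' - x₀‖ ≤ 2 * c * ‖Φ x' - Φ x₀‖ := by nlinarith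
    have hbpos : 0 < ‖Φ x' - Φ x₀‖ := by nlinarith
    have hdecomp : x' - x₀ - (L.symm : EuclideanSpace ℝ (Fin n) →L[ℝ]
        EuclideanSpace ℝ (Fin n)) (Φ x' - Φ x₀)
        = (L.symm : EuclideanSpace ℝ (Fin n) →L[ℝ] EuclideanSpace ℝ (Fin n))
          (A (x' - x₀) - (Φ x' - Φ x₀)) := by
      rw [map_sub, ← hLA]
      simp
    have hNb : ‖x' - x₀ - (L.symm : EuclideanSpace ℝ (Fin n) →L[ℝ]
        EuclideanSpace ℝ (Fin n)) (Φ x' - Φ x₀)‖ ≤ c * (qv * ‖x' - x₀‖) := by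
      rw [hdecomp]
      calc ‖(L.symm : EuclideanSpace ℝ (Fin n) →L[ℝ] EuclideanSpace ℝ (Fin n))
            (A (x' - x₀) - (Φ x' - Φ x₀))‖
          ≤ c * ‖A (x' - x₀) - (Φ x' - Φ x₀)‖ := ContinuousLinearMap.le_opNorm _ _
        _ = c * ‖Φ x' - Φ x₀ - A (x' - x₀)‖ := by rw [norm_sub_rev]
        _ = c * (qv * ‖x' - x₀‖) := by rw [hnum]
    rw [div_le_iff₀ hbpos]
    calc ‖x' - x₀ - (L.symm : EuclideanSpace ℝ (Fin n) →L[ℝ]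
          EuclideanSpace ℝ (Fin n)) (Φ x' - Φ x₀)‖
        ≤ c * (qv * ‖x' - x₀‖) := hNb
      _ ≤ c * (qv * (2 * c * ‖Φ x' - Φ x₀‖)) := by
          refine mul_le_mul_of_nonneg_left (mul_le_mul_of_nonneg_left hab hqnn) hcnn
      _ = 2 * c ^ 2 * qv * ‖Φ x' - Φ x₀‖ := by ring
  have hcomp : Tendsto (fun y' => ‖Φ (Ψ y') - Φ x₀ - A (Ψ y' - x₀)‖ / ‖Ψ y' - x₀‖)
      (nhdsWithin (Φ x₀) (Q p \ {Φ x₀})) (nhds 0) := hq0.comp hΨten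
  have hfinal : Tendsto (fun y' => ‖Ψ y' - Ψ (Φ x₀) - (L.symm : EuclideanSpace ℝ (Fin n) →L[ℝ]
      EuclideanSpace ℝ (Fin n)) (y' - Φ x₀)‖ / ‖y' - Φ x₀‖)
      (nhdsWithin (Φ x₀) (Q p \ {Φ x₀})) (nhds 0) := by
    refine squeeze_zero' (Filter.Eventually.of_forall fun y' =>
      div_nonneg (norm_nonneg _) (norm_nonneg _)) hkey ?_
    have h2' := hcomp.const_mul (2 * c ^ 2)
    simpa using h2'
  exact ⟨L, hside1, ⟨Q p, hQm p, h5, hfinal⟩⟩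
end

section
/- Let E ⊂ ℝⁿ be a measurable set of finite Lebesgue measure. On the space of measurable real-valued functions on E, identified when equal almost everywhere, define d_L(f,g) = |{x ∈ E : f(x) ≠ g(x)}|. Then d_L is a metric and the space is complete: every Cauchy sequence with respect to d_L converges in d_L. -/
open MeasureTheory Filter

/-- The Lusin distance between two functions relative to a set `E`. -/
noncomputable def lusinDist {n : ℕ} (E : Set (Fin n → ℝ)) (f g : (Fin n → ℝ) → ℝ) : ℝ :=
  (volume {x ∈ E | f x ≠ g x}).toReal

/-- On a measurable set `E ⊆ ℝⁿ` of finite measure, `d_L(f,g) = |{f ≠ g}|` is a metric on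
measurable functions (identified a.e.) and the space is complete. -/
theorem stmt19 {n : ℕ} (E : Set (Fin (n + 1) → ℝ)) (hEm : MeasurableSet E)
    (hEfin : volume E < ⊤) :
    (∀ f g : (Fin (n + 1) → ℝ) → ℝ, Measurable f → Measurable g →
      (lusinDist E f g = 0 ↔ ∀ᵐ x ∂volume.restrict E, f x = g x)) ∧
    (∀ f g : (Fin (n + 1) → ℝ) → ℝ, lusinDist E f g = lusinDist E g f) ∧
    (∀ f g h : (Fin (n + 1) → ℝ) → ℝ, Measurable f → Measurable g → Measurable h →
      lusinDist E f h ≤ lusinDist E f g + lusinDist E g h) ∧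
    (∀ F : ℕ → ((Fin (n + 1) → ℝ) → ℝ), (∀ k, Measurable (F k)) →
      (∀ ε > (0 : ℝ), ∃ N : ℕ, ∀ j ≥ N, ∀ k ≥ N, lusinDist E (F j) (F k) < ε) →
      ∃ f : (Fin (n + 1) → ℝ) → ℝ, Measurable f ∧
        Tendsto (fun k => lusinDist E (F k) f) atTop (nhds 0)) := by
  have hfin : ∀ f g : (Fin (n + 1) → ℝ) → ℝ, volume {x ∈ E | f x ≠ g x} ≠ ⊤ :=
    fun f g => (lt_of_le_of_lt (measure_mono (Set.sep_subset _ _)) hEfin).ne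
  -- triangle inequality, proved up front so it can be reused
  have tri : ∀ f g h : (Fin (n + 1) → ℝ) → ℝ,
      lusinDist E f h ≤ lusinDist E f g + lusinDist E g h := by
    intro f g h
    have hsub : {x ∈ E | f x ≠ h x} ⊆ {x ∈ E | f x ≠ g x} ∪ {x ∈ E | g x ≠ h x} := by
      rintro x ⟨hxE, hne⟩
      by_cases hfg : f x = g x
      · exact Or.inr ⟨hxE, fun hgh => hne (hfg.trans hgh)⟩
      · exact Or.inl ⟨hxE, hfg⟩
    have h1 : volume {x ∈ E | f x ≠ h x} ≤
        volume {x ∈ E | f x ≠ g x} + volume {x ∈ E | g x ≠ h x} :=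
      le_trans (measure_mono hsub) (measure_union_le _ _)
    unfold lusinDist
    rw [← ENNReal.toReal_add (hfin f g) (hfin g h)]
    exact ENNReal.toReal_mono (ENNReal.add_ne_top.2 ⟨hfin f g, hfin g h⟩) h1
  refine ⟨?_, ?_, fun f g h _ _ _ => tri f g h, ?_⟩
  · -- identity of indiscernibles
    intro f g hf hg
    rw [lusinDist, ENNReal.toReal_eq_zero_iff, ae_restrict_iff' hEm, ae_iff]
    have hset : {x | ¬ (x ∈ E → f x = g x)} = {x ∈ E | f x ≠ g x} := by
      ext x; simp [Classical.not_imp, Set.mem_sep_iff]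
    rw [hset]
    constructor
    · rintro (h | h)
      · exact h
      · exact absurd h (hfin f g)
    · exact fun h => Or.inl h
  · -- symmetry
    intro f g
    have hs : {x ∈ E | f x ≠ g x} = {x ∈ E | g x ≠ f x} := by
      ext x; exact and_congr_right fun _ => ne_comm
    rw [lusinDist, lusinDist, hs]
  · -- completeness
    intro F hFm hCauchy
    have hN : ∀ m : ℕ, ∃ N : ℕ, ∀ j ≥ N, ∀ k ≥ N,
        lusinDist E (F j) (F k) < (1/2 : ℝ) ^ m :=
      fun m => hCauchy _ (by positivity)
    choose N hNspec using hN
    -- a monotone subsequence index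
    let nn : ℕ → ℕ := fun m => Nat.rec (N 0) (fun m ih => max (ih + 1) (N (m + 1))) m
    have hnn_ge : ∀ m, N m ≤ nn m := by
      intro m
      cases m with
      | zero => exact le_refl _
      | succ m => exact le_max_right _ _
    have hnn_succ : ∀ m, nn m < nn (m + 1) := fun m =>
      lt_of_lt_of_le (Nat.lt_succ_self _) (le_max_left _ _)
    have hnn_mono : Monotone nn := monotone_nat_of_le_succ fun m => (hnn_succ m).le
    -- the discrepancy sets
    set A : ℕ → Set (Fin (n + 1) → ℝ) :=
      fun m => {x ∈ E | F (nn m) x ≠ F (nn (m + 1)) x} with hA_def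
    have hAmeas : ∀ m, MeasurableSet (A m) := fun m =>
      hEm.inter (measurableSet_eq_fun (hFm _) (hFm _)).compl
    have hAlt : ∀ m, volume (A m) ≤ ENNReal.ofReal ((1/2 : ℝ) ^ m) := by
      intro m
      have h1 : lusinDist E (F (nn m)) (F (nn (m + 1))) < (1/2 : ℝ) ^ m :=
        hNspec m _ (hnn_ge m) _ (le_trans (hnn_ge m) (hnn_succ m).le)
      exact le_of_lt ((ENNReal.lt_ofReal_iff_toReal_lt (hfin _ _)).2 h1)
    -- the tail unions
    set Z : ℕ → Set (Fin (n + 1) → ℝ) := fun m => ⋃ j, A (m + j) with hZ_def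
    have hZmeas : ∀ m, MeasurableSet (Z m) := fun m => MeasurableSet.iUnion fun j => hAmeas _
    have hZle : ∀ m, volume (Z m) ≤ ENNReal.ofReal (2 * (1/2 : ℝ) ^ m) := by
      intro m
      have hsum : Summable (fun j : ℕ => (1/2 : ℝ) ^ (m + j)) := by
        simp_rw [pow_add]
        exact (summable_geometric_of_lt_one (by norm_num) (by norm_num)).mul_left _
      refine le_trans (measure_iUnion_le _)
        (le_trans (ENNReal.tsum_le_tsum fun j => hAlt (m + j)) ?_)
      rw [← ENNReal.ofReal_tsum_of_nonneg (fun j => by positivity) hsum]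
      refine ENNReal.ofReal_le_ofReal ?_
      have h2 : ∑' j : ℕ, (1/2 : ℝ) ^ (m + j) = (1/2) ^ m * (1 - 1/2)⁻¹ := by
        rw [← tsum_geometric_of_lt_one (by norm_num : (0:ℝ) ≤ 1/2) (by norm_num), ← tsum_mul_left]
        exact tsum_congr fun j => pow_add _ _ _
      rw [h2]; ring_nf; norm_num
    -- the bad set
    set Zb : Set (Fin (n + 1) → ℝ) := ⋂ m, Z m with hZb_def
    have hZbmeas : MeasurableSet Zb := MeasurableSet.iInter fun m => hZmeas m
    have hZb0 : volume Zb = 0 := by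
      refine le_antisymm ?_ zero_le
      have htends : Tendsto (fun m : ℕ => ENNReal.ofReal (2 * (1/2 : ℝ) ^ m)) atTop (nhds 0) := by
        have : Tendsto (fun m : ℕ => 2 * (1/2 : ℝ) ^ m) atTop (nhds 0) := by
          simpa using (tendsto_pow_atTop_nhds_zero_of_lt_one (by norm_num : (0:ℝ) ≤ 1/2)
            (by norm_num)).const_mul 2
        simpa using ENNReal.tendsto_ofReal this
      exact ge_of_tendsto' htends fun m =>
        le_trans (measure_mono (Set.iInter_subset _ m)) (hZle m)
    -- eventual constancy off the bad set
    have hconst : ∀ m, ∀ x ∈ E, x ∉ Z m → ∀ k, m ≤ k → F (nn k) x = F (nn m) x := by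
      intro m x hxE hxZ k hk
      induction k, hk using Nat.le_induction with
      | base => rfl
      | succ k hk ih =>
        have hxA : x ∉ A k := by
          intro hxA
          exact hxZ (Set.mem_iUnion.2 ⟨k - m, by rwa [Nat.add_sub_cancel' hk]⟩)
        have : F (nn k) x = F (nn (k + 1)) x := by
          by_contra hne
          exact hxA ⟨hxE, hne⟩
        rw [← this]; exact ih
    -- the good set and the auxiliary sequence
    set D : Set (Fin (n + 1) → ℝ) := E \ Zb with hD_def
    have hDmeas : MeasurableSet D := hEm.diff hZbmeas
    set H : ℕ → (Fin (n + 1) → ℝ) → ℝ :=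
      fun m => D.indicator (F (nn m)) with hH_def
    have hHmeas : ∀ m, Measurable (H m) :=
      fun m => (hFm _).indicator hDmeas
    have hHconv : ∀ x, ∃ L : ℝ, Tendsto (fun m => H m x) atTop (nhds L) := by
      intro x
      by_cases hxD : x ∈ D
      · obtain ⟨hxE, hxZb⟩ := hxD
        obtain ⟨m, hm⟩ : ∃ m, x ∉ Z m := by
          by_contra hc
          push_neg at hc
          exact hxZb (Set.mem_iInter.2 hc)
        refine ⟨F (nn m) x, ?_⟩
        refine Tendsto.congr' ?_ tendsto_const_nhds
        filter_upwards [eventually_ge_atTop m] with k hk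
        have hxD' : x ∈ D := ⟨hxE, hxZb⟩
        show F (nn m) x = D.indicator (F (nn k)) x
        rw [Set.indicator_of_mem hxD']
        exact (hconst m x hxE hm k hk).symm
      · exact ⟨0, by simp [hH_def, Set.indicator_of_notMem hxD]⟩
    choose L hL using hHconv
    have hLmeas : Measurable L := by
      apply measurable_of_tendsto_metrizable hHmeas
      rw [tendsto_pi_nhds]
      exact hL
    refine ⟨L, hLmeas, ?_⟩
    -- key measure bound:  {F (nn m) ≠ L} ∩ E  ⊆  Zb ∪ Z m
    have hkey : ∀ m, {x ∈ E | F (nn m) x ≠ L x} ⊆ Zb ∪ Z m := by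
      rintro m x ⟨hxE, hne⟩
      by_contra hx
      simp only [Set.mem_union, not_or] at hx
      obtain ⟨hxZb, hxZ⟩ := hx
      have hxD : x ∈ D := ⟨hxE, hxZb⟩
      have : Tendsto (fun k => H k x) atTop (nhds (F (nn m) x)) := by
        refine Tendsto.congr' ?_ tendsto_const_nhds
        filter_upwards [eventually_ge_atTop m] with k hk
        show F (nn m) x = D.indicator (F (nn k)) x
        rw [Set.indicator_of_mem hxD]
        exact (hconst m x hxE hxZ k hk).symm
      exact hne (tendsto_nhds_unique this (hL x))
    have hdistL : ∀ m, lusinDist E (F (nn m)) L ≤ 2 * (1/2 : ℝ) ^ m := by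
      intro m
      have h1 : volume {x ∈ E | F (nn m) x ≠ L x} ≤ ENNReal.ofReal (2 * (1/2 : ℝ) ^ m) := by
        refine le_trans (measure_mono (hkey m)) ?_
        refine le_trans (measure_union_le _ _) ?_
        rw [hZb0, zero_add]
        exact hZle m
      calc lusinDist E (F (nn m)) L ≤ (ENNReal.ofReal (2 * (1/2 : ℝ) ^ m)).toReal :=
            ENNReal.toReal_mono ENNReal.ofReal_ne_top h1
        _ = 2 * (1/2 : ℝ) ^ m := ENNReal.toReal_ofReal (by positivity)
    -- conclude
    rw [Metric.tendsto_atTop]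
    intro ε hε
    obtain ⟨m, hm⟩ : ∃ m : ℕ, (1/2 : ℝ) ^ m < ε / 3 :=
      exists_pow_lt_of_lt_one (by positivity) (by norm_num)
    refine ⟨N m, fun k hk => ?_⟩
    have h1 : lusinDist E (F k) (F (nn m)) < (1/2 : ℝ) ^ m := hNspec m k hk _ (hnn_ge m)
    have h2 : lusinDist E (F k) L ≤ lusinDist E (F k) (F (nn m)) + lusinDist E (F (nn m)) L :=
      tri _ _ _
    have h3 : lusinDist E (F k) L < 3 * (1/2 : ℝ) ^ m := by
      have := hdistL m
      linarith
    have hnonneg : 0 ≤ lusinDist E (F k) L := ENNReal.toReal_nonneg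
    rw [Real.dist_eq, sub_zero, abs_of_nonneg hnonneg]
    linarith
end
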